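/- arXiv:2506.08590 — 7 statements merged into one kernel-verified Lean document; each statement's English description precedes it below -/
import Mathlib

section
/- Let H be a complex Hilbert space and A a bounded positive self-adjoint operator on H (A ≥ 0). Then the operator-valued function t ↦ A(A + t²)⁻¹ is Bochner integrable on (0, ∞) in the space of bounded operators on H, and A^{1/2} = (2/π) ∫₀^∞ A(A + t²)⁻¹ dt. -/
open MeasureTheory
set_option synthInstance.maxHeartbeats 1000000
set_option maxHeartbeats 1000000

private lemma scalar_int_aux {x : ℝ} (hx : 0 ≤ x) :
    ∫ t in Set.Ioi (0:ℝ), x * (x + t ^ 2)⁻¹ = Real.pi / 2 * Real.sqrt x := by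
  rcases hx.eq_or_lt with h | h
  · simp [← h]
  · have hsx : 0 < Real.sqrt x := Real.sqrt_pos.mpr h
    have hb : 0 < (Real.sqrt x)⁻¹ := inv_pos.mpr hsx
    have heq : ∀ t : ℝ, x * (x + t ^ 2)⁻¹ = (1 + (t * (Real.sqrt x)⁻¹) ^ 2)⁻¹ := by
      intro t
      have h1 : 0 < x + t ^ 2 := by positivity
      rw [mul_pow, inv_pow, Real.sq_sqrt h.le]
      rw [eq_comm, inv_eq_iff_eq_inv, eq_comm]
      field_simp
    calc ∫ t in Set.Ioi (0:ℝ), x * (x + t ^ 2)⁻¹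
        = ∫ t in Set.Ioi (0:ℝ), (fun u => (1 + u ^ 2)⁻¹) (t * (Real.sqrt x)⁻¹) := by
          simp only [heq]
      _ = ((Real.sqrt x)⁻¹)⁻¹ • ∫ u in Set.Ioi (0 * (Real.sqrt x)⁻¹), (1 + u ^ 2)⁻¹ :=
          integral_comp_mul_right_Ioi (fun u => (1 + u ^ 2)⁻¹) 0 hb
      _ = Real.pi / 2 * Real.sqrt x := by
          rw [zero_mul, integral_Ioi_inv_one_add_sq, inv_inv, Real.arctan_zero, sub_zero,
            smul_eq_mul, mul_comm]

private lemma bound_int_aux {M : ℝ} (hM : 0 ≤ M) :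
    IntegrableOn (fun t : ℝ => min 1 (M * (t ^ 2)⁻¹)) (Set.Ioi 0) := by
  have hnonneg : ∀ t : ℝ, 0 ≤ min 1 (M * (t ^ 2)⁻¹) := fun t =>
    le_min zero_le_one (by positivity)
  have hmeas : ∀ s : Set ℝ, AEStronglyMeasurable (fun t : ℝ => min 1 (M * (t ^ 2)⁻¹))
      (volume.restrict s) := fun s => by
    apply Measurable.aestronglyMeasurable; fun_prop
  have h1 : IntegrableOn (fun t : ℝ => min 1 (M * (t ^ 2)⁻¹)) (Set.Ioc 0 1) := by
    have hc : IntegrableOn (fun _ : ℝ => (1:ℝ)) (Set.Ioc 0 1) :=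
      integrableOn_const measure_Ioc_lt_top.ne
    refine hc.mono' (hmeas _) ?_
    filter_upwards with t
    rw [Real.norm_eq_abs, abs_of_nonneg (hnonneg t)]
    exact min_le_left _ _
  have h2 : IntegrableOn (fun t : ℝ => min 1 (M * (t ^ 2)⁻¹)) (Set.Ioi 1) := by
    have hint : IntegrableOn (fun t : ℝ => M * t ^ (-2 : ℝ)) (Set.Ioi 1) :=
      (integrableOn_Ioi_rpow_of_lt (by norm_num) one_pos).const_mul M
    refine hint.mono' (hmeas _) ?_
    filter_upwards [ae_restrict_mem measurableSet_Ioi] with t ht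
    rw [Real.norm_eq_abs, abs_of_nonneg (hnonneg t)]
    have ht0 : (0:ℝ) < t := lt_trans one_pos ht
    have : t ^ (-2 : ℝ) = (t ^ 2)⁻¹ := by
      rw [Real.rpow_neg ht0.le, ← Real.rpow_natCast t 2]; norm_num
    rw [this]
    exact min_le_right _ _
  have := h1.union h2
  rwa [Set.Ioc_union_Ioi_eq_Ioi zero_le_one] at this

private lemma integrable_subtype_iff_aux {E : Type*} [NormedAddCommGroup E] {s : Set ℝ}
    (hs : MeasurableSet s) (g : ℝ → E) :
    Integrable (fun t : s => g t) (MeasureTheory.volume.comap Subtype.val) ↔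
      IntegrableOn g s := by
  rw [IntegrableOn, ← map_comap_subtype_coe hs,
    (MeasurableEmbedding.subtype_coe hs).integrable_map_iff]
  rfl

/-- For a bounded positive self-adjoint operator `A` on a complex Hilbert space,
`t ↦ A(A + t²)⁻¹` is Bochner integrable on `(0, ∞)` and
`A^{1/2} = (2/π) ∫₀^∞ A(A + t²)⁻¹ dt`. -/
theorem sqrt_eq_integral_resolvent
    {H : Type*} [NormedAddCommGroup H] [InnerProductSpace ℂ H] [CompleteSpace H]
    (A : H →L[ℂ] H) (hA : IsSelfAdjoint A) (hA0 : 0 ≤ A) :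
    IntegrableOn (fun t : ℝ => A * Ring.inverse (A + t ^ 2 • 1)) (Set.Ioi 0) ∧
      CFC.sqrt A = (2 / Real.pi) • ∫ t in Set.Ioi (0:ℝ), A * Ring.inverse (A + t ^ 2 • 1) := by
  -- spectrum bounds
  obtain ⟨M₀, hM₀⟩ := (spectrum.isBounded (𝕜 := ℝ) A).subset_closedBall 0
  set M : ℝ := max M₀ 0 with hMdef
  have hM : 0 ≤ M := le_max_right _ _
  have hspec : spectrum ℝ A ⊆ Set.Icc 0 M := fun x hx =>
    ⟨spectrum_nonneg_of_nonneg hA0 hx,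
      le_max_of_le_left (abs_le.mp (by simpa using mem_closedBall_zero_iff.mp (hM₀ hx))).2⟩
  -- the resolvent as cfc
  have hres : ∀ t : ℝ, t ≠ 0 →
      A * Ring.inverse (A + t ^ 2 • 1) = cfc (fun x : ℝ => x * (x + t ^ 2)⁻¹) A := by
    intro t ht
    have hpos : ∀ x ∈ spectrum ℝ A, 0 < x + t ^ 2 := fun x hx =>
      add_pos_of_nonneg_of_pos (spectrum_nonneg_of_nonneg hA0 hx) (by positivity)
    have hinv : ContinuousOn (fun x : ℝ => (x + t ^ 2)⁻¹) (spectrum ℝ A) :=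
      (continuousOn_id.add continuousOn_const).inv₀ fun x hx => (hpos x hx).ne'
    have h1 : A + t ^ 2 • 1 = cfc (fun x : ℝ => x + t ^ 2) A := by
      rw [cfc_add (a := A) _ _, cfc_id' ℝ A, cfc_const _ A, Algebra.algebraMap_eq_smul_one]
    have key : (A + t ^ 2 • 1) * cfc (fun x : ℝ => (x + t ^ 2)⁻¹) A = 1 := by
      rw [h1, ← cfc_mul _ _ A (by fun_prop) hinv,
        cfc_congr (g := fun _ : ℝ => (1 : ℝ)) (fun x hx => mul_inv_cancel₀ (hpos x hx).ne'),
        cfc_const _ A, map_one]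
    have key2 : cfc (fun x : ℝ => (x + t ^ 2)⁻¹) A * (A + t ^ 2 • 1) = 1 := by
      rw [h1, ← cfc_mul _ _ A hinv (by fun_prop),
        cfc_congr (g := fun _ : ℝ => (1 : ℝ)) (fun x hx => inv_mul_cancel₀ (hpos x hx).ne'),
        cfc_const _ A, map_one]
    have hu : Ring.inverse (A + t ^ 2 • 1) = cfc (fun x : ℝ => (x + t ^ 2)⁻¹) A :=
      Ring.inverse_unit ⟨A + t ^ 2 • 1, cfc (fun x : ℝ => (x + t ^ 2)⁻¹) A, key, key2⟩
    rw [hu]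
    nth_rewrite 1 [← cfc_id' ℝ A]
    exact (cfc_mul (fun x : ℝ => x) _ A continuousOn_id hinv).symm
  -- setup for cfc_integral'
  set μc : Measure (Set.Ioi (0:ℝ)) := MeasureTheory.volume.comap Subtype.val with hμc
  set f : (Set.Ioi (0:ℝ)) → ℝ → ℝ := fun t x => x * (x + (t : ℝ) ^ 2)⁻¹ with hfdef
  set bound : (Set.Ioi (0:ℝ)) → ℝ := fun t => min 1 (M * ((t : ℝ) ^ 2)⁻¹) with hbdef
  have hf₁ : ∀ t : Set.Ioi (0:ℝ), ContinuousOn (f t) (spectrum ℝ A) := by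
    intro t
    have hpos : ∀ x ∈ spectrum ℝ A, 0 < x + (t:ℝ) ^ 2 := fun x hx =>
      add_pos_of_nonneg_of_pos (spectrum_nonneg_of_nonneg hA0 hx) (pow_pos t.2 2)
    exact continuousOn_id.mul ((continuousOn_id.add continuousOn_const).inv₀
      fun x hx => (hpos x hx).ne')
  have hf : Continuous (fun t : Set.Ioi (0:ℝ) => (spectrum ℝ A).restrict (f t)).uncurry := by
    apply Continuous.mul
    · exact (continuous_subtype_val.comp continuous_snd)
    · apply Continuous.inv₀
      · fun_prop
      · rintro ⟨t, x⟩
        have hx0 : (0:ℝ) ≤ (x : ℝ) := spectrum_nonneg_of_nonneg hA0 x.2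
        have ht0 : (0:ℝ) < (t : ℝ) := t.2
        positivity
  have hbound : ∀ t : Set.Ioi (0:ℝ), ∀ z ∈ spectrum ℝ A, ‖f t z‖ ≤ ‖bound t‖ := by
    intro t z hz
    have ht0 : (0:ℝ) < (t : ℝ) := t.2
    have hz0 : (0:ℝ) ≤ z := spectrum_nonneg_of_nonneg hA0 hz
    have hzM : z ≤ M := (hspec hz).2
    have hden : (0:ℝ) < z + (t:ℝ) ^ 2 := by positivity
    have hfz : f t z = z / (z + (t:ℝ) ^ 2) := (div_eq_mul_inv _ _).symm
    have hf0 : 0 ≤ f t z := by rw [hfz]; positivity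
    have hb0 : 0 ≤ bound t := le_min zero_le_one (by positivity)
    rw [Real.norm_eq_abs, Real.norm_eq_abs, abs_of_nonneg hf0, abs_of_nonneg hb0, hfz]
    refine le_min ((div_le_one hden).mpr (by nlinarith)) ?_
    rw [← div_eq_mul_inv]
    exact div_le_div₀ hM hzM (by positivity) (by nlinarith)
  have hbound_int : Integrable bound μc :=
    (integrable_subtype_iff_aux measurableSet_Ioi _).mpr (bound_int_aux hM)
  -- apply cfc_integral'
  have hfc : ContinuousOn (Function.uncurry f) (Set.univ ×ˢ spectrum ℝ A) := by
    show ContinuousOn (fun p : Set.Ioi (0:ℝ) × ℝ => p.2 * (p.2 + (p.1:ℝ) ^ 2)⁻¹) _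
    refine ContinuousOn.mul continuous_snd.continuousOn (ContinuousOn.inv₀ (by fun_prop) ?_)
    rintro ⟨t, x⟩ ⟨-, hx⟩
    have hx0 : (0:ℝ) ≤ x := spectrum_nonneg_of_nonneg hA0 hx
    have ht0 : (0:ℝ) < (t : ℝ) := t.2
    positivity
  have key := cfc_integral (μ := μc) f bound A hfc
    (Filter.Eventually.of_forall fun t z hz => (hbound t z hz).trans_eq
      (Real.norm_of_nonneg (le_min zero_le_one (by positivity))))
    hbound_int.hasFiniteIntegral hA
  -- identify left side
  have hsqrt_cfc : CFC.sqrt A = cfc Real.sqrt A := by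
    rw [CFC.sqrt_eq_cfc, cfc_nnreal_eq_real (ha := hA0)]
    exact cfc_congr fun x hx => by rw [Real.sqrt]
  have hL : cfc (fun r : ℝ => ∫ t, f t r ∂μc) A = (Real.pi / 2) • CFC.sqrt A := by
    rw [cfc_congr (g := fun x : ℝ => Real.pi / 2 * Real.sqrt x) ?_, hsqrt_cfc,
      cfc_const_mul _ _ A Real.continuous_sqrt.continuousOn]
    intro x hx
    have hx0 : (0:ℝ) ≤ x := spectrum_nonneg_of_nonneg hA0 hx
    show ∫ t, f t x ∂μc = _
    rw [hμc, integral_subtype_comap measurableSet_Ioi (fun s : ℝ => x * (x + s ^ 2)⁻¹)]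
    exact scalar_int_aux hx0
  -- identify right side
  have hfun : (fun t : Set.Ioi (0:ℝ) => cfc (f t) A) =
      fun t : Set.Ioi (0:ℝ) => A * Ring.inverse (A + (t:ℝ) ^ 2 • 1) := by
    funext t
    exact (hres t (ne_of_gt t.2)).symm
  have hR : ∫ t, cfc (f t) A ∂μc = ∫ s in Set.Ioi (0:ℝ), A * Ring.inverse (A + s ^ 2 • 1) := by
    rw [hfun, hμc]
    exact integral_subtype_comap measurableSet_Ioi (fun s : ℝ => A * Ring.inverse (A + s ^ 2 • 1))
  -- integrability
  have hint : IntegrableOn (fun t : ℝ => A * Ring.inverse (A + t ^ 2 • 1)) (Set.Ioi 0) := by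
    rw [← integrable_subtype_iff_aux measurableSet_Ioi]
    rw [show (fun t : Set.Ioi (0:ℝ) => A * Ring.inverse (A + (t:ℝ) ^ 2 • 1)) =
      fun t : Set.Ioi (0:ℝ) => cfc (f t) A from hfun.symm]
    -- integrability of the continuous-map-valued function
    have fc_cont : ∀ t : Set.Ioi (0:ℝ), Continuous ((spectrum ℝ A).restrict (f t)) :=
      fun t => continuousOn_iff_continuous_restrict.mp (hf₁ t)
    set fc : (Set.Ioi (0:ℝ)) → C(spectrum ℝ A, ℝ) :=
      fun t => ⟨(spectrum ℝ A).restrict (f t), fc_cont t⟩ with hfcdef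
    have fc_integrable : Integrable fc μc := by
      refine ⟨(ContinuousMap.curry ⟨_, hf⟩ |>.continuous).aestronglyMeasurable, ?_⟩
      refine hbound_int.hasFiniteIntegral.mono <| Filter.Eventually.of_forall fun t => ?_
      rw [ContinuousMap.norm_le _ (norm_nonneg (bound t))]
      exact fun z => hbound t z.1 z.2
    have := (cfcL (a := A) hA).integrable_comp fc_integrable
    refine this.congr (Filter.Eventually.of_forall fun t => ?_)
    exact (cfc_apply (f t) A hA (hf₁ t)).symm
  refine ⟨hint, ?_⟩
  rw [← hR, ← key, hL, smul_smul, div_mul_div_comm, mul_comm (2:ℝ) Real.pi, div_self, one_smul]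
  positivity
end

section
/- Let H be a complex Hilbert space, A a bounded self-adjoint operator on H with A ≥ c·Id for some c > 0, ψ ∈ H and α ∈ ℝ such that T_α := A + α|ψ⟩⟨ψ| satisfies T_α ≥ c'·Id for some c' > 0. Then for every t ≥ 0 one has 1 + α⟨ψ, (A + t²)⁻¹ψ⟩ > 0, the operator-valued integrand below is Bochner integrable on (0, ∞), and T_α^{-1/2} = A^{-1/2} − (2α/π) ∫₀^∞ (1 / (1 + α⟨ψ, (A + t²)⁻¹ψ⟩)) · |(A + t²)⁻¹ψ⟩⟨(A + t²)⁻¹ψ| dt. -/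
open scoped InnerProductSpace
open MeasureTheory
set_option synthInstance.maxHeartbeats 1000000
set_option maxHeartbeats 1000000

/-- The rank-one operator `|ψ⟩⟨ψ| : x ↦ ⟨ψ, x⟩ψ`. -/
noncomputable def rankOne {H : Type*} [NormedAddCommGroup H] [InnerProductSpace ℂ H]
    (ψ : H) : H →L[ℂ] H := (innerSL ℂ ψ).smulRight ψ

section Aux
set_option linter.unusedSectionVars false

variable {H : Type*} [NormedAddCommGroup H] [InnerProductSpace ℂ H] [CompleteSpace H]

lemma rankOne_apply (ψ x : H) : rankOne ψ x = ⟪ψ, x⟫_ℂ • ψ := rfl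

lemma norm_rankOne_le (v : H) : ‖rankOne v‖ ≤ ‖v‖ ^ 2 := by
  refine ContinuousLinearMap.opNorm_le_bound _ (sq_nonneg _) fun x => ?_
  rw [rankOne_apply, norm_smul]
  calc ‖⟪v, x⟫_ℂ‖ * ‖v‖ ≤ ‖v‖ * ‖x‖ * ‖v‖ := by
        gcongr; exact norm_inner_le_norm v x
    _ = ‖v‖ ^ 2 * ‖x‖ := by ring

lemma isSelfAdjoint_rankOne (ψ : H) : IsSelfAdjoint (rankOne ψ) := by
  rw [ContinuousLinearMap.isSelfAdjoint_iff_isSymmetric]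
  intro x y
  simp only [ContinuousLinearMap.coe_coe, rankOne_apply, inner_smul_left, inner_smul_right,
    inner_conj_symm]
  ring

lemma isBoundedBilinearMap_dyad :
    IsBoundedBilinearMap ℝ (fun p : H × H => (innerSL ℂ p.1).smulRight p.2) where
  add_left v1 v2 w := by ext x; simp [inner_add_left, add_smul]
  smul_left r v w := by
    ext x
    show ⟪r • v, x⟫_ℂ • w = r • ⟪v, x⟫_ℂ • w
    rw [← Complex.coe_smul, inner_smul_left, Complex.conj_ofReal, ← smul_assoc,
      Complex.real_smul]
  add_right v w1 w2 := by ext x; simp [smul_add]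
  smul_right r v w := by
    ext x
    simp [smul_comm (⟪v, x⟫_ℂ) r]
  bound := by
    refine ⟨1, one_pos, fun v w => ?_⟩
    refine ContinuousLinearMap.opNorm_le_bound _ (by positivity) fun x => ?_
    simp only [ContinuousLinearMap.smulRight_apply, innerSL_apply_apply, norm_smul]
    calc ‖⟪v, x⟫_ℂ‖ * ‖w‖ ≤ ‖v‖ * ‖x‖ * ‖w‖ := by
          gcongr; exact norm_inner_le_norm v x
      _ = 1 * ‖v‖ * ‖w‖ * ‖x‖ := by ring

lemma continuous_rankOne : Continuous (fun v : H => rankOne v) :=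
  (isBoundedBilinearMap_dyad (H := H)).continuous.comp (continuous_id.prodMk continuous_id)

lemma inner_le_of_le {S : H →L[ℂ] H} {c : ℝ} (h : c • (1 : H →L[ℂ] H) ≤ S) (x : H) :
    c * ‖x‖ ^ 2 ≤ RCLike.re ⟪x, S x⟫_ℂ := by
  rw [ContinuousLinearMap.le_def] at h
  have h2 := h.inner_nonneg_right x
  have : (S - c • (1 : H →L[ℂ] H)) x = S x - c • x := by simp
  rw [this, inner_sub_right] at h2
  replace h2 := (RCLike.nonneg_iff.mp h2).1
  rw [map_sub] at h2
  have hcx : (c • x : H) = (c : ℂ) • x := (Complex.coe_smul c x).symm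
  have : RCLike.re ⟪x, c • x⟫_ℂ = c * ‖x‖ ^ 2 := by
    rw [hcx, inner_smul_right]
    simp [RCLike.mul_re, inner_self_eq_norm_sq, inner_self_im]
    left; norm_cast
  linarith

lemma spectrum_subset_Ici {S : H →L[ℂ] H} {c : ℝ} (h : c • (1 : H →L[ℂ] H) ≤ S) :
    spectrum ℝ S ⊆ Set.Ici c := by
  intro x hx
  have h0 : (0 : H →L[ℂ] H) ≤ S - c • 1 := sub_nonneg.mpr h
  have hmem : (x - c) + c ∈ spectrum ℝ S := by rwa [sub_add_cancel]
  rw [spectrum.add_mem_iff] at hmem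
  have heq : -(algebraMap ℝ (H →L[ℂ] H)) c + S = S - c • 1 := by
    rw [Algebra.algebraMap_eq_smul_one]; abel
  rw [heq] at hmem
  have := spectrum_nonneg_of_nonneg h0 hmem
  simpa using this

lemma isUnit_of_le {S : H →L[ℂ] H} {c : ℝ} (hc : 0 < c) (h : c • (1 : H →L[ℂ] H) ≤ S) :
    IsUnit S := by
  refine spectrum.isUnit_of_zero_notMem ℝ fun h0 => ?_
  exact absurd (spectrum_subset_Ici h h0) (by simpa using hc)

lemma isSelfAdjoint_smul_one (t : ℝ) : IsSelfAdjoint (t • (1 : H →L[ℂ] H)) := by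
  rw [Algebra.algebraMap_eq_smul_one (R := ℝ) (A := H →L[ℂ] H) t |>.symm]
  exact IsSelfAdjoint.algebraMap _ (by simp [IsSelfAdjoint])


lemma inverse_eq_cfc {S : H →L[ℂ] H} {c : ℝ} (hS : IsSelfAdjoint S) (hc : 0 < c)
    (h : c • (1 : H →L[ℂ] H) ≤ S) :
    Ring.inverse S = cfc (fun x : ℝ => x⁻¹) S := by
  have h0 : ∀ x ∈ spectrum ℝ S, (id x : ℝ) ≠ 0 := fun x hx =>
    ne_of_gt (hc.trans_le (spectrum_subset_Ici h hx))
  conv_lhs => rw [← cfc_id ℝ S hS]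
  rw [← cfc_inv id S h0]
  rfl

lemma isSelfAdjoint_inverse {S : H →L[ℂ] H} {c : ℝ} (hS : IsSelfAdjoint S) (hc : 0 < c)
    (h : c • (1 : H →L[ℂ] H) ≤ S) : IsSelfAdjoint (Ring.inverse S) := by
  rw [inverse_eq_cfc hS hc h]; exact cfc_predicate _ S

lemma inverse_nonneg' {S : H →L[ℂ] H} {c : ℝ} (hS : IsSelfAdjoint S) (hc : 0 < c)
    (h : c • (1 : H →L[ℂ] H) ≤ S) : 0 ≤ Ring.inverse S := by
  rw [inverse_eq_cfc hS hc h]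
  exact cfc_nonneg fun x hx =>
    inv_nonneg.mpr ((hc.trans_le (spectrum_subset_Ici h hx)).le)

lemma norm_inverse_le {S : H →L[ℂ] H} {c : ℝ} (hS : IsSelfAdjoint S) (hc : 0 < c)
    (h : c • (1 : H →L[ℂ] H) ≤ S) : ‖Ring.inverse S‖ ≤ c⁻¹ := by
  rw [inverse_eq_cfc hS hc h]
  refine norm_cfc_le (by positivity) fun x hx => ?_
  have hx' := hc.trans_le (spectrum_subset_Ici h hx)
  rw [Real.norm_eq_abs, abs_of_pos (by positivity)]
  exact inv_anti₀ hc (spectrum_subset_Ici h hx)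

lemma integrableOn_inv_add_sq {x : ℝ} (hx : 0 < x) :
    IntegrableOn (fun t : ℝ => (x + t ^ 2)⁻¹) (Set.Ioi 0) := by
  have h1 : 0 < min x 1 := lt_min hx one_pos
  refine Integrable.mono' ((integrable_inv_one_add_sq.const_mul (min x 1)⁻¹).integrableOn)
    ?_ (ae_of_all _ fun t => ?_)
  · refine ((continuous_const.add (continuous_pow 2)).inv₀ fun t => ?_).aestronglyMeasurable
    exact (add_pos_of_pos_of_nonneg hx (sq_nonneg _)).ne'
  · rw [Real.norm_eq_abs, abs_of_pos (by positivity), ← mul_inv]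
    refine inv_anti₀ (by positivity) ?_
    nlinarith [min_le_left x 1, min_le_right x 1, sq_nonneg t, h1.le]

lemma integral_inv_add_sq {x : ℝ} (hx : 0 < x) :
    ∫ t in Set.Ioi (0:ℝ), (x + t ^ 2)⁻¹ = Real.pi / (2 * Real.sqrt x) := by
  have hb : 0 < Real.sqrt x := Real.sqrt_pos.mpr hx
  have hb2 : Real.sqrt x ^ 2 = x := Real.sq_sqrt hx.le
  have key := integral_comp_mul_right_Ioi (fun t => (x + t ^ 2)⁻¹) 0 hb
  simp only [zero_mul] at key
  have lhs_eq : (∫ t in Set.Ioi (0:ℝ), (x + (t * Real.sqrt x) ^ 2)⁻¹)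
      = x⁻¹ * (Real.pi / 2) := by
    have : ∀ t : ℝ, (x + (t * Real.sqrt x) ^ 2)⁻¹ = x⁻¹ * (1 + t ^ 2)⁻¹ := by
      intro t
      rw [mul_pow, hb2, ← mul_inv]
      congr 1
      ring
    rw [MeasureTheory.setIntegral_congr_fun measurableSet_Ioi fun t _ => this t,
      MeasureTheory.integral_const_mul, integral_Ioi_inv_one_add_sq]
    simp
  rw [lhs_eq] at key
  have hxx : Real.sqrt x * Real.sqrt x = x := Real.mul_self_sqrt hx.le
  have h2 : (∫ t in Set.Ioi (0:ℝ), (x + t ^ 2)⁻¹)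
      = Real.sqrt x * (x⁻¹ * (Real.pi / 2)) := by
    have h3 := congrArg (fun y => Real.sqrt x * y) key
    simp only [smul_eq_mul, ← mul_assoc, mul_inv_cancel₀ hb.ne', one_mul] at h3
    rw [h3.symm]; ring
  rw [h2, eq_div_iff (by positivity)]
  field_simp
  nlinarith [hxx, Real.pi_pos]

variable {S : H →L[ℂ] H} {c : ℝ}

lemma isSelfAdjoint_add_sq (hS : IsSelfAdjoint S) (t : ℝ) :
    IsSelfAdjoint (S + t ^ 2 • (1 : H →L[ℂ] H)) :=
  hS.add (isSelfAdjoint_smul_one _)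

lemma le_add_sq (h : c • (1 : H →L[ℂ] H) ≤ S) (t : ℝ) :
    (c + t ^ 2) • (1 : H →L[ℂ] H) ≤ S + t ^ 2 • 1 := by
  rw [add_smul]; exact add_le_add_left h _

lemma continuous_inverse_shift (hc : 0 < c) (h : c • (1 : H →L[ℂ] H) ≤ S) :
    Continuous fun t : ℝ => Ring.inverse (S + t ^ 2 • (1 : H →L[ℂ] H)) := by
  have hcont : Continuous fun t : ℝ => S + t ^ 2 • (1 : H →L[ℂ] H) :=
    continuous_const.add ((continuous_pow 2).smul continuous_const)
  rw [continuous_iff_continuousAt]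
  intro t
  have hu : IsUnit (S + t ^ 2 • (1 : H →L[ℂ] H)) :=
    isUnit_of_le (by positivity) (le_add_sq h t)
  have := NormedRing.inverse_continuousAt hu.unit
  rw [IsUnit.unit_spec] at this
  exact Filter.Tendsto.comp this hcont.continuousAt

lemma integrableOn_inverse_add_sq (hS : IsSelfAdjoint S) (hc : 0 < c)
    (h : c • (1 : H →L[ℂ] H) ≤ S) :
    IntegrableOn (fun t : ℝ => Ring.inverse (S + t ^ 2 • 1)) (Set.Ioi 0) := by
  refine Integrable.mono' (integrableOn_inv_add_sq hc)
    (continuous_inverse_shift hc h).aestronglyMeasurable (ae_of_all _ fun t => ?_)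
  exact norm_inverse_le (isSelfAdjoint_add_sq hS t) (by positivity) (le_add_sq h t)

lemma cfc_sqrt_inv_integral (hS : IsSelfAdjoint S) (hc : 0 < c)
    (h : c • (1 : H →L[ℂ] H) ≤ S) :
    CFC.sqrt (Ring.inverse S) =
      (2 / Real.pi) • ∫ t in Set.Ioi (0:ℝ), Ring.inverse (S + t ^ 2 • 1) := by
  have hspec := spectrum_subset_Ici h
  have hpos : ∀ x : spectrum ℝ S, 0 < (x : ℝ) := fun x => hc.trans_le (hspec x.2)
  -- the continuous-function-valued integrand
  set F : ℝ → C(spectrum ℝ S, ℝ) := fun t =>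
    ⟨fun x => ((x : ℝ) + t ^ 2)⁻¹, by
      refine (continuous_subtype_val.add continuous_const).inv₀ fun x => ?_
      have := hpos x; exact (add_pos_of_pos_of_nonneg this (sq_nonneg _)).ne'⟩ with hF
  have hFcont : Continuous F := by
    refine ContinuousMap.continuous_of_continuous_uncurry _ ?_
    refine (Continuous.add ?_ ?_).inv₀ fun p => ?_
    · exact continuous_subtype_val.comp continuous_snd
    · exact (continuous_pow 2).comp continuous_fst
    · have := hpos p.2; exact (add_pos_of_pos_of_nonneg this (sq_nonneg _)).ne'
  have hFnorm : ∀ t : ℝ, ‖F t‖ ≤ (c + t ^ 2)⁻¹ := by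
    intro t
    refine (ContinuousMap.norm_le _ (by positivity)).mpr fun x => ?_
    rw [hF]
    simp only [ContinuousMap.coe_mk, Real.norm_eq_abs]
    have h1 := hpos x
    have h2 := hspec x.2
    rw [abs_of_pos (by positivity)]
    refine inv_anti₀ (by positivity) ?_
    have : c ≤ (x : ℝ) := h2
    linarith
  have hFint : IntegrableOn F (Set.Ioi 0) :=
    Integrable.mono' (integrableOn_inv_add_sq hc) hFcont.aestronglyMeasurable
      (ae_of_all _ hFnorm)
  -- value of the integral in C(K, ℝ)
  set G : C(spectrum ℝ S, ℝ) := ⟨fun x => Real.pi / (2 * Real.sqrt (x : ℝ)), by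
    refine continuous_const.div
      (continuous_const.mul (Real.continuous_sqrt.comp continuous_subtype_val)) fun x => ?_
    have hsq : 0 < Real.sqrt (x : ℝ) := Real.sqrt_pos.mpr (hpos x)
    positivity⟩ with hG
  have hGint : ∫ t in Set.Ioi (0:ℝ), F t = G := by
    refine ContinuousMap.ext fun x => ?_
    rw [ContinuousMap.integral_apply hFint]
    exact integral_inv_add_sq (hpos x)
  -- the CFC as a continuous linear map
  let L : C(spectrum ℝ S, ℝ) →L[ℝ] (H →L[ℂ] H) :=
    { toLinearMap := (cfcHom hS (R := ℝ)).toAlgHom.toLinearMap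
      cont := (cfcHom_isClosedEmbedding hS).continuous }
  have hL : ∀ g : C(spectrum ℝ S, ℝ), L g = cfcHom hS g := fun g => rfl
  have hLF : ∀ t : ℝ, L (F t) = Ring.inverse (S + t ^ 2 • 1) := by
    intro t
    have hcont2 : ContinuousOn (fun x : ℝ => (x + t ^ 2)⁻¹) (spectrum ℝ S) := by
      refine ((continuous_id.add continuous_const).continuousOn).inv₀ fun x hx => ?_
      have := hc.trans_le (hspec hx); exact (add_pos_of_pos_of_nonneg this (sq_nonneg _)).ne'
    have e0 : L (F t) = cfc (fun x : ℝ => (x + t ^ 2)⁻¹) S := by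
      rw [hL, cfc_apply (fun x : ℝ => (x + t ^ 2)⁻¹) S hS hcont2]
      rfl
    have e1 : cfc (fun x : ℝ => x + t ^ 2) S = S + t ^ 2 • 1 := by
      rw [cfc_add (a := S) (fun x : ℝ => x) (fun _ => t ^ 2), cfc_id' ℝ S hS,
        cfc_const (t ^ 2) S hS, Algebra.algebraMap_eq_smul_one]
    have e2 : cfc (fun x : ℝ => (x + t ^ 2)⁻¹) S = Ring.inverse (cfc (fun x : ℝ => x + t ^ 2) S) :=
      cfc_inv (fun x : ℝ => x + t ^ 2) S
        (fun x hx => by have := hc.trans_le (hspec hx); positivity)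
    rw [e0, e2, e1]
  have hcont3 : ContinuousOn (fun x : ℝ => Real.pi / (2 * Real.sqrt x)) (spectrum ℝ S) := by
    refine continuousOn_const.div
      (continuous_const.mul Real.continuous_sqrt).continuousOn fun x hx => ?_
    have hsq : 0 < Real.sqrt x := Real.sqrt_pos.mpr (hc.trans_le (hspec hx))
    positivity
  have hinv : ContinuousOn (fun x : ℝ => (Real.sqrt x)⁻¹) (spectrum ℝ S) :=
    Real.continuous_sqrt.continuousOn.inv₀ fun x hx =>
      ne_of_gt (Real.sqrt_pos.mpr (hc.trans_le (hspec hx)))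
  have hLG : L G = cfc (fun x : ℝ => Real.pi / (2 * Real.sqrt x)) S := by
    rw [hL, cfc_apply (fun x : ℝ => Real.pi / (2 * Real.sqrt x)) S hS hcont3]
    rfl
  have swap : ∫ t in Set.Ioi (0:ℝ), Ring.inverse (S + t ^ 2 • 1)
      = cfc (fun x : ℝ => Real.pi / (2 * Real.sqrt x)) S := by
    calc ∫ t in Set.Ioi (0:ℝ), Ring.inverse (S + t ^ 2 • 1)
        = ∫ t in Set.Ioi (0:ℝ), L (F t) := by
          refine setIntegral_congr_fun measurableSet_Ioi fun t _ => (hLF t).symm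
      _ = L (∫ t in Set.Ioi (0:ℝ), F t) := L.integral_comp_comm hFint
      _ = cfc (fun x : ℝ => Real.pi / (2 * Real.sqrt x)) S := by rw [hGint, hLG]
  rw [swap]
  -- now a pure CFC computation
  have hsmul : (2 / Real.pi) • cfc (fun x : ℝ => Real.pi / (2 * Real.sqrt x)) S
      = cfc (fun x : ℝ => (Real.sqrt x)⁻¹) S := by
    rw [← cfc_smul (2 / Real.pi) (fun x : ℝ => Real.pi / (2 * Real.sqrt x)) S hcont3]
    refine cfc_congr fun x hx => ?_
    have hsq : 0 < Real.sqrt x := Real.sqrt_pos.mpr (hc.trans_le (hspec hx))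
    have hpi := Real.pi_pos
    simp only [smul_eq_mul]
    field_simp
  rw [hsmul]
  -- identify with CFC.sqrt (Ring.inverse S)
  refine CFC.sqrt_unique ?_ (cfc_nonneg fun x _ => by positivity)
  rw [← cfc_mul (fun x : ℝ => (Real.sqrt x)⁻¹) (fun x : ℝ => (Real.sqrt x)⁻¹) S hinv hinv]
  rw [inverse_eq_cfc hS hc h]
  refine cfc_congr fun x hx => ?_
  have hx' : 0 < x := hc.trans_le (hspec hx)
  rw [← mul_inv, Real.mul_self_sqrt hx'.le]

lemma sherman_morrison {B : H →L[ℂ] H} (hBu : IsUnit B)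
    (hQ : IsSelfAdjoint (Ring.inverse B))
    (ψ : H) (α r : ℝ) (hr : ⟪ψ, Ring.inverse B ψ⟫_ℂ = (r : ℂ)) (h1 : 1 + α * r ≠ 0)
    (hUnit : IsUnit (B + α • rankOne ψ)) :
    Ring.inverse (B + α • rankOne ψ) =
      Ring.inverse B - (α / (1 + α * r)) • rankOne (Ring.inverse B ψ) := by
  set Q := Ring.inverse B with hQdef
  have hBQ : ∀ z, B (Q z) = z := fun z => by
    rw [← ContinuousLinearMap.mul_apply, Ring.mul_inverse_cancel _ hBu,
      ContinuousLinearMap.one_apply]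
  have hsym : ∀ x, ⟪ψ, Q x⟫_ℂ = ⟪Q ψ, x⟫_ℂ := fun x =>
    ((ContinuousLinearMap.isSelfAdjoint_iff_isSymmetric.mp hQ) ψ x).symm
  obtain ⟨u, hu⟩ := hUnit
  rw [← hu, Ring.inverse_unit]
  refine Units.inv_eq_of_mul_eq_one_right ?_
  rw [hu]
  have hre : ∀ (s : ℝ) (v : H), s • v = (s : ℂ) • v := fun s v => (Complex.coe_smul s v).symm
  ext x
  simp only [ContinuousLinearMap.mul_apply, ContinuousLinearMap.add_apply,
    ContinuousLinearMap.sub_apply, ContinuousLinearMap.smul_apply,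
    ContinuousLinearMap.coe_smul', Pi.smul_apply, ContinuousLinearMap.one_apply,
    rankOne_apply]
  simp only [hre]
  simp only [_root_.map_smul, map_sub, inner_sub_right, inner_smul_right, smul_smul]
  rw [hBQ x, hBQ ψ, hsym x, hr]
  have h1' : (1 : ℂ) + (α : ℂ) * (r : ℂ) ≠ 0 := by
    simpa using (Complex.ofReal_ne_zero.mpr h1)
  have hcoef : ((α / (1 + α * r) : ℝ) : ℂ) = (α : ℂ) / (1 + (α : ℂ) * (r : ℂ)) := by
    push_cast; ring
  match_scalars
  · ring
  · field_simp
    ring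

end Aux

/-- Integral formula for the inverse square root of a rank-one perturbation:
if `A ≥ c·Id` (`c > 0`) and `T = A + α|ψ⟩⟨ψ| ≥ c'·Id` (`c' > 0`), then for every
`t ≥ 0` the scalar `1 + α⟨ψ, (A+t²)⁻¹ψ⟩` is a positive real number, the operator-valued
integrand is Bochner integrable on `(0,∞)`, and
`T^{-1/2} = A^{-1/2} − (2α/π) ∫₀^∞ (1/(1 + α⟨ψ,(A+t²)⁻¹ψ⟩)) |(A+t²)⁻¹ψ⟩⟨(A+t²)⁻¹ψ| dt`. -/
theorem inv_sqrt_rank_one_perturbation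
    {H : Type*} [NormedAddCommGroup H] [InnerProductSpace ℂ H] [CompleteSpace H]
    (A : H →L[ℂ] H) (hA : IsSelfAdjoint A) (c : ℝ) (hc : 0 < c)
    (hAc : c • (1 : H →L[ℂ] H) ≤ A) (ψ : H) (α : ℝ)
    (T : H →L[ℂ] H) (hT : T = A + α • rankOne ψ)
    (c' : ℝ) (hc' : 0 < c') (hTc : c' • (1 : H →L[ℂ] H) ≤ T) :
    (∀ t : ℝ, 0 ≤ t →
        (1 + (α : ℂ) * ⟪ψ, (Ring.inverse (A + t ^ 2 • 1)) ψ⟫_ℂ).im = 0 ∧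
        0 < (1 + (α : ℂ) * ⟪ψ, (Ring.inverse (A + t ^ 2 • 1)) ψ⟫_ℂ).re) ∧
    IntegrableOn (fun t : ℝ =>
        ((1 : ℂ) / (1 + (α : ℂ) * ⟪ψ, (Ring.inverse (A + t ^ 2 • 1)) ψ⟫_ℂ)) •
          rankOne ((Ring.inverse (A + t ^ 2 • 1)) ψ)) (Set.Ioi 0) ∧
    CFC.sqrt (Ring.inverse T) = CFC.sqrt (Ring.inverse A) - (2 * α / Real.pi) •
      ∫ t in Set.Ioi (0:ℝ),
        ((1 : ℂ) / (1 + (α : ℂ) * ⟪ψ, (Ring.inverse (A + t ^ 2 • 1)) ψ⟫_ℂ)) •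
          rankOne ((Ring.inverse (A + t ^ 2 • 1)) ψ) := by
  have hπ := Real.pi_pos
  -- self-adjointness of T
  have hTsa : IsSelfAdjoint T := by
    rw [hT]
    refine hA.add ?_
    rw [IsSelfAdjoint, ← Complex.coe_smul, star_smul, Complex.star_def, Complex.conj_ofReal,
      (isSelfAdjoint_rankOne ψ).star_eq]
  -- notation
  set Q : ℝ → (H →L[ℂ] H) := fun t => Ring.inverse (A + t ^ 2 • 1) with hQdef
  set rr : ℝ → ℝ := fun t => (⟪ψ, Q t ψ⟫_ℂ).re with hrrdef
  have hposc : ∀ t : ℝ, (0:ℝ) < c + t ^ 2 := fun t => by positivity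
  have hposc' : ∀ t : ℝ, (0:ℝ) < c' + t ^ 2 := fun t => by positivity
  have hBsa : ∀ t : ℝ, IsSelfAdjoint (A + t ^ 2 • (1 : H →L[ℂ] H)) :=
    fun t => isSelfAdjoint_add_sq hA t
  have hBle : ∀ t : ℝ, (c + t ^ 2) • (1 : H →L[ℂ] H) ≤ A + t ^ 2 • 1 := le_add_sq hAc
  have hBu : ∀ t : ℝ, IsUnit (A + t ^ 2 • (1 : H →L[ℂ] H)) :=
    fun t => isUnit_of_le (hposc t) (hBle t)
  have hQsa : ∀ t : ℝ, IsSelfAdjoint (Q t) :=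
    fun t => isSelfAdjoint_inverse (hBsa t) (hposc t) (hBle t)
  have hTle : ∀ t : ℝ, (c' + t ^ 2) • (1 : H →L[ℂ] H) ≤ T + t ^ 2 • 1 := le_add_sq hTc
  have hTu : ∀ t : ℝ, IsUnit (T + t ^ 2 • (1 : H →L[ℂ] H)) :=
    fun t => isUnit_of_le (hposc' t) (hTle t)
  have hTsa' : ∀ t : ℝ, IsSelfAdjoint (T + t ^ 2 • (1 : H →L[ℂ] H)) :=
    fun t => isSelfAdjoint_add_sq hTsa t
  -- realness
  have hreal : ∀ t : ℝ, ⟪ψ, Q t ψ⟫_ℂ = ((rr t : ℝ) : ℂ) := by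
    intro t
    have hsym := ContinuousLinearMap.isSelfAdjoint_iff_isSymmetric.mp (hQsa t)
    have hconj : (starRingEnd ℂ) ⟪ψ, Q t ψ⟫_ℂ = ⟪ψ, Q t ψ⟫_ℂ := by
      rw [inner_conj_symm]
      exact hsym ψ ψ
    exact (Complex.conj_eq_iff_re.mp hconj).symm
  have hrev : ∀ t : ℝ, ⟪Q t ψ, ψ⟫_ℂ = ((rr t : ℝ) : ℂ) := by
    intro t
    rw [← inner_conj_symm, hreal t, Complex.conj_ofReal]
  -- B applied to Q
  have hBQ : ∀ t : ℝ, (A + t ^ 2 • (1 : H →L[ℂ] H)) (Q t ψ) = ψ := by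
    intro t
    rw [hQdef, ← ContinuousLinearMap.mul_apply, Ring.mul_inverse_cancel _ (hBu t),
      ContinuousLinearMap.one_apply]
  -- (T + t²) applied to Q t ψ
  have hTapp : ∀ t : ℝ, (T + t ^ 2 • (1 : H →L[ℂ] H)) (Q t ψ) = (1 + α * rr t) • ψ := by
    intro t
    have hsplit : (T + t ^ 2 • (1 : H →L[ℂ] H)) = (A + t ^ 2 • 1) + α • rankOne ψ := by
      rw [hT]; abel
    rw [hsplit, ContinuousLinearMap.add_apply, hBQ t, ContinuousLinearMap.smul_apply,
      rankOne_apply, hreal t, Complex.coe_smul, smul_smul, add_smul, one_smul]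
  -- lower bound on rr
  have hrr_ge : ∀ t : ℝ, (c + t ^ 2) * ‖Q t ψ‖ ^ 2 ≤ rr t := by
    intro t
    have h1 := inner_le_of_le (hBle t) (Q t ψ)
    rw [hBQ t] at h1
    have h2 : RCLike.re ⟪Q t ψ, ψ⟫_ℂ = rr t := by
      rw [hrev t]; simp [RCLike.re_to_complex]
    rw [h2] at h1
    exact h1
  have hrr_nonneg : ∀ t : ℝ, 0 ≤ rr t := fun t =>
    le_trans (by positivity) (hrr_ge t)
  -- key inequality from positivity of T + t²
  have hkey : ∀ t : ℝ, (c' + t ^ 2) * ‖Q t ψ‖ ^ 2 ≤ (1 + α * rr t) * rr t := by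
    intro t
    have h1 := inner_le_of_le (hTle t) (Q t ψ)
    rw [hTapp t] at h1
    have h2 : RCLike.re ⟪Q t ψ, (1 + α * rr t) • ψ⟫_ℂ = (1 + α * rr t) * rr t := by
      rw [← Complex.coe_smul, inner_smul_right, hrev t]
      simp [RCLike.re_to_complex, Complex.mul_re]
    rw [h2] at h1
    exact h1
  -- positivity of the denominator
  have hd : ∀ t : ℝ, 0 < 1 + α * rr t := by
    intro t
    rcases eq_or_ne (Q t ψ) 0 with h0 | h0
    · have : rr t = 0 := by rw [hrrdef]; simp [h0]
      rw [this]; norm_num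
    · have hn : 0 < ‖Q t ψ‖ ^ 2 := pow_pos (norm_pos_iff.mpr h0) 2
      have hrpos : 0 < rr t := lt_of_lt_of_le (mul_pos (hposc t) hn) (hrr_ge t)
      nlinarith [hkey t, hposc' t]
  -- the statement integrand in real form
  have hu : ∀ t : ℝ,
      ((1 : ℂ) / (1 + (α : ℂ) * ⟪ψ, Q t ψ⟫_ℂ)) • rankOne (Q t ψ)
        = ((1 + α * rr t)⁻¹ : ℝ) • rankOne (Q t ψ) := by
    intro t
    rw [hreal t]
    have : ((1 : ℂ) / (1 + (α : ℂ) * ((rr t : ℝ) : ℂ))) = (((1 + α * rr t)⁻¹ : ℝ) : ℂ) := by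
      push_cast
      rw [one_div]
    rw [this, Complex.coe_smul]
  -- Sherman-Morrison pointwise
  have hSM : ∀ t : ℝ, Ring.inverse (T + t ^ 2 • (1 : H →L[ℂ] H))
      = Q t - (α / (1 + α * rr t)) • rankOne (Q t ψ) := by
    intro t
    have hsplit : (T + t ^ 2 • (1 : H →L[ℂ] H)) = (A + t ^ 2 • 1) + α • rankOne ψ := by
      rw [hT]; abel
    rw [hsplit]
    exact sherman_morrison (hBu t) (hQsa t) ψ α (rr t) (hreal t) (hd t).ne'
      (hsplit ▸ hTu t)
  -- pointwise difference identity
  have hdiff : ∀ t : ℝ, Q t - Ring.inverse (T + t ^ 2 • (1 : H →L[ℂ] H))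
      = α • (((1 : ℂ) / (1 + (α : ℂ) * ⟪ψ, Q t ψ⟫_ℂ)) • rankOne (Q t ψ)) := by
    intro t
    rw [hSM t, hu t, sub_sub_cancel, smul_smul, div_eq_mul_inv]
  -- integrability of the statement integrand
  have hQψcont : Continuous fun t : ℝ => Q t ψ :=
    (ContinuousLinearMap.apply ℂ H ψ).continuous.comp (continuous_inverse_shift hc hAc)
  have hinnercont : Continuous fun t : ℝ => ⟪ψ, Q t ψ⟫_ℂ :=
    Continuous.inner continuous_const hQψcont
  have hdenomne : ∀ t : ℝ, (1 + (α : ℂ) * ⟪ψ, Q t ψ⟫_ℂ) ≠ 0 := by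
    intro t
    rw [hreal t]
    intro hcontra
    have := congrArg Complex.re hcontra
    simp [Complex.add_re, Complex.mul_re] at this
    exact absurd this (hd t).ne'
  have hucont : Continuous fun t : ℝ =>
      ((1 : ℂ) / (1 + (α : ℂ) * ⟪ψ, Q t ψ⟫_ℂ)) • rankOne (Q t ψ) := by
    refine Continuous.smul (f := fun t : ℝ => ((1 : ℂ) / (1 + (α : ℂ) * ⟪ψ, Q t ψ⟫_ℂ))) ?_ (continuous_rankOne.comp hQψcont)
    exact continuous_const.div (continuous_const.add (continuous_const.mul hinnercont)) hdenomne
  have hQψnorm : ∀ t : ℝ, ‖Q t ψ‖ ≤ (c + t ^ 2)⁻¹ * ‖ψ‖ := by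
    intro t
    calc ‖Q t ψ‖ ≤ ‖Q t‖ * ‖ψ‖ := (Q t).le_opNorm ψ
      _ ≤ (c + t ^ 2)⁻¹ * ‖ψ‖ := by
          gcongr
          exact norm_inverse_le (hBsa t) (hposc t) (hBle t)
  have hubound : ∀ t : ℝ,
      ‖((1 : ℂ) / (1 + (α : ℂ) * ⟪ψ, Q t ψ⟫_ℂ)) • rankOne (Q t ψ)‖
        ≤ (‖ψ‖ ^ 2 / c') * (c + t ^ 2)⁻¹ := by
    intro t
    rw [hu t, norm_smul, Real.norm_eq_abs, abs_of_pos (inv_pos.mpr (hd t))]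
    have h1 : ‖rankOne (Q t ψ)‖ ≤ ‖Q t ψ‖ ^ 2 := norm_rankOne_le _
    have hrle : rr t ≤ ‖ψ‖ * ‖Q t ψ‖ := by
      calc rr t ≤ ‖⟪ψ, Q t ψ⟫_ℂ‖ := by
            rw [hreal t]; simp only [Complex.norm_real, Real.norm_eq_abs]; exact le_abs_self _
        _ ≤ ‖ψ‖ * ‖Q t ψ‖ := norm_inner_le_norm _ _
    have hQn := hQψnorm t
    have hdt := hd t
    have hcn := hposc t
    have hn0 : (0:ℝ) ≤ ‖Q t ψ‖ := norm_nonneg _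
    have hm0 : (0:ℝ) ≤ ‖ψ‖ := norm_nonneg _
    have h3 : c' * ‖Q t ψ‖ ^ 2 ≤ (1 + α * rr t) * rr t :=
      le_trans (by nlinarith [sq_nonneg t, sq_nonneg ‖Q t ψ‖]) (hkey t)
    have h4 : (c + t ^ 2) * ‖Q t ψ‖ ≤ ‖ψ‖ := by
      have h5 := mul_le_mul_of_nonneg_left hQn hcn.le
      rwa [← mul_assoc, mul_inv_cancel₀ hcn.ne', one_mul] at h5
    have h2 : c' * ((c + t ^ 2) * ‖Q t ψ‖ ^ 2) ≤ (1 + α * rr t) * ‖ψ‖ ^ 2 := by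
      calc c' * ((c + t ^ 2) * ‖Q t ψ‖ ^ 2) = (c + t ^ 2) * (c' * ‖Q t ψ‖ ^ 2) := by ring
        _ ≤ (c + t ^ 2) * ((1 + α * rr t) * rr t) := by gcongr
        _ ≤ (c + t ^ 2) * ((1 + α * rr t) * (‖ψ‖ * ‖Q t ψ‖)) := by
            refine mul_le_mul_of_nonneg_left ?_ hcn.le
            exact mul_le_mul_of_nonneg_left hrle hdt.le
        _ = (1 + α * rr t) * ‖ψ‖ * ((c + t ^ 2) * ‖Q t ψ‖) := by ring
        _ ≤ (1 + α * rr t) * ‖ψ‖ * ‖ψ‖ := by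
            refine mul_le_mul_of_nonneg_left h4 ?_
            exact mul_nonneg hdt.le hm0
        _ = (1 + α * rr t) * ‖ψ‖ ^ 2 := by ring
    calc (1 + α * rr t)⁻¹ * ‖rankOne (Q t ψ)‖
        ≤ (1 + α * rr t)⁻¹ * ‖Q t ψ‖ ^ 2 := by gcongr
      _ ≤ (‖ψ‖ ^ 2 / c') * (c + t ^ 2)⁻¹ := by
          rw [inv_mul_le_iff₀ hdt]
          have hck : (0:ℝ) < c' * (c + t ^ 2) := by positivity
          rw [show (1 + α * rr t) * (‖ψ‖ ^ 2 / c' * (c + t ^ 2)⁻¹)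
              = ((1 + α * rr t) * ‖ψ‖ ^ 2) / (c' * (c + t ^ 2)) by field_simp]
          rw [le_div_iff₀ hck]
          nlinarith [h2]
  have huint : IntegrableOn (fun t : ℝ =>
      ((1 : ℂ) / (1 + (α : ℂ) * ⟪ψ, Q t ψ⟫_ℂ)) • rankOne (Q t ψ)) (Set.Ioi 0) := by
    refine Integrable.mono' ((integrableOn_inv_add_sq hc).const_mul (‖ψ‖ ^ 2 / c'))
      hucont.aestronglyMeasurable (ae_of_all _ fun t => hubound t)
  refine ⟨?_, huint, ?_⟩
  · intro t _
    constructor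
    · rw [hreal t]
      simp [Complex.add_im, Complex.mul_im]
    · rw [hreal t]
      simpa using hd t
  · have hIA := integrableOn_inverse_add_sq hA hc hAc
    have hIT := integrableOn_inverse_add_sq hTsa hc' hTc
    have hsub : (∫ t in Set.Ioi (0:ℝ), (Q t - Ring.inverse (T + t ^ 2 • 1)))
        = (∫ t in Set.Ioi (0:ℝ), Q t) - ∫ t in Set.Ioi (0:ℝ), Ring.inverse (T + t ^ 2 • 1) :=
      integral_sub hIA hIT
    have hsub2 : (∫ t in Set.Ioi (0:ℝ), (Q t - Ring.inverse (T + t ^ 2 • 1)))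
        = α • ∫ t in Set.Ioi (0:ℝ),
            ((1 : ℂ) / (1 + (α : ℂ) * ⟪ψ, Q t ψ⟫_ℂ)) • rankOne (Q t ψ) := by
      rw [← integral_smul]
      exact setIntegral_congr_fun measurableSet_Ioi fun t _ => hdiff t
    have hkey2 := hsub.symm.trans hsub2
    have hTint : (∫ t in Set.Ioi (0:ℝ), Ring.inverse (T + t ^ 2 • 1))
        = (∫ t in Set.Ioi (0:ℝ), Q t) - α • ∫ t in Set.Ioi (0:ℝ),
            ((1 : ℂ) / (1 + (α : ℂ) * ⟪ψ, Q t ψ⟫_ℂ)) • rankOne (Q t ψ) := by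
      rw [← hkey2, sub_sub_cancel]
    rw [cfc_sqrt_inv_integral hTsa hc' hTc, cfc_sqrt_inv_integral hA hc hAc, hTint,
      smul_sub, smul_smul]
    congr 2
    field_simp
end

section
/- Let (X, μ) be a measure space, ω : X → ℝ measurable with ω(x) ≥ 1 for μ-a.e. x, f : X → ℂ measurable with ∫_X ω^{-1/2}|f|² dμ < ∞, and λ ≥ 0. For t ≥ 0 set G₁(t) = ∫_X ω|f|²/(ω² + t²) dμ and G₂(t) = ∫_X ω|f|²/(ω² + t²)² dμ. Then ∫₀^∞ t² · G₂(t) · G₁(t) / (1 + 4λ·G₁(t)) dt ≤ (π/√2) · (∫_X ω^{-1/2}|f|² dμ)². -/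
open MeasureTheory
open scoped ENNReal NNReal


lemma aux_int (a : ℝ) (ha : 1 ≤ a) :
    ∫⁻ t in Set.Ioi (0:ℝ), ENNReal.ofReal (a ^ 3 / (a ^ 2 + t ^ 2) ^ 2) ≤
      ENNReal.ofReal (4 / 3) := by
  have ha0 : (0:ℝ) < a := lt_of_lt_of_le one_pos ha
  have hsplit : Set.Ioi (0:ℝ) = Set.Ioc 0 a ∪ Set.Ioi a := (Set.Ioc_union_Ioi_eq_Ioi ha0.le).symm
  rw [hsplit, lintegral_union measurableSet_Ioi (Set.Ioc_disjoint_Ioi le_rfl)]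
  have h1 : ∫⁻ t in Set.Ioc (0:ℝ) a, ENNReal.ofReal (a ^ 3 / (a ^ 2 + t ^ 2) ^ 2) ≤
      ENNReal.ofReal 1 := by
    have hb : ∀ t ∈ Set.Ioc (0:ℝ) a, ENNReal.ofReal (a ^ 3 / (a ^ 2 + t ^ 2) ^ 2) ≤
        ENNReal.ofReal (1 / a) := by
      intro t ht
      apply ENNReal.ofReal_le_ofReal
      rw [div_le_div_iff₀ (by positivity) ha0]
      nlinarith [sq_nonneg t, sq_nonneg (t * a), sq_nonneg (a * t)]
    calc ∫⁻ t in Set.Ioc (0:ℝ) a, ENNReal.ofReal (a ^ 3 / (a ^ 2 + t ^ 2) ^ 2)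
        ≤ ∫⁻ _t in Set.Ioc (0:ℝ) a, ENNReal.ofReal (1 / a) :=
          setLIntegral_mono measurable_const hb
      _ = ENNReal.ofReal (1 / a) * volume (Set.Ioc (0:ℝ) a) := setLIntegral_const _ _
      _ = ENNReal.ofReal (1 / a) * ENNReal.ofReal a := by rw [Real.volume_Ioc, sub_zero]
      _ = ENNReal.ofReal 1 := by
          rw [← ENNReal.ofReal_mul (by positivity), one_div, inv_mul_cancel₀ ha0.ne']
  have h2 : ∫⁻ t in Set.Ioi a, ENNReal.ofReal (a ^ 3 / (a ^ 2 + t ^ 2) ^ 2) ≤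
      ENNReal.ofReal (1 / 3) := by
    have hmeas : Measurable fun t : ℝ => ENNReal.ofReal (a ^ 3 * t ^ (-4 : ℝ)) :=
      ((measurable_id.pow measurable_const).const_mul _).ennreal_ofReal
    have hbd : ∀ t ∈ Set.Ioi a, ENNReal.ofReal (a ^ 3 / (a ^ 2 + t ^ 2) ^ 2) ≤
        ENNReal.ofReal (a ^ 3 * t ^ (-4 : ℝ)) := by
      intro t ht
      have ht0 : (0:ℝ) < t := lt_trans ha0 ht
      apply ENNReal.ofReal_le_ofReal
      have h4 : t ^ (-4 : ℝ) = (t ^ 4)⁻¹ := by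
        rw [Real.rpow_neg ht0.le, show (4:ℝ) = ((4:ℕ):ℝ) by norm_num, Real.rpow_natCast]
      rw [h4, ← div_eq_mul_inv, div_le_div_iff₀ (by positivity) (by positivity)]
      nlinarith [mul_nonneg (pow_pos ha0 3).le (by positivity : (0:ℝ) ≤ a^4 + 2*a^2*t^2)]
    have hInt : IntegrableOn (fun t : ℝ => a ^ 3 * t ^ (-4 : ℝ)) (Set.Ioi a) :=
      (integrableOn_Ioi_rpow_of_lt (by norm_num) ha0).const_mul _
    have hnn : 0 ≤ᵐ[volume.restrict (Set.Ioi a)] fun t : ℝ => a ^ 3 * t ^ (-4 : ℝ) := by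
      refine (ae_restrict_iff' measurableSet_Ioi).2 (ae_of_all _ fun t ht => ?_)
      have ht0 : (0:ℝ) < t := lt_trans ha0 ht
      positivity
    calc ∫⁻ t in Set.Ioi a, ENNReal.ofReal (a ^ 3 / (a ^ 2 + t ^ 2) ^ 2)
        ≤ ∫⁻ t in Set.Ioi a, ENNReal.ofReal (a ^ 3 * t ^ (-4 : ℝ)) :=
          setLIntegral_mono hmeas hbd
      _ = ENNReal.ofReal (∫ t in Set.Ioi a, a ^ 3 * t ^ (-4 : ℝ)) :=
          (ofReal_integral_eq_lintegral_ofReal hInt hnn).symm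
      _ = ENNReal.ofReal (1 / 3) := by
          rw [integral_const_mul, integral_Ioi_rpow_of_lt (by norm_num) ha0]
          congr 1
          have h3 : a ^ ((-4:ℝ) + 1) = (a ^ 3)⁻¹ := by
            rw [show ((-4:ℝ) + 1) = -((3:ℕ):ℝ) by norm_num, Real.rpow_neg ha0.le,
              Real.rpow_natCast]
          rw [h3]
          have : (a:ℝ) ^ 3 ≠ 0 := by positivity
          field_simp
          ring
  calc _ ≤ ENNReal.ofReal 1 + ENNReal.ofReal (1 / 3) := add_le_add h1 h2
    _ = ENNReal.ofReal (4 / 3) := by rw [← ENNReal.ofReal_add] <;> norm_num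

set_option maxHeartbeats 1000000 in
/-- Finiteness of the renormalized trace (up to the prefactor `−32λ²/π`): with
`G₁(t) = ∫ ω|f|²/(ω²+t²) dμ` and `G₂(t) = ∫ ω|f|²/(ω²+t²)² dμ`, if `ω ≥ 1` a.e. and
`∫ ω^{-1/2}|f|² dμ < ∞`, then
`∫₀^∞ t² G₂(t) G₁(t)/(1 + 4λG₁(t)) dt ≤ (π/√2) (∫ ω^{-1/2}|f|² dμ)²`. -/
theorem renormalized_trace_finite
    {X : Type*} [MeasurableSpace X] (μ : Measure X)
    (ω : X → ℝ) (hω : Measurable ω) (hω1 : ∀ᵐ x ∂μ, 1 ≤ ω x)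
    (f : X → ℂ) (hf : Measurable f)
    (hint : ∫⁻ x, ENNReal.ofReal (ω x ^ (-(1:ℝ)/2) * ‖f x‖ ^ 2) ∂μ < ⊤)
    (lam : ℝ) (hlam : 0 ≤ lam) :
    ∫⁻ t in Set.Ioi (0:ℝ), ENNReal.ofReal
        (t ^ 2 * (∫ x, ω x * ‖f x‖ ^ 2 / ((ω x) ^ 2 + t ^ 2) ^ 2 ∂μ) *
          (∫ x, ω x * ‖f x‖ ^ 2 / ((ω x) ^ 2 + t ^ 2) ∂μ) /
          (1 + 4 * lam * ∫ x, ω x * ‖f x‖ ^ 2 / ((ω x) ^ 2 + t ^ 2) ∂μ)) ≤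
      ENNReal.ofReal
        ((Real.pi / Real.sqrt 2) * (∫ x, ω x ^ (-(1:ℝ)/2) * ‖f x‖ ^ 2 ∂μ) ^ 2) := by
  -- notation
  set g : X → ℝ := fun x => ω x ^ (-(1:ℝ)/2) * ‖f x‖ ^ 2 with hg_def
  have hg_meas : Measurable g := (hω.pow measurable_const).mul (hf.norm.pow_const 2)
  have hg_nn : 0 ≤ᵐ[μ] g := by
    filter_upwards [hω1] with x hx
    exact mul_nonneg (Real.rpow_nonneg (by linarith) _) (by positivity)
  have hg_int : Integrable g μ := by
    refine ⟨hg_meas.aestronglyMeasurable, ?_⟩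
    rw [hasFiniteIntegral_iff_ofReal hg_nn]
    exact hint
  set I : ℝ := ∫ x, g x ∂μ with hI_def
  have hI_nn : 0 ≤ I := integral_nonneg_of_ae hg_nn
  set J : ℝ≥0∞ := ∫⁻ x, ENNReal.ofReal (g x) ∂μ with hJ_def
  have hJI : ENNReal.ofReal I = J := ofReal_integral_eq_lintegral_ofReal hg_int hg_nn
  have hJne : J ≠ ⊤ := hint.ne
  -- the Cauchy–Schwarz companion function
  set h : ℝ → X → ℝ := fun t x => ω x ^ ((5:ℝ)/2) * ‖f x‖ ^ 2 / ((ω x) ^ 2 + t ^ 2) ^ 2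
    with hh_def
  set K : ℝ → ℝ≥0∞ := fun t => ∫⁻ x, ENNReal.ofReal (h t x) ∂μ with hK_def
  -- pointwise-in-t bound
  have key : ∀ t ∈ Set.Ioi (0:ℝ), ENNReal.ofReal
        (t ^ 2 * (∫ x, ω x * ‖f x‖ ^ 2 / ((ω x) ^ 2 + t ^ 2) ^ 2 ∂μ) *
          (∫ x, ω x * ‖f x‖ ^ 2 / ((ω x) ^ 2 + t ^ 2) ∂μ) /
          (1 + 4 * lam * ∫ x, ω x * ‖f x‖ ^ 2 / ((ω x) ^ 2 + t ^ 2) ∂μ)) ≤ J * K t := by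
    intro t ht
    set p : X → ℝ := fun x => ω x * ‖f x‖ ^ 2 / ((ω x) ^ 2 + t ^ 2) with hp_def
    set q : X → ℝ := fun x => ω x * ‖f x‖ ^ 2 / ((ω x) ^ 2 + t ^ 2) ^ 2 with hq_def
    have hp_meas : Measurable p :=
      (hω.mul (hf.norm.pow_const 2)).div ((hω.pow_const 2).add measurable_const)
    have hq_meas : Measurable q :=
      (hω.mul (hf.norm.pow_const 2)).div (((hω.pow_const 2).add measurable_const).pow_const 2)
    have hp_nn : 0 ≤ᵐ[μ] p := by
      filter_upwards [hω1] with x hx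
      exact div_nonneg (mul_nonneg (by linarith) (by positivity)) (by positivity)
    have hq_nn : 0 ≤ᵐ[μ] q := by
      filter_upwards [hω1] with x hx
      exact div_nonneg (mul_nonneg (by linarith) (by positivity)) (by positivity)
    have hp_le_g : ∀ᵐ x ∂μ, p x ≤ g x := by
      filter_upwards [hω1] with x hx
      have hx0 : (0:ℝ) < ω x := lt_of_lt_of_le one_pos hx
      have h1 : p x ≤ ω x * ‖f x‖ ^ 2 / (ω x) ^ 2 := by
        apply div_le_div_of_nonneg_left (mul_nonneg hx0.le (by positivity)) (by positivity)
        nlinarith [sq_nonneg t]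
      have h2 : ω x * ‖f x‖ ^ 2 / (ω x) ^ 2 = ‖f x‖ ^ 2 * (ω x)⁻¹ := by
        field_simp
      have h3 : (ω x)⁻¹ ≤ ω x ^ (-(1:ℝ)/2) := by
        rw [← Real.rpow_neg_one]
        exact Real.rpow_le_rpow_of_exponent_le hx (by norm_num)
      calc p x ≤ ‖f x‖ ^ 2 * (ω x)⁻¹ := by rw [← h2]; exact h1
        _ ≤ ‖f x‖ ^ 2 * ω x ^ (-(1:ℝ)/2) := by
            exact mul_le_mul_of_nonneg_left h3 (by positivity)
        _ = g x := by rw [hg_def]; ring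
    have hq_le_p : ∀ᵐ x ∂μ, q x ≤ p x := by
      filter_upwards [hω1] with x hx
      have hx0 : (0:ℝ) < ω x := lt_of_lt_of_le one_pos hx
      have hd1 : (1:ℝ) ≤ (ω x) ^ 2 + t ^ 2 := by nlinarith [sq_nonneg t]
      rw [hq_def, hp_def, div_le_div_iff₀ (by positivity) (by positivity)]
      have hc : (0:ℝ) ≤ ω x * ‖f x‖ ^ 2 := mul_nonneg hx0.le (by positivity)
      nlinarith [mul_nonneg (mul_nonneg hc (by positivity : (0:ℝ) ≤ (ω x)^2 + t^2))
        (sub_nonneg.2 hd1)]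
    have hp_int : Integrable p μ := by
      refine hg_int.mono' hp_meas.aestronglyMeasurable ?_
      filter_upwards [hp_nn, hp_le_g] with x h1 h2
      rwa [Real.norm_of_nonneg h1]
    have hq_int : Integrable q μ := by
      refine hp_int.mono' hq_meas.aestronglyMeasurable ?_
      filter_upwards [hq_nn, hq_le_p, hp_nn] with x h1 h2 h3
      rw [Real.norm_of_nonneg h1]; exact h2
    set A : ℝ := ∫ x, p x ∂μ with hA_def
    set B : ℝ := ∫ x, q x ∂μ with hB_def
    have hA_nn : 0 ≤ A := integral_nonneg_of_ae hp_nn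
    have hB_nn : 0 ≤ B := integral_nonneg_of_ae hq_nn
    have htB : t ^ 2 * B ≤ A := by
      rw [hB_def, ← integral_const_mul]
      refine integral_mono_ae (hq_int.const_mul _) hp_int ?_
      filter_upwards [hω1] with x hx
      have hx0 : (0:ℝ) < ω x := lt_of_lt_of_le one_pos hx
      have hd0 : (0:ℝ) < (ω x) ^ 2 + t ^ 2 := by positivity
      have hc : (0:ℝ) ≤ ω x * ‖f x‖ ^ 2 := mul_nonneg hx0.le (by positivity)
      rw [hq_def, hp_def]
      simp only
      rw [mul_div_assoc', div_le_div_iff₀ (by positivity) hd0]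
      nlinarith [mul_nonneg (mul_nonneg hc hd0.le) (sq_nonneg (ω x))]
    have hreal : t ^ 2 * B * A / (1 + 4 * lam * A) ≤ A * A := by
      have hD : (1:ℝ) ≤ 1 + 4 * lam * A := by nlinarith
      calc t ^ 2 * B * A / (1 + 4 * lam * A) ≤ t ^ 2 * B * A :=
            div_le_self (by positivity) hD
        _ ≤ A * A := by nlinarith [mul_nonneg (sub_nonneg.2 htB) hA_nn]
    -- Cauchy–Schwarz
    have hconj : Real.HolderConjugate 2 2 := Real.holderConjugate_iff.mpr ⟨one_lt_two, by norm_num⟩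
    set u : X → ℝ≥0∞ := fun x => ENNReal.ofReal (Real.sqrt (g x)) with hu_def
    set v : X → ℝ≥0∞ := fun x => ENNReal.ofReal (Real.sqrt (h t x)) with hv_def
    have hu_meas : Measurable u := hg_meas.sqrt.ennreal_ofReal
    have hv_meas : Measurable v := by
      refine Measurable.ennreal_ofReal (Measurable.sqrt ?_)
      exact ((hω.pow measurable_const).mul (hf.norm.pow_const 2)).div
        (((hω.pow_const 2).add measurable_const).pow_const 2)
    have hCS0 := ENNReal.lintegral_mul_le_Lp_mul_Lq μ hconj hu_meas.aemeasurable
      hv_meas.aemeasurable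
    have e1 : ∀ᵐ x ∂μ, u x * v x = ENNReal.ofReal (p x) := by
      filter_upwards [hω1] with x hx
      have hx0 : (0:ℝ) < ω x := lt_of_lt_of_le one_pos hx
      have hgnn : (0:ℝ) ≤ g x :=
        mul_nonneg (Real.rpow_nonneg hx0.le _) (by positivity)
      have hpnn : (0:ℝ) ≤ p x :=
        div_nonneg (mul_nonneg hx0.le (by positivity)) (by positivity)
      rw [hu_def, hv_def, ← ENNReal.ofReal_mul (Real.sqrt_nonneg _),
        ← Real.sqrt_mul hgnn]
      congr 1
      have hgh : g x * h t x = p x ^ 2 := by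
        have hw : ω x ^ (-(1:ℝ)/2) * ω x ^ ((5:ℝ)/2) = (ω x) ^ 2 := by
          rw [← Real.rpow_add hx0, show (-(1:ℝ)/2 + 5/2) = ((2:ℕ):ℝ) by norm_num,
            Real.rpow_natCast]
        calc g x * h t x
            = (ω x ^ (-(1:ℝ)/2) * ω x ^ ((5:ℝ)/2)) * ‖f x‖ ^ 2 * ‖f x‖ ^ 2 /
              ((ω x) ^ 2 + t ^ 2) ^ 2 := by rw [hg_def, hh_def]; ring
          _ = (ω x) ^ 2 * ‖f x‖ ^ 2 * ‖f x‖ ^ 2 / ((ω x) ^ 2 + t ^ 2) ^ 2 := by rw [hw]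
          _ = p x ^ 2 := by rw [hp_def]; simp only; rw [div_pow]; ring
      rw [hgh, Real.sqrt_sq hpnn]
    have e2 : ∀ᵐ x ∂μ, u x ^ (2:ℝ) = ENNReal.ofReal (g x) := by
      filter_upwards [hg_nn] with x hx
      rw [hu_def]
      simp only
      rw [ENNReal.ofReal_rpow_of_nonneg (Real.sqrt_nonneg _) (by norm_num),
        Real.rpow_two, Real.sq_sqrt hx]
    have e3 : ∀ᵐ x ∂μ, v x ^ (2:ℝ) = ENNReal.ofReal (h t x) := by
      filter_upwards [hω1] with x hx
      have hx0 : (0:ℝ) < ω x := lt_of_lt_of_le one_pos hx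
      have hhnn : (0:ℝ) ≤ h t x :=
        div_nonneg (mul_nonneg (Real.rpow_nonneg hx0.le _) (by positivity)) (by positivity)
      rw [hv_def]
      simp only
      rw [ENNReal.ofReal_rpow_of_nonneg (Real.sqrt_nonneg _) (by norm_num),
        Real.rpow_two, Real.sq_sqrt hhnn]
    have hCS : ENNReal.ofReal A ≤ J ^ ((1:ℝ)/2) * (K t) ^ ((1:ℝ)/2) := by
      rw [hA_def, ofReal_integral_eq_lintegral_ofReal hp_int hp_nn]
      calc ∫⁻ x, ENNReal.ofReal (p x) ∂μ
          = ∫⁻ x, u x * v x ∂μ := (lintegral_congr_ae e1).symm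
        _ ≤ (∫⁻ x, u x ^ (2:ℝ) ∂μ) ^ ((1:ℝ)/2) * (∫⁻ x, v x ^ (2:ℝ) ∂μ) ^ ((1:ℝ)/2) := by
            simpa using hCS0
        _ = J ^ ((1:ℝ)/2) * (K t) ^ ((1:ℝ)/2) := by
            rw [lintegral_congr_ae e2, lintegral_congr_ae e3]
    have hsq : ∀ z : ℝ≥0∞, z ^ ((1:ℝ)/2) * z ^ ((1:ℝ)/2) = z := by
      intro z
      rw [← ENNReal.rpow_add_of_nonneg _ _ (by norm_num) (by norm_num)]
      norm_num
    calc ENNReal.ofReal (t ^ 2 * B * A / (1 + 4 * lam * A))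
        ≤ ENNReal.ofReal (A * A) := ENNReal.ofReal_le_ofReal hreal
      _ = ENNReal.ofReal A * ENNReal.ofReal A := ENNReal.ofReal_mul hA_nn
      _ ≤ (J ^ ((1:ℝ)/2) * (K t) ^ ((1:ℝ)/2)) * (J ^ ((1:ℝ)/2) * (K t) ^ ((1:ℝ)/2)) :=
          mul_le_mul' hCS hCS
      _ = (J ^ ((1:ℝ)/2) * J ^ ((1:ℝ)/2)) * ((K t) ^ ((1:ℝ)/2) * (K t) ^ ((1:ℝ)/2)) :=
          mul_mul_mul_comm _ _ _ _
      _ = J * K t := by rw [hsq, hsq]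
  -- the t-integral of K via Tonelli over the finite measure ν
  have hK_le : ∫⁻ t in Set.Ioi (0:ℝ), K t ≤ ENNReal.ofReal (4/3) * J := by
    set ν : Measure X := μ.withDensity (fun x => ENNReal.ofReal (g x)) with hν_def
    have hν_univ : ν Set.univ = J := by
      rw [hν_def, withDensity_apply _ MeasurableSet.univ, setLIntegral_univ]
    haveI : IsFiniteMeasure ν := ⟨by rw [hν_univ]; exact hint.trans_le le_top⟩
    set r : ℝ → X → ℝ≥0∞ := fun t x => ENNReal.ofReal (ω x ^ 3 / ((ω x) ^ 2 + t ^ 2) ^ 2)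
      with hr_def
    have hr_meas : Measurable (Function.uncurry r) := by
      apply Measurable.ennreal_ofReal
      exact ((hω.comp measurable_snd).pow_const 3).div
        ((((hω.comp measurable_snd).pow_const 2).add (measurable_fst.pow_const 2)).pow_const 2)
    have hKr : ∀ t : ℝ, K t = ∫⁻ x, r t x ∂ν := by
      intro t
      have hrt : Measurable (r t) :=
        ((hω.pow_const 3).div (((hω.pow_const 2).add measurable_const).pow_const 2)).ennreal_ofReal
      rw [hν_def, lintegral_withDensity_eq_lintegral_mul μ hg_meas.ennreal_ofReal hrt]
      refine lintegral_congr_ae ?_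
      filter_upwards [hω1] with x hx
      have hx0 : (0:ℝ) < ω x := lt_of_lt_of_le one_pos hx
      have hgnn : (0:ℝ) ≤ g x := mul_nonneg (Real.rpow_nonneg hx0.le _) (by positivity)
      simp only [Pi.mul_apply]
      rw [hr_def, ← ENNReal.ofReal_mul hgnn]
      congr 1
      symm
      have hw : ω x ^ (-(1:ℝ)/2) * ω x ^ 3 = ω x ^ ((5:ℝ)/2) := by
        rw [← Real.rpow_natCast (ω x) 3, ← Real.rpow_add hx0]
        norm_num
      calc g x * (ω x ^ 3 / ((ω x) ^ 2 + t ^ 2) ^ 2)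
          = (ω x ^ (-(1:ℝ)/2) * ω x ^ 3) * ‖f x‖ ^ 2 / ((ω x) ^ 2 + t ^ 2) ^ 2 := by
            rw [hg_def]; ring
        _ = h t x := by rw [hw, hh_def]
    calc ∫⁻ t in Set.Ioi (0:ℝ), K t
        = ∫⁻ t in Set.Ioi (0:ℝ), ∫⁻ x, r t x ∂ν := by
          exact lintegral_congr fun t => hKr t
      _ = ∫⁻ x, (∫⁻ t in Set.Ioi (0:ℝ), r t x) ∂ν := lintegral_lintegral_swap
          hr_meas.aemeasurable
      _ ≤ ∫⁻ _x, ENNReal.ofReal (4/3) ∂ν := by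
          refine lintegral_mono_ae ?_
          filter_upwards [hω1.filter_mono (withDensity_absolutelyContinuous μ _).ae_le]
            with x hx
          exact aux_int (ω x) hx
      _ = ENNReal.ofReal (4/3) * J := by rw [lintegral_const, hν_univ]
  -- put everything together
  have h43 : (4/3 : ℝ) ≤ Real.pi / Real.sqrt 2 := by
    have hs2 : Real.sqrt 2 ≤ 2 := by
      nlinarith [Real.sq_sqrt (by norm_num : (0:ℝ) ≤ 2), Real.sqrt_nonneg 2]
    have hs0 : 0 < Real.sqrt 2 := Real.sqrt_pos.2 (by norm_num)
    rw [le_div_iff₀ hs0]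
    nlinarith [Real.pi_gt_three]
  calc ∫⁻ t in Set.Ioi (0:ℝ), ENNReal.ofReal
        (t ^ 2 * (∫ x, ω x * ‖f x‖ ^ 2 / ((ω x) ^ 2 + t ^ 2) ^ 2 ∂μ) *
          (∫ x, ω x * ‖f x‖ ^ 2 / ((ω x) ^ 2 + t ^ 2) ∂μ) /
          (1 + 4 * lam * ∫ x, ω x * ‖f x‖ ^ 2 / ((ω x) ^ 2 + t ^ 2) ∂μ))
      ≤ ∫⁻ t in Set.Ioi (0:ℝ), J * K t :=
        lintegral_mono_ae ((ae_restrict_iff' measurableSet_Ioi).2 (ae_of_all _ key))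
    _ = J * ∫⁻ t in Set.Ioi (0:ℝ), K t := lintegral_const_mul' _ _ hJne
    _ ≤ J * (ENNReal.ofReal (4/3) * J) := mul_le_mul_right hK_le _
    _ = ENNReal.ofReal ((4/3) * I ^ 2) := by
        rw [← hJI, ← ENNReal.ofReal_mul (by norm_num), ← ENNReal.ofReal_mul hI_nn]
        congr 1
        ring
    _ ≤ ENNReal.ofReal ((Real.pi / Real.sqrt 2) * I ^ 2) :=
        ENNReal.ofReal_le_ofReal (mul_le_mul_of_nonneg_right h43 (sq_nonneg I))
end

section
/- Let (X, μ) be a measure space, ω : X → ℝ measurable with ω(x) ≥ 1 for μ-a.e. x, f : X → ℂ measurable with ∫_X ω^{-1/2}|f|² dμ < ∞, and λ ≥ 0. For n ∈ ℕ let f_n = 1_{{ω ≤ n}}·f. For a measurable g define G₁(g, t) = ∫_X ω|g|²/(ω² + t²) dμ, G₂(g, t) = ∫_X ω|g|²/(ω² + t²)² dμ and I(g) = ∫₀^∞ t² · G₂(g, t) · G₁(g, t) / (1 + 4λ·G₁(g, t)) dt. Then I(f_n) converges to I(f) as n → ∞. -/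
open MeasureTheory Set ENNReal

lemma crt_key0 {a : ℝ} (t : ℝ) (ha : 1 ≤ a) :
    a / (a ^ 2 + t ^ 2) ≤ a ^ (-(1:ℝ)/2) := by
  have ha0 : (0:ℝ) < a := lt_of_lt_of_le one_pos ha
  have hd : (0:ℝ) < a ^ 2 + t ^ 2 := by positivity
  rw [div_le_iff₀ hd]
  have h1 : a ^ (-(1:ℝ)/2) * a ^ 2 = a ^ ((3:ℝ)/2) := by
    rw [← Real.rpow_natCast a 2, ← Real.rpow_add ha0]; norm_num
  have h2 : a ≤ a ^ ((3:ℝ)/2) := by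
    nth_rewrite 1 [← Real.rpow_one a]
    exact Real.rpow_le_rpow_of_exponent_le ha (by norm_num)
  have h3 : (0:ℝ) ≤ a ^ (-(1:ℝ)/2) := Real.rpow_nonneg ha0.le _
  nlinarith [sq_nonneg t]

lemma crt_cs2 {α : Type*} [MeasurableSpace α] (μ : Measure α) (p q : α → ℝ≥0∞)
    (hp : AEMeasurable p μ) (hq : AEMeasurable q μ) :
    (∫⁻ x, p x * q x ∂μ) ^ 2 ≤ (∫⁻ x, p x ^ 2 ∂μ) * (∫⁻ x, q x ^ 2 ∂μ) := by
  have hpq : Real.HolderConjugate 2 2 := .two_two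
  have h := ENNReal.lintegral_mul_le_Lp_mul_Lq μ hpq hp hq
  simp only [Pi.mul_apply] at h
  have h2 : ∀ x : ℝ≥0∞, x ^ (2:ℝ) = x ^ 2 := fun x => by
    rw [← ENNReal.rpow_natCast x 2]; norm_num
  calc (∫⁻ x, p x * q x ∂μ) ^ 2
      ≤ ((∫⁻ x, p x ^ (2:ℝ) ∂μ) ^ (1/(2:ℝ)) * (∫⁻ x, q x ^ (2:ℝ) ∂μ) ^ (1/(2:ℝ))) ^ 2 :=
        pow_le_pow_left₀ zero_le h 2
    _ = (∫⁻ x, p x ^ 2 ∂μ) * (∫⁻ x, q x ^ 2 ∂μ) := by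
        rw [mul_pow, ← ENNReal.rpow_natCast (_ ^ (1/(2:ℝ))) 2, ← ENNReal.rpow_natCast (_ ^ (1/(2:ℝ))) 2,
          ← ENNReal.rpow_mul, ← ENNReal.rpow_mul]
        norm_num [h2]

lemma crt_Kbound {a : ℝ} (ha : 1 ≤ a) :
    ∫⁻ t in Set.Ioi (0:ℝ), ENNReal.ofReal (((a^2+t^2)^2)⁻¹)
      ≤ ENNReal.ofReal ((4/3) * (a^3)⁻¹) := by
  have ha0 : (0:ℝ) < a := lt_of_lt_of_le one_pos ha
  have hsplit : Set.Ioc (0:ℝ) a ∪ Set.Ioi a = Set.Ioi (0:ℝ) :=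
    Set.Ioc_union_Ioi_eq_Ioi ha0.le
  rw [← hsplit, lintegral_union measurableSet_Ioi (Set.Ioc_disjoint_Ioi le_rfl)]
  have h1 : ∫⁻ t in Set.Ioc (0:ℝ) a, ENNReal.ofReal (((a^2+t^2)^2)⁻¹)
      ≤ ENNReal.ofReal ((a^3)⁻¹) := by
    have hb : ∀ t : ℝ, ENNReal.ofReal (((a^2+t^2)^2)⁻¹) ≤ ENNReal.ofReal ((a^4)⁻¹) := by
      intro t
      apply ENNReal.ofReal_le_ofReal
      apply inv_anti₀ (by positivity)
      nlinarith [sq_nonneg t, sq_nonneg a, sq_nonneg (t*t), sq_nonneg (a*t)]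
    calc ∫⁻ t in Set.Ioc (0:ℝ) a, ENNReal.ofReal (((a^2+t^2)^2)⁻¹)
        ≤ ∫⁻ _ in Set.Ioc (0:ℝ) a, ENNReal.ofReal ((a^4)⁻¹) := lintegral_mono fun t => hb t
      _ = ENNReal.ofReal ((a^4)⁻¹) * volume (Set.Ioc (0:ℝ) a) := setLIntegral_const _ _
      _ = ENNReal.ofReal ((a^4)⁻¹) * ENNReal.ofReal (a - 0) := by rw [Real.volume_Ioc]
      _ = ENNReal.ofReal ((a^3)⁻¹) := by
          rw [← ENNReal.ofReal_mul (by positivity)]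
          congr 1
          field_simp
          ring
  have h2 : ∫⁻ t in Set.Ioi a, ENNReal.ofReal (((a^2+t^2)^2)⁻¹)
      ≤ ENNReal.ofReal ((a^3)⁻¹ / 3) := by
    have hb : ∀ t ∈ Set.Ioi a, ENNReal.ofReal (((a^2+t^2)^2)⁻¹)
        ≤ ENNReal.ofReal (t ^ (-(4:ℝ))) := by
      intro t ht
      have ht0 : (0:ℝ) < t := lt_trans ha0 ht
      apply ENNReal.ofReal_le_ofReal
      rw [Real.rpow_neg ht0.le]
      rw [show ((4:ℝ)) = ((4:ℕ):ℝ) by norm_num, Real.rpow_natCast]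
      apply inv_anti₀ (by positivity)
      nlinarith [sq_nonneg t, sq_nonneg a, sq_nonneg (a*t)]
    have hInt : IntegrableOn (fun t : ℝ => t ^ (-(4:ℝ))) (Set.Ioi a) :=
      integrableOn_Ioi_rpow_of_lt (by norm_num) ha0
    have hnn : 0 ≤ᵐ[volume.restrict (Set.Ioi a)] fun t : ℝ => t ^ (-(4:ℝ)) := by
      filter_upwards [ae_restrict_mem measurableSet_Ioi] with t ht
      exact Real.rpow_nonneg (le_of_lt (lt_trans ha0 ht)) _
    calc ∫⁻ t in Set.Ioi a, ENNReal.ofReal (((a^2+t^2)^2)⁻¹)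
        ≤ ∫⁻ t in Set.Ioi a, ENNReal.ofReal (t ^ (-(4:ℝ))) := by
          apply lintegral_mono_ae
          filter_upwards [ae_restrict_mem measurableSet_Ioi] with t ht
          exact hb t ht
      _ = ENNReal.ofReal (∫ t in Set.Ioi a, t ^ (-(4:ℝ))) :=
          (ofReal_integral_eq_lintegral_ofReal hInt hnn).symm
      _ = ENNReal.ofReal ((a^3)⁻¹ / 3) := by
          rw [integral_Ioi_rpow_of_lt (by norm_num) ha0]
          congr 1
          rw [show (-(4:ℝ) + 1) = -(3:ℝ) by norm_num, Real.rpow_neg ha0.le,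
            show ((3:ℝ)) = ((3:ℕ):ℝ) by norm_num, Real.rpow_natCast]
          ring
  calc _ ≤ ENNReal.ofReal ((a^3)⁻¹) + ENNReal.ofReal ((a^3)⁻¹ / 3) := add_le_add h1 h2
    _ = ENNReal.ofReal ((4/3) * (a^3)⁻¹) := by
        rw [← ENNReal.ofReal_add (by positivity) (by positivity)]
        congr 1
        ring

lemma crt_ptwise {a b c t : ℝ} (ha : 1 ≤ a) (hb : 0 ≤ b) (hbc : b ≤ c) :
    0 ≤ a * b / (a ^ 2 + t ^ 2) ∧
    a * b / (a ^ 2 + t ^ 2) ≤ a ^ (-(1:ℝ)/2) * c ∧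
    0 ≤ a * b / ((a ^ 2 + t ^ 2) ^ 2) ∧
    a * b / ((a ^ 2 + t ^ 2) ^ 2) ≤ a ^ (-(1:ℝ)/2) * c ∧
    t ^ 2 * (a * b / ((a ^ 2 + t ^ 2) ^ 2)) ≤ a * b / (a ^ 2 + t ^ 2) := by
  have ha0 : (0:ℝ) < a := lt_of_lt_of_le one_pos ha
  have hD1 : (1:ℝ) ≤ a ^ 2 + t ^ 2 := by nlinarith [sq_nonneg t]
  have hD0 : (0:ℝ) < a ^ 2 + t ^ 2 := lt_of_lt_of_le one_pos hD1
  have hab : (0:ℝ) ≤ a * b := mul_nonneg ha0.le hb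
  have h1 : 0 ≤ a * b / (a ^ 2 + t ^ 2) := div_nonneg hab hD0.le
  have hkey : a / (a ^ 2 + t ^ 2) ≤ a ^ (-(1:ℝ)/2) := crt_key0 t ha
  have h2 : a * b / (a ^ 2 + t ^ 2) ≤ a ^ (-(1:ℝ)/2) * c := by
    have : a * b / (a ^ 2 + t ^ 2) = (a / (a ^ 2 + t ^ 2)) * b := by ring
    rw [this]
    exact mul_le_mul hkey hbc hb (Real.rpow_nonneg ha0.le _)
  have h5 : a * b / ((a ^ 2 + t ^ 2) ^ 2) ≤ a * b / (a ^ 2 + t ^ 2) := by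
    apply div_le_div_of_nonneg_left hab hD0  -- maybe wrong name
    nlinarith
  have h3 : 0 ≤ a * b / ((a ^ 2 + t ^ 2) ^ 2) := div_nonneg hab (by positivity)
  have h6 : t ^ 2 * (a * b / ((a ^ 2 + t ^ 2) ^ 2)) ≤ a * b / (a ^ 2 + t ^ 2) := by
    rw [mul_div_assoc', div_le_div_iff₀ (by positivity) hD0]
    nlinarith [sq_nonneg t, sq_nonneg a, mul_nonneg (mul_nonneg hab (sq_nonneg a)) hD0.le]
  exact ⟨h1, h2, h3, le_trans h5 h2, h6⟩

section CRT
variable {X : Type*} [MeasurableSpace X] {μ : Measure X} {ω : X → ℝ} {f g : X → ℂ}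

lemma crt_measF1 (hω : Measurable ω) (hg : Measurable g) (t : ℝ) :
    Measurable fun x => ω x * ‖g x‖ ^ 2 / ((ω x) ^ 2 + t ^ 2) :=
  (hω.mul (hg.norm.pow measurable_const)).div
    ((hω.pow measurable_const).add measurable_const)

lemma crt_measF2 (hω : Measurable ω) (hg : Measurable g) (t : ℝ) :
    Measurable fun x => ω x * ‖g x‖ ^ 2 / ((ω x) ^ 2 + t ^ 2) ^ 2 :=
  (hω.mul (hg.norm.pow measurable_const)).div
    (((hω.pow measurable_const).add measurable_const).pow measurable_const)

lemma crt_dom_int (hω : Measurable ω) (hf : Measurable f) (hω1 : ∀ᵐ x ∂μ, 1 ≤ ω x)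
    (hint : ∫⁻ x, ENNReal.ofReal (ω x ^ (-(1:ℝ)/2) * ‖f x‖ ^ 2) ∂μ < ⊤) :
    Integrable (fun x => ω x ^ (-(1:ℝ)/2) * ‖f x‖ ^ 2) μ := by
  have hm : Measurable fun x => ω x ^ (-(1:ℝ)/2) * ‖f x‖ ^ 2 :=
    (hω.pow measurable_const).mul (hf.norm.pow measurable_const)
  have hnn : 0 ≤ᵐ[μ] fun x => ω x ^ (-(1:ℝ)/2) * ‖f x‖ ^ 2 := by
    filter_upwards [hω1] with x hx
    have h0 : (0:ℝ) < ω x := lt_of_lt_of_le one_pos hx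
    positivity
  exact ⟨hm.aestronglyMeasurable, (hasFiniteIntegral_iff_ofReal hnn).2 hint⟩
lemma crt_F1_int (hω : Measurable ω) (hf : Measurable f) (hω1 : ∀ᵐ x ∂μ, 1 ≤ ω x)
    (hint : ∫⁻ x, ENNReal.ofReal (ω x ^ (-(1:ℝ)/2) * ‖f x‖ ^ 2) ∂μ < ⊤)
    (hg : Measurable g) (hle : ∀ x, ‖g x‖ ≤ ‖f x‖) (t : ℝ) :
    Integrable (fun x => ω x * ‖g x‖ ^ 2 / ((ω x) ^ 2 + t ^ 2)) μ := by
  refine (crt_dom_int hω hf hω1 hint).mono' (crt_measF1 hω hg t).aestronglyMeasurable ?_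
  filter_upwards [hω1] with x hx
  obtain ⟨h1, h2, -, -, -⟩ := crt_ptwise hx (sq_nonneg ‖g x‖)
    (pow_le_pow_left₀ (norm_nonneg _) (hle x) 2) (t := t)
  rw [Real.norm_eq_abs, abs_of_nonneg h1]
  exact h2

lemma crt_F2_int (hω : Measurable ω) (hf : Measurable f) (hω1 : ∀ᵐ x ∂μ, 1 ≤ ω x)
    (hint : ∫⁻ x, ENNReal.ofReal (ω x ^ (-(1:ℝ)/2) * ‖f x‖ ^ 2) ∂μ < ⊤)
    (hg : Measurable g) (hle : ∀ x, ‖g x‖ ≤ ‖f x‖) (t : ℝ) :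
    Integrable (fun x => ω x * ‖g x‖ ^ 2 / ((ω x) ^ 2 + t ^ 2) ^ 2) μ := by
  refine (crt_dom_int hω hf hω1 hint).mono' (crt_measF2 hω hg t).aestronglyMeasurable ?_
  filter_upwards [hω1] with x hx
  obtain ⟨-, -, h3, h4, -⟩ := crt_ptwise hx (sq_nonneg ‖g x‖)
    (pow_le_pow_left₀ (norm_nonneg _) (hle x) 2) (t := t)
  rw [Real.norm_eq_abs, abs_of_nonneg h3]
  exact h4

lemma crt_G1_cont (hω : Measurable ω) (hf : Measurable f) (hω1 : ∀ᵐ x ∂μ, 1 ≤ ω x)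
    (hint : ∫⁻ x, ENNReal.ofReal (ω x ^ (-(1:ℝ)/2) * ‖f x‖ ^ 2) ∂μ < ⊤)
    (hg : Measurable g) (hle : ∀ x, ‖g x‖ ≤ ‖f x‖) :
    Continuous fun t : ℝ => ∫ x, ω x * ‖g x‖ ^ 2 / ((ω x) ^ 2 + t ^ 2) ∂μ := by
  apply continuous_of_dominated (bound := fun x => ω x ^ (-(1:ℝ)/2) * ‖f x‖ ^ 2)
  · exact fun t => (crt_measF1 hω hg t).aestronglyMeasurable
  · intro t
    filter_upwards [hω1] with x hx
    obtain ⟨h1, h2, -, -, -⟩ := crt_ptwise hx (sq_nonneg ‖g x‖)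
      (pow_le_pow_left₀ (norm_nonneg _) (hle x) 2) (t := t)
    rw [Real.norm_eq_abs, abs_of_nonneg h1]
    exact h2
  · exact crt_dom_int hω hf hω1 hint
  · filter_upwards [hω1] with x hx
    apply Continuous.div continuous_const (by continuity)
    intro t
    nlinarith [sq_nonneg t]

lemma crt_G2_cont (hω : Measurable ω) (hf : Measurable f) (hω1 : ∀ᵐ x ∂μ, 1 ≤ ω x)
    (hint : ∫⁻ x, ENNReal.ofReal (ω x ^ (-(1:ℝ)/2) * ‖f x‖ ^ 2) ∂μ < ⊤)
    (hg : Measurable g) (hle : ∀ x, ‖g x‖ ≤ ‖f x‖) :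
    Continuous fun t : ℝ => ∫ x, ω x * ‖g x‖ ^ 2 / ((ω x) ^ 2 + t ^ 2) ^ 2 ∂μ := by
  apply continuous_of_dominated (bound := fun x => ω x ^ (-(1:ℝ)/2) * ‖f x‖ ^ 2)
  · exact fun t => (crt_measF2 hω hg t).aestronglyMeasurable
  · intro t
    filter_upwards [hω1] with x hx
    obtain ⟨-, -, h3, h4, -⟩ := crt_ptwise hx (sq_nonneg ‖g x‖)
      (pow_le_pow_left₀ (norm_nonneg _) (hle x) 2) (t := t)
    rw [Real.norm_eq_abs, abs_of_nonneg h3]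
    exact h4
  · exact crt_dom_int hω hf hω1 hint
  · filter_upwards [hω1] with x hx
    have h0 : (0:ℝ) < ω x := lt_of_lt_of_le one_pos hx
    apply Continuous.div continuous_const (by continuity)
    intro t
    positivity

lemma crt_bound_int (hω : Measurable ω) (hf : Measurable f) (hω1 : ∀ᵐ x ∂μ, 1 ≤ ω x)
    (hint : ∫⁻ x, ENNReal.ofReal (ω x ^ (-(1:ℝ)/2) * ‖f x‖ ^ 2) ∂μ < ⊤) :
    Integrable (fun t => (∫ x, ω x * ‖f x‖ ^ 2 / ((ω x) ^ 2 + t ^ 2) ∂μ) *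
      (∫ x, ω x * ‖f x‖ ^ 2 / ((ω x) ^ 2 + t ^ 2) ∂μ))
      (volume.restrict (Set.Ioi (0:ℝ))) := by
  have hle : ∀ x, ‖f x‖ ≤ ‖f x‖ := fun x => le_rfl
  set A : ℝ → ℝ := fun t => ∫ x, ω x * ‖f x‖ ^ 2 / ((ω x) ^ 2 + t ^ 2) ∂μ with hA
  have hAcont : Continuous A := crt_G1_cont hω hf hω1 hint hf hle
  have hAnn : ∀ t, 0 ≤ A t := by
    intro t
    apply integral_nonneg_of_ae
    filter_upwards [hω1] with x hx
    exact (crt_ptwise hx (sq_nonneg ‖f x‖) le_rfl (t := t)).1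
  refine ⟨(hAcont.mul hAcont).aestronglyMeasurable, ?_⟩
  rw [hasFiniteIntegral_iff_ofReal (ae_of_all _ fun t => mul_nonneg (hAnn t) (hAnn t))]
  have hMfin : (∫⁻ x, ENNReal.ofReal (ω x ^ (-(1:ℝ)/2) * ‖f x‖ ^ 2) ∂μ) ≠ ⊤ := hint.ne
  have hrmeas : ∀ t : ℝ, Measurable fun x =>
      ENNReal.ofReal (ω x ^ ((5:ℝ)/2) * ‖f x‖ ^ 2 * (((ω x) ^ 2 + t ^ 2) ^ 2)⁻¹) := fun t =>
    (((hω.pow measurable_const).mul (hf.norm.pow measurable_const)).mul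
      ((((hω.pow measurable_const).add measurable_const).pow measurable_const).inv)).ennreal_ofReal
  have key : ∀ t : ℝ, ENNReal.ofReal (A t * A t) ≤
      (∫⁻ x, ENNReal.ofReal (ω x ^ (-(1:ℝ)/2) * ‖f x‖ ^ 2) ∂μ) *
      ∫⁻ x, ENNReal.ofReal (ω x ^ ((5:ℝ)/2) * ‖f x‖ ^ 2 * (((ω x) ^ 2 + t ^ 2) ^ 2)⁻¹) ∂μ := by
    intro t
    have hInt : Integrable (fun x => ω x * ‖f x‖ ^ 2 / ((ω x) ^ 2 + t ^ 2)) μ :=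
      crt_F1_int hω hf hω1 hint hf hle t
    have hnn : 0 ≤ᵐ[μ] fun x => ω x * ‖f x‖ ^ 2 / ((ω x) ^ 2 + t ^ 2) := by
      filter_upwards [hω1] with x hx
      exact (crt_ptwise hx (sq_nonneg ‖f x‖) le_rfl (t := t)).1
    have hAeq : ENNReal.ofReal (A t)
        = ∫⁻ x, ENNReal.ofReal (ω x * ‖f x‖ ^ 2 / ((ω x) ^ 2 + t ^ 2)) ∂μ :=
      ofReal_integral_eq_lintegral_ofReal hInt hnn
    set p : X → ℝ≥0∞ := fun x =>
      ENNReal.ofReal (ω x ^ (-(1:ℝ)/2) * ‖f x‖ ^ 2) ^ ((1:ℝ)/2) with hp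
    set q : X → ℝ≥0∞ := fun x =>
      ENNReal.ofReal (ω x ^ ((5:ℝ)/2) * ‖f x‖ ^ 2 * (((ω x) ^ 2 + t ^ 2) ^ 2)⁻¹) ^ ((1:ℝ)/2) with hq
    have hpm : AEMeasurable p μ :=
      ((((hω.pow measurable_const).mul (hf.norm.pow measurable_const)).ennreal_ofReal).pow
        measurable_const).aemeasurable
    have hqm : AEMeasurable q μ := ((hrmeas t).pow measurable_const).aemeasurable
    have hsq : ∀ z : ℝ≥0∞, (z ^ ((1:ℝ)/2)) ^ 2 = z := by
      intro z
      rw [← ENNReal.rpow_natCast (z ^ ((1:ℝ)/2)) 2, ← ENNReal.rpow_mul]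
      norm_num
    have hpq : ∀ᵐ x ∂μ,
        ENNReal.ofReal (ω x * ‖f x‖ ^ 2 / ((ω x) ^ 2 + t ^ 2)) = p x * q x := by
      filter_upwards [hω1] with x hx
      have ha0 : (0:ℝ) < ω x := lt_of_lt_of_le one_pos hx
      have hD0 : (0:ℝ) < (ω x) ^ 2 + t ^ 2 := by positivity
      have hdnn : (0:ℝ) ≤ ω x ^ (-(1:ℝ)/2) * ‖f x‖ ^ 2 := by positivity
      have e1 : ω x ^ (-(1:ℝ)/2) * ω x ^ ((5:ℝ)/2) = ω x ^ 2 := by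
        rw [← Real.rpow_natCast (ω x) 2, ← Real.rpow_add ha0]; norm_num
      have e2 : (ω x ^ (-(1:ℝ)/2) * ‖f x‖ ^ 2) *
          (ω x ^ ((5:ℝ)/2) * ‖f x‖ ^ 2 * (((ω x) ^ 2 + t ^ 2) ^ 2)⁻¹)
          = (ω x * ‖f x‖ ^ 2 / ((ω x) ^ 2 + t ^ 2)) ^ 2 := by
        field_simp
        rw [neg_div] at e1
        linear_combination (‖f x‖ ^ 2 * ‖f x‖ ^ 2) * e1
      simp only [hp, hq]
      rw [← ENNReal.mul_rpow_of_nonneg _ _ (by norm_num : (0:ℝ) ≤ 1/2),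
        ← ENNReal.ofReal_mul hdnn, e2,
        ENNReal.ofReal_pow (div_nonneg (by positivity) hD0.le),
        ← ENNReal.rpow_natCast _ 2, ← ENNReal.rpow_mul]
      norm_num
    calc ENNReal.ofReal (A t * A t)
        = (∫⁻ x, p x * q x ∂μ) ^ 2 := by
          rw [ENNReal.ofReal_mul (hAnn t), hAeq, lintegral_congr_ae hpq, sq]
      _ ≤ (∫⁻ x, p x ^ 2 ∂μ) * (∫⁻ x, q x ^ 2 ∂μ) := crt_cs2 μ p q hpm hqm
      _ = _ := by
          congr 1 <;> exact lintegral_congr fun x => hsq _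
  set ν : Measure X := μ.withDensity (fun x => ENNReal.ofReal (ω x ^ (-(1:ℝ)/2) * ‖f x‖ ^ 2))
    with hν
  have hψm : Measurable fun x => ENNReal.ofReal (ω x ^ (-(1:ℝ)/2) * ‖f x‖ ^ 2) :=
    ((hω.pow measurable_const).mul (hf.norm.pow measurable_const)).ennreal_ofReal
  have hνuniv : ν Set.univ = ∫⁻ x, ENNReal.ofReal (ω x ^ (-(1:ℝ)/2) * ‖f x‖ ^ 2) ∂μ := by
    rw [hν, withDensity_apply _ MeasurableSet.univ, setLIntegral_univ]
  haveI hνfin : IsFiniteMeasure ν := ⟨by rw [hνuniv]; exact hint⟩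
  have hgm : ∀ t : ℝ, Measurable fun x =>
      ENNReal.ofReal ((ω x) ^ 3 * (((ω x) ^ 2 + t ^ 2) ^ 2)⁻¹) := fun t =>
    ((hω.pow measurable_const).mul
      ((((hω.pow measurable_const).add measurable_const).pow measurable_const).inv)).ennreal_ofReal
  have hω1' : ∀ᵐ x ∂ν, 1 ≤ ω x :=
    Filter.Eventually.filter_mono ((withDensity_absolutelyContinuous μ _).ae_le) hω1
  have hrw : ∀ t : ℝ, (∫⁻ x, ENNReal.ofReal
        (ω x ^ ((5:ℝ)/2) * ‖f x‖ ^ 2 * (((ω x) ^ 2 + t ^ 2) ^ 2)⁻¹) ∂μ)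
      = ∫⁻ x, ENNReal.ofReal ((ω x) ^ 3 * (((ω x) ^ 2 + t ^ 2) ^ 2)⁻¹) ∂ν := by
    intro t
    rw [hν, lintegral_withDensity_eq_lintegral_mul μ hψm (hgm t)]
    apply lintegral_congr_ae
    filter_upwards [hω1] with x hx
    have ha0 : (0:ℝ) < ω x := lt_of_lt_of_le one_pos hx
    simp only [Pi.mul_apply]
    rw [← ENNReal.ofReal_mul (by positivity)]
    congr 1
    have e1 : ω x ^ (-(1:ℝ)/2) * (ω x) ^ (3:ℕ) = ω x ^ ((5:ℝ)/2) := by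
      rw [← Real.rpow_natCast (ω x) 3, ← Real.rpow_add ha0]; norm_num
    linear_combination (-(‖f x‖ ^ 2 * (((ω x) ^ 2 + t ^ 2) ^ 2)⁻¹)) * e1
  have swap : (∫⁻ t in Set.Ioi (0:ℝ), ∫⁻ x,
        ENNReal.ofReal ((ω x) ^ 3 * (((ω x) ^ 2 + t ^ 2) ^ 2)⁻¹) ∂ν)
      = ∫⁻ x, (∫⁻ t in Set.Ioi (0:ℝ),
        ENNReal.ofReal ((ω x) ^ 3 * (((ω x) ^ 2 + t ^ 2) ^ 2)⁻¹)) ∂ν := by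
    have hmeas : Measurable (Function.uncurry fun (t : ℝ) (x : X) =>
        ENNReal.ofReal ((ω x) ^ 3 * (((ω x) ^ 2 + t ^ 2) ^ 2)⁻¹)) := by
      unfold Function.uncurry
      exact Measurable.ennreal_ofReal <|
        ((hω.comp measurable_snd).pow measurable_const).mul
        (((((hω.comp measurable_snd).pow measurable_const).add
          (measurable_fst.pow measurable_const)).pow measurable_const).inv)
    exact lintegral_lintegral_swap (μ := volume.restrict (Set.Ioi 0)) (ν := ν) hmeas.aemeasurable
  have inner : ∀ᵐ x ∂ν, (∫⁻ t in Set.Ioi (0:ℝ),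
      ENNReal.ofReal ((ω x) ^ 3 * (((ω x) ^ 2 + t ^ 2) ^ 2)⁻¹)) ≤ ENNReal.ofReal (4/3) := by
    filter_upwards [hω1'] with x hx
    have ha0 : (0:ℝ) < ω x := lt_of_lt_of_le one_pos hx
    calc (∫⁻ t in Set.Ioi (0:ℝ), ENNReal.ofReal ((ω x) ^ 3 * (((ω x) ^ 2 + t ^ 2) ^ 2)⁻¹))
        = ∫⁻ t in Set.Ioi (0:ℝ), ENNReal.ofReal ((ω x) ^ 3) *
            ENNReal.ofReal ((((ω x) ^ 2 + t ^ 2) ^ 2)⁻¹) := by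
          apply lintegral_congr
          intro t
          rw [← ENNReal.ofReal_mul (by positivity)]
      _ = ENNReal.ofReal ((ω x) ^ 3) *
            ∫⁻ t in Set.Ioi (0:ℝ), ENNReal.ofReal ((((ω x) ^ 2 + t ^ 2) ^ 2)⁻¹) :=
          lintegral_const_mul' _ _ ENNReal.ofReal_ne_top
      _ ≤ ENNReal.ofReal ((ω x) ^ 3) * ENNReal.ofReal ((4/3) * ((ω x) ^ 3)⁻¹) :=
          mul_le_mul_right (crt_Kbound hx) _
      _ = ENNReal.ofReal (4/3) := by
          rw [← ENNReal.ofReal_mul (by positivity)]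
          congr 1
          have hne : ω x ≠ 0 := ne_of_gt ha0
          field_simp
  calc (∫⁻ t in Set.Ioi (0:ℝ), ENNReal.ofReal (A t * A t))
      ≤ ∫⁻ t in Set.Ioi (0:ℝ), (∫⁻ x, ENNReal.ofReal (ω x ^ (-(1:ℝ)/2) * ‖f x‖ ^ 2) ∂μ) *
          ∫⁻ x, ENNReal.ofReal (ω x ^ ((5:ℝ)/2) * ‖f x‖ ^ 2 * (((ω x) ^ 2 + t ^ 2) ^ 2)⁻¹) ∂μ :=
        lintegral_mono fun t => key t
    _ = (∫⁻ x, ENNReal.ofReal (ω x ^ (-(1:ℝ)/2) * ‖f x‖ ^ 2) ∂μ) *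
          ∫⁻ t in Set.Ioi (0:ℝ), ∫⁻ x,
            ENNReal.ofReal (ω x ^ ((5:ℝ)/2) * ‖f x‖ ^ 2 * (((ω x) ^ 2 + t ^ 2) ^ 2)⁻¹) ∂μ :=
        lintegral_const_mul' _ _ hMfin
    _ = (∫⁻ x, ENNReal.ofReal (ω x ^ (-(1:ℝ)/2) * ‖f x‖ ^ 2) ∂μ) *
          ∫⁻ x, (∫⁻ t in Set.Ioi (0:ℝ),
            ENNReal.ofReal ((ω x) ^ 3 * (((ω x) ^ 2 + t ^ 2) ^ 2)⁻¹)) ∂ν := by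
        rw [lintegral_congr fun t => hrw t, swap]
    _ ≤ (∫⁻ x, ENNReal.ofReal (ω x ^ (-(1:ℝ)/2) * ‖f x‖ ^ 2) ∂μ) *
          ∫⁻ _, ENNReal.ofReal (4/3) ∂ν := mul_le_mul_right (lintegral_mono_ae inner) _
    _ < ⊤ := by
        rw [lintegral_const, hνuniv]
        exact ENNReal.mul_lt_top hint (ENNReal.mul_lt_top ENNReal.ofReal_lt_top hint)

end CRT


/-- Convergence of the regularized traces (Proposition 5.1): with cutoffs
`f_n = 1_{ω ≤ n} f`, `G₁(g,t) = ∫ ω|g|²/(ω²+t²) dμ`, `G₂(g,t) = ∫ ω|g|²/(ω²+t²)² dμ`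
and `I(g) = ∫₀^∞ t² G₂(g,t) G₁(g,t)/(1 + 4λG₁(g,t)) dt`, if `ω ≥ 1` a.e. and
`∫ ω^{-1/2}|f|² dμ < ∞`, then `I(f_n) → I(f)`. -/
theorem convergence_regularized_trace
    {X : Type*} [MeasurableSpace X] (μ : Measure X)
    (ω : X → ℝ) (hω : Measurable ω) (hω1 : ∀ᵐ x ∂μ, 1 ≤ ω x)
    (f : X → ℂ) (hf : Measurable f)
    (hint : ∫⁻ x, ENNReal.ofReal (ω x ^ (-(1:ℝ)/2) * ‖f x‖ ^ 2) ∂μ < ⊤)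
    (lam : ℝ) (hlam : 0 ≤ lam)
    (G₁ G₂ : (X → ℂ) → ℝ → ℝ) (I : (X → ℂ) → ℝ)
    (hG₁ : ∀ g t, G₁ g t = ∫ x, ω x * ‖g x‖ ^ 2 / ((ω x) ^ 2 + t ^ 2) ∂μ)
    (hG₂ : ∀ g t, G₂ g t = ∫ x, ω x * ‖g x‖ ^ 2 / ((ω x) ^ 2 + t ^ 2) ^ 2 ∂μ)
    (hI : ∀ g, I g = ∫ t in Set.Ioi (0:ℝ),
        t ^ 2 * G₂ g t * G₁ g t / (1 + 4 * lam * G₁ g t)) :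
    Filter.Tendsto (fun n : ℕ => I ({x | ω x ≤ (n : ℝ)}.indicator f))
      Filter.atTop (nhds (I f)) := by
  classical
  set fn : ℕ → X → ℂ := fun n => ({x | ω x ≤ (n : ℝ)}.indicator f) with hfn
  have hfn_meas : ∀ n, Measurable (fn n) := fun n =>
    hf.indicator (hω measurableSet_Iic)
  have hfn_le : ∀ n x, ‖fn n x‖ ≤ ‖f x‖ := fun n x =>
    norm_indicator_le_norm_self f x
  have hffle : ∀ x, ‖f x‖ ≤ ‖f x‖ := fun x => le_rfl
  have hg1nn : ∀ (g : X → ℂ), ∀ t : ℝ,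
      0 ≤ ∫ x, ω x * ‖g x‖ ^ 2 / ((ω x) ^ 2 + t ^ 2) ∂μ := by
    intro g t
    apply integral_nonneg_of_ae
    filter_upwards [hω1] with x hx
    exact (crt_ptwise hx (sq_nonneg ‖g x‖) le_rfl (t := t)).1
  have hg2nn : ∀ (g : X → ℂ), ∀ t : ℝ,
      0 ≤ ∫ x, ω x * ‖g x‖ ^ 2 / ((ω x) ^ 2 + t ^ 2) ^ 2 ∂μ := by
    intro g t
    apply integral_nonneg_of_ae
    filter_upwards [hω1] with x hx
    exact (crt_ptwise hx (sq_nonneg ‖g x‖) le_rfl (t := t)).2.2.1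
  have hg1mono : ∀ n (t : ℝ),
      (∫ x, ω x * ‖fn n x‖ ^ 2 / ((ω x) ^ 2 + t ^ 2) ∂μ)
        ≤ ∫ x, ω x * ‖f x‖ ^ 2 / ((ω x) ^ 2 + t ^ 2) ∂μ := by
    intro n t
    apply integral_mono_ae (crt_F1_int hω hf hω1 hint (hfn_meas n) (hfn_le n) t)
      (crt_F1_int hω hf hω1 hint hf hffle t)
    filter_upwards [hω1] with x hx
    have ha0 : (0:ℝ) < ω x := lt_of_lt_of_le one_pos hx
    have hD0 : (0:ℝ) < (ω x) ^ 2 + t ^ 2 := by positivity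
    exact div_le_div_of_nonneg_right (mul_le_mul_of_nonneg_left
      (pow_le_pow_left₀ (norm_nonneg _) (hfn_le n x) 2) ha0.le) hD0.le
  have hg2mono : ∀ n (t : ℝ),
      (∫ x, ω x * ‖fn n x‖ ^ 2 / ((ω x) ^ 2 + t ^ 2) ^ 2 ∂μ)
        ≤ ∫ x, ω x * ‖f x‖ ^ 2 / ((ω x) ^ 2 + t ^ 2) ^ 2 ∂μ := by
    intro n t
    apply integral_mono_ae (crt_F2_int hω hf hω1 hint (hfn_meas n) (hfn_le n) t)
      (crt_F2_int hω hf hω1 hint hf hffle t)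
    filter_upwards [hω1] with x hx
    have ha0 : (0:ℝ) < ω x := lt_of_lt_of_le one_pos hx
    have hD0 : (0:ℝ) < ((ω x) ^ 2 + t ^ 2) ^ 2 := by positivity
    exact div_le_div_of_nonneg_right (mul_le_mul_of_nonneg_left
      (pow_le_pow_left₀ (norm_nonneg _) (hfn_le n x) 2) ha0.le) hD0.le
  have hg21 : ∀ (t : ℝ),
      t ^ 2 * ∫ x, ω x * ‖f x‖ ^ 2 / ((ω x) ^ 2 + t ^ 2) ^ 2 ∂μ
        ≤ ∫ x, ω x * ‖f x‖ ^ 2 / ((ω x) ^ 2 + t ^ 2) ∂μ := by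
    intro t
    rw [← integral_const_mul]
    apply integral_mono_ae ((crt_F2_int hω hf hω1 hint hf hffle t).const_mul _)
      (crt_F1_int hω hf hω1 hint hf hffle t)
    filter_upwards [hω1] with x hx
    exact (crt_ptwise hx (sq_nonneg ‖f x‖) le_rfl (t := t)).2.2.2.2
  -- continuity, hence measurability in t
  have hHcont : ∀ (g : X → ℂ), Measurable g → (∀ x, ‖g x‖ ≤ ‖f x‖) →
      Continuous (fun t : ℝ =>
        t ^ 2 * (∫ x, ω x * ‖g x‖ ^ 2 / ((ω x) ^ 2 + t ^ 2) ^ 2 ∂μ) *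
          (∫ x, ω x * ‖g x‖ ^ 2 / ((ω x) ^ 2 + t ^ 2) ∂μ) /
        (1 + 4 * lam * ∫ x, ω x * ‖g x‖ ^ 2 / ((ω x) ^ 2 + t ^ 2) ∂μ)) := by
    intro g hg hle
    have h1 := crt_G1_cont hω hf hω1 hint hg hle
    have h2 := crt_G2_cont hω hf hω1 hint hg hle
    apply Continuous.div
    · exact ((continuous_pow 2).mul h2).mul h1
    · exact continuous_const.add (continuous_const.mul h1)
    · intro t
      have := mul_nonneg (mul_nonneg (by norm_num : (0:ℝ) ≤ 4) hlam) (hg1nn g t)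
      linarith
  -- rewrite the goal
  simp only [hI, hG₁, hG₂]
  apply tendsto_integral_filter_of_dominated_convergence
    (bound := fun t => (∫ x, ω x * ‖f x‖ ^ 2 / ((ω x) ^ 2 + t ^ 2) ∂μ) *
      (∫ x, ω x * ‖f x‖ ^ 2 / ((ω x) ^ 2 + t ^ 2) ∂μ))
  · -- measurability of each n
    apply Filter.Eventually.of_forall
    intro n
    exact ((hHcont (fn n) (hfn_meas n) (hfn_le n)).aestronglyMeasurable).restrict
  · -- bound
    apply Filter.Eventually.of_forall
    intro n
    apply Filter.Eventually.of_forall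
    intro t
    have hu : (0:ℝ) ≤ ∫ x, ω x * ‖fn n x‖ ^ 2 / ((ω x) ^ 2 + t ^ 2) ∂μ := hg1nn _ t
    have hv : (0:ℝ) ≤ ∫ x, ω x * ‖fn n x‖ ^ 2 / ((ω x) ^ 2 + t ^ 2) ^ 2 ∂μ := hg2nn _ t
    have hU : (0:ℝ) ≤ ∫ x, ω x * ‖f x‖ ^ 2 / ((ω x) ^ 2 + t ^ 2) ∂μ := hg1nn f t
    have hnum : (0:ℝ) ≤ t ^ 2 * (∫ x, ω x * ‖fn n x‖ ^ 2 / ((ω x) ^ 2 + t ^ 2) ^ 2 ∂μ) *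
        (∫ x, ω x * ‖fn n x‖ ^ 2 / ((ω x) ^ 2 + t ^ 2) ∂μ) :=
      mul_nonneg (mul_nonneg (sq_nonneg t) hv) hu
    have hden : (1:ℝ) ≤ 1 + 4 * lam * ∫ x, ω x * ‖fn n x‖ ^ 2 / ((ω x) ^ 2 + t ^ 2) ∂μ := by
      have := mul_nonneg (mul_nonneg (by norm_num : (0:ℝ) ≤ 4) hlam) hu
      linarith
    rw [Real.norm_eq_abs, abs_of_nonneg (div_nonneg hnum (by linarith))]
    calc t ^ 2 * (∫ x, ω x * ‖fn n x‖ ^ 2 / ((ω x) ^ 2 + t ^ 2) ^ 2 ∂μ) *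
          (∫ x, ω x * ‖fn n x‖ ^ 2 / ((ω x) ^ 2 + t ^ 2) ∂μ) /
        (1 + 4 * lam * ∫ x, ω x * ‖fn n x‖ ^ 2 / ((ω x) ^ 2 + t ^ 2) ∂μ)
        ≤ t ^ 2 * (∫ x, ω x * ‖fn n x‖ ^ 2 / ((ω x) ^ 2 + t ^ 2) ^ 2 ∂μ) *
          (∫ x, ω x * ‖fn n x‖ ^ 2 / ((ω x) ^ 2 + t ^ 2) ∂μ) := div_le_self hnum hden
      _ ≤ (∫ x, ω x * ‖f x‖ ^ 2 / ((ω x) ^ 2 + t ^ 2) ∂μ) *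
          (∫ x, ω x * ‖f x‖ ^ 2 / ((ω x) ^ 2 + t ^ 2) ∂μ) := by
          apply mul_le_mul _ (hg1mono n t) hu hU
          calc t ^ 2 * (∫ x, ω x * ‖fn n x‖ ^ 2 / ((ω x) ^ 2 + t ^ 2) ^ 2 ∂μ)
              ≤ t ^ 2 * (∫ x, ω x * ‖f x‖ ^ 2 / ((ω x) ^ 2 + t ^ 2) ^ 2 ∂μ) :=
                mul_le_mul_of_nonneg_left (hg2mono n t) (sq_nonneg t)
            _ ≤ _ := hg21 t
  · -- bound integrable
    exact crt_bound_int hω hf hω1 hint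
  · -- pointwise convergence
    apply Filter.Eventually.of_forall
    intro t
    have hconv1 : Filter.Tendsto (fun n => ∫ x, ω x * ‖fn n x‖ ^ 2 / ((ω x) ^ 2 + t ^ 2) ∂μ)
        Filter.atTop (nhds (∫ x, ω x * ‖f x‖ ^ 2 / ((ω x) ^ 2 + t ^ 2) ∂μ)) := by
      apply tendsto_integral_of_dominated_convergence
        (bound := fun x => ω x ^ (-(1:ℝ)/2) * ‖f x‖ ^ 2)
      · exact fun n => (crt_measF1 hω (hfn_meas n) t).aestronglyMeasurable
      · exact crt_dom_int hω hf hω1 hint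
      · intro n
        filter_upwards [hω1] with x hx
        obtain ⟨h1, h2, -, -, -⟩ := crt_ptwise hx (sq_nonneg ‖fn n x‖)
          (pow_le_pow_left₀ (norm_nonneg _) (hfn_le n x) 2) (t := t)
        rw [Real.norm_eq_abs, abs_of_nonneg h1]
        exact h2
      · apply Filter.Eventually.of_forall
        intro x
        obtain ⟨N, hN⟩ := exists_nat_ge (ω x)
        apply Filter.Tendsto.congr' ?_ tendsto_const_nhds
        rw [Filter.eventuallyEq_iff_exists_mem]
        refine ⟨Set.Ici N, Filter.mem_atTop N, fun n hn => ?_⟩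
        have hmem : x ∈ {x | ω x ≤ (n : ℝ)} :=
          le_trans hN (Nat.cast_le.2 hn)
        rw [hfn]
        simp only [Set.indicator_of_mem hmem]
    have hconv2 : Filter.Tendsto
        (fun n => ∫ x, ω x * ‖fn n x‖ ^ 2 / ((ω x) ^ 2 + t ^ 2) ^ 2 ∂μ)
        Filter.atTop (nhds (∫ x, ω x * ‖f x‖ ^ 2 / ((ω x) ^ 2 + t ^ 2) ^ 2 ∂μ)) := by
      apply tendsto_integral_of_dominated_convergence
        (bound := fun x => ω x ^ (-(1:ℝ)/2) * ‖f x‖ ^ 2)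
      · exact fun n => (crt_measF2 hω (hfn_meas n) t).aestronglyMeasurable
      · exact crt_dom_int hω hf hω1 hint
      · intro n
        filter_upwards [hω1] with x hx
        obtain ⟨-, -, h3, h4, -⟩ := crt_ptwise hx (sq_nonneg ‖fn n x‖)
          (pow_le_pow_left₀ (norm_nonneg _) (hfn_le n x) 2) (t := t)
        rw [Real.norm_eq_abs, abs_of_nonneg h3]
        exact h4
      · apply Filter.Eventually.of_forall
        intro x
        obtain ⟨N, hN⟩ := exists_nat_ge (ω x)
        apply Filter.Tendsto.congr' ?_ tendsto_const_nhds
        rw [Filter.eventuallyEq_iff_exists_mem]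
        refine ⟨Set.Ici N, Filter.mem_atTop N, fun n hn => ?_⟩
        have hmem : x ∈ {x | ω x ≤ (n : ℝ)} :=
          le_trans hN (Nat.cast_le.2 hn)
        rw [hfn]
        simp only [Set.indicator_of_mem hmem]
    have hden_ne : (1 + 4 * lam * ∫ x, ω x * ‖f x‖ ^ 2 / ((ω x) ^ 2 + t ^ 2) ∂μ) ≠ 0 := by
      have := mul_nonneg (mul_nonneg (by norm_num : (0:ℝ) ≤ 4) hlam) (hg1nn f t)
      intro h
      linarith
    exact Filter.Tendsto.div ((tendsto_const_nhds.mul hconv2).mul hconv1)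
      (tendsto_const_nhds.add (tendsto_const_nhds.mul hconv1)) hden_ne
end

section
/- Let (X, μ) be a measure space, ω : X → ℝ measurable with ω(x) ≥ 1 for μ-a.e. x, and f : X → ℂ measurable with ∫_X |f|² dμ < ∞ and ∫_X (2 + ln ω)⁴|f|² dμ < ∞. Then ∫₀^∞ t² · (∫_X ω²|f|²/(ω² + t²)² dμ)^{1/2} · (∫_X |f|²/(ω² + t²)² dμ)^{1/2} dt < ∞. -/
open MeasureTheory
open scoped ENNReal

lemma my_sqrt_add_le {u v : ℝ} (hu : 0 ≤ u) (hv : 0 ≤ v) :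
    Real.sqrt (u + v) ≤ Real.sqrt u + Real.sqrt v := by
  have h := Real.sqrt_le_sqrt (show u + v ≤ (Real.sqrt u + Real.sqrt v) ^ 2 by
    nlinarith [Real.sq_sqrt hu, Real.sq_sqrt hv, Real.sqrt_nonneg u, Real.sqrt_nonneg v])
  rwa [Real.sqrt_sq (by positivity)] at h

lemma my_integral_le_toReal {X : Type*} [MeasurableSpace X] (μ : Measure X) {g h : X → ℝ}
    (hg : Measurable g) (h0 : ∀ᵐ x ∂μ, 0 ≤ g x) (hgh : ∀ᵐ x ∂μ, g x ≤ h x)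
    (hfin : ∫⁻ x, ENNReal.ofReal (h x) ∂μ ≠ ⊤) :
    ∫ x, g x ∂μ ≤ (∫⁻ x, ENNReal.ofReal (h x) ∂μ).toReal := by
  rw [integral_eq_lintegral_of_nonneg_ae h0 hg.aestronglyMeasurable]
  exact ENNReal.toReal_mono hfin
    (lintegral_mono_ae (hgh.mono fun x hx => ENNReal.ofReal_le_ofReal hx))

lemma my_intOn_log : IntegrableOn (fun t : ℝ => (t * (2 + Real.log t / 2) ^ 2)⁻¹)
    (Set.Ioi 1) := by
  have hpos : ∀ x : ℝ, 1 ≤ x → 0 < 2 + Real.log x / 2 := by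
    intro x hx
    have := Real.log_nonneg hx
    linarith
  have hderiv : ∀ x ∈ Set.Ici (1:ℝ), HasDerivAt (fun t : ℝ => -2 * (2 + Real.log t / 2)⁻¹)
      ((x * (2 + Real.log x / 2) ^ 2)⁻¹) x := by
    intro x hx
    have hx0 : (0:ℝ) < x := lt_of_lt_of_le one_pos hx
    have hL : 0 < 2 + Real.log x / 2 := hpos x hx
    have h1 : HasDerivAt (fun t : ℝ => 2 + Real.log t / 2) (x⁻¹ / 2) x :=
      ((Real.hasDerivAt_log hx0.ne').div_const 2).const_add 2
    have h2 := (h1.inv hL.ne').const_mul (-2 : ℝ)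
    refine h2.congr_deriv ?_
    rw [mul_inv]
    ring
  have hnn : ∀ x ∈ Set.Ioi (1:ℝ), 0 ≤ (x * (2 + Real.log x / 2) ^ 2)⁻¹ := by
    intro x hx
    exact inv_nonneg.2 (mul_pos (lt_trans one_pos hx) (pow_pos (hpos x hx.le) 2)).le
  have htend : Filter.Tendsto (fun t : ℝ => -2 * (2 + Real.log t / 2)⁻¹)
      Filter.atTop (nhds 0) := by
    have h1 : Filter.Tendsto (fun t : ℝ => 2 + Real.log t / 2) Filter.atTop Filter.atTop :=
      Filter.tendsto_atTop_add_const_left _ _ (Real.tendsto_log_atTop.atTop_div_const two_pos)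
    have := h1.inv_tendsto_atTop.const_mul (-2 : ℝ)
    simpa using this
  exact integrableOn_Ioi_deriv_of_nonneg' hderiv hnn htend

lemma my_lintegral_lt_top_of_integrableOn {s : Set ℝ} {g : ℝ → ℝ} (h : IntegrableOn g s) :
    ∫⁻ t in s, ENNReal.ofReal (g t) < ⊤ := by
  refine lt_of_le_of_lt (lintegral_mono fun t => ?_) h.2
  exact Real.ofReal_le_enorm (g t)

/-- trivial bound for the first inner integrand -/
lemma my_ptwise_small_a {w t F : ℝ} (hw : 1 ≤ w) (hF : 0 ≤ F) :
    w ^ 2 * F / (w ^ 2 + t ^ 2) ^ 2 ≤ F := by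
  have hw0 : (0:ℝ) < w := lt_of_lt_of_le one_pos hw
  have h1 : w ^ 2 ≤ (w ^ 2 + t ^ 2) ^ 2 := by
    have ha : 1 ≤ w ^ 2 := by nlinarith
    have hb' : w ^ 2 ≤ (w ^ 2) ^ 2 := by nlinarith
    have hc : (w ^ 2) ^ 2 ≤ (w ^ 2 + t ^ 2) ^ 2 := by
      nlinarith [sq_nonneg (w * t), sq_nonneg (t ^ 2)]
    linarith
  rw [div_le_iff₀ (by positivity)]
  calc w ^ 2 * F = F * w ^ 2 := by ring
    _ ≤ F * (w ^ 2 + t ^ 2) ^ 2 := mul_le_mul_of_nonneg_left h1 hF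

/-- trivial bound for the second inner integrand -/
lemma my_ptwise_small_b {w t F : ℝ} (hw : 1 ≤ w) (hF : 0 ≤ F) :
    F / (w ^ 2 + t ^ 2) ^ 2 ≤ F := by
  have hw0 : (0:ℝ) < w := lt_of_lt_of_le one_pos hw
  have h1 : (1:ℝ) ≤ (w ^ 2 + t ^ 2) ^ 2 := by
    have ha : 1 ≤ w ^ 2 := by nlinarith
    have hb' : (w ^ 2) ^ 2 ≤ (w ^ 2 + t ^ 2) ^ 2 := by
      nlinarith [sq_nonneg (w * t), sq_nonneg (t ^ 2)]
    nlinarith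
  rw [div_le_iff₀ (by positivity)]
  calc F = F * 1 := by ring
    _ ≤ F * (w ^ 2 + t ^ 2) ^ 2 := mul_le_mul_of_nonneg_left h1 hF

/-- key pointwise bound for the first inner integrand on `t > 1` -/
lemma my_ptwise_a {w t F : ℝ} (hw : 1 ≤ w) (ht : 1 < t) (hF : 0 ≤ F) :
    w ^ 2 * F / (w ^ 2 + t ^ 2) ^ 2
      ≤ 1 / t ^ 3 * F
        + 1 / (t ^ 2 * (2 + Real.log t / 2) ^ 4) * ((2 + Real.log w) ^ 4 * F) := by
  have ht0 : (0:ℝ) < t := lt_trans one_pos ht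
  have hw0 : (0:ℝ) < w := lt_of_lt_of_le one_pos hw
  have hlogt : 0 ≤ Real.log t := Real.log_nonneg ht.le
  have hlogw : 0 ≤ Real.log w := Real.log_nonneg hw
  have hL : (0:ℝ) < 2 + Real.log t / 2 := by linarith
  rcases le_or_gt (w ^ 2) t with hcase | hcase
  · -- small ω
    have hfrac : w ^ 2 / (w ^ 2 + t ^ 2) ^ 2 ≤ 1 / t ^ 3 := by
      rw [div_le_div_iff₀ (by positivity) (by positivity)]
      nlinarith [sq_nonneg w, sq_nonneg (w * t), mul_le_mul_of_nonneg_right hcase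
        (by positivity : (0:ℝ) ≤ t ^ 3), sq_nonneg (w ^ 2)]
    have h1 : w ^ 2 * F / (w ^ 2 + t ^ 2) ^ 2 ≤ 1 / t ^ 3 * F := by
      calc w ^ 2 * F / (w ^ 2 + t ^ 2) ^ 2 = w ^ 2 / (w ^ 2 + t ^ 2) ^ 2 * F := by ring
        _ ≤ 1 / t ^ 3 * F := mul_le_mul_of_nonneg_right hfrac hF
    have h2 : (0:ℝ) ≤ 1 / (t ^ 2 * (2 + Real.log t / 2) ^ 4) * ((2 + Real.log w) ^ 4 * F) :=
      mul_nonneg (by positivity) (mul_nonneg (by positivity) hF)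
    linarith
  · -- large ω
    have hLle : 2 + Real.log t / 2 ≤ 2 + Real.log w := by
      have h2w : Real.log t ≤ Real.log (w ^ 2) := Real.log_le_log ht0 hcase.le
      rw [Real.log_pow] at h2w
      push_cast at h2w
      linarith
    have h6 : (2 + Real.log t / 2) ^ 4 ≤ (2 + Real.log w) ^ 4 :=
      pow_le_pow_left₀ hL.le hLle 4
    have hfrac : w ^ 2 / (w ^ 2 + t ^ 2) ^ 2 ≤ 1 / t ^ 2 := by
      rw [div_le_div_iff₀ (by positivity) (by positivity)]
      nlinarith [sq_nonneg (w ^ 2 - t ^ 2), mul_nonneg (sq_nonneg w) (sq_nonneg t)]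
    have h1 : w ^ 2 * F / (w ^ 2 + t ^ 2) ^ 2 ≤ 1 / t ^ 2 * F := by
      calc w ^ 2 * F / (w ^ 2 + t ^ 2) ^ 2 = w ^ 2 / (w ^ 2 + t ^ 2) ^ 2 * F := by ring
        _ ≤ 1 / t ^ 2 * F := mul_le_mul_of_nonneg_right hfrac hF
    have heq : 1 / t ^ 2 * F = 1 / (t ^ 2 * (2 + Real.log t / 2) ^ 4) *
        ((2 + Real.log t / 2) ^ 4 * F) := by
      field_simp
    have h2 : 1 / t ^ 2 * F
        ≤ 1 / (t ^ 2 * (2 + Real.log t / 2) ^ 4) * ((2 + Real.log w) ^ 4 * F) := by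
      rw [heq]
      exact mul_le_mul_of_nonneg_left (mul_le_mul_of_nonneg_right h6 hF) (by positivity)
    have h3 : (0:ℝ) ≤ 1 / t ^ 3 * F := mul_nonneg (by positivity) hF
    linarith

/-- key pointwise bound for the second inner integrand on `t > 0` -/
lemma my_ptwise_b {w t F : ℝ} (ht : 0 < t) (hF : 0 ≤ F) :
    F / (w ^ 2 + t ^ 2) ^ 2 ≤ 1 / t ^ 4 * F := by
  have hpos : (0:ℝ) < w ^ 2 + t ^ 2 := by positivity
  have hfrac : 1 / (w ^ 2 + t ^ 2) ^ 2 ≤ 1 / t ^ 4 := by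
    rw [div_le_div_iff₀ (by positivity) (by positivity)]
    nlinarith [sq_nonneg (w ^ 2), sq_nonneg (w * t)]
  calc F / (w ^ 2 + t ^ 2) ^ 2 = 1 / (w ^ 2 + t ^ 2) ^ 2 * F := by ring
    _ ≤ 1 / t ^ 4 * F := mul_le_mul_of_nonneg_right hfrac hF

open MeasureTheory

/-- Finiteness of `∫₀^∞ t² ‖ω(ω²+t²)⁻¹f‖ ‖(ω²+t²)⁻¹f‖ dt` under the logarithmic
regularity assumption `∫ (2 + ln ω)⁴|f|² dμ < ∞` (i.e. `ln(ω)²f ∈ L²`). -/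
theorem log_regularity_integral_finite
    {X : Type*} [MeasurableSpace X] (μ : Measure X)
    (ω : X → ℝ) (hω : Measurable ω) (hω1 : ∀ᵐ x ∂μ, 1 ≤ ω x)
    (f : X → ℂ) (hf : Measurable f)
    (h1 : ∫⁻ x, ENNReal.ofReal (‖f x‖ ^ 2) ∂μ < ⊤)
    (h2 : ∫⁻ x, ENNReal.ofReal ((2 + Real.log (ω x)) ^ 4 * ‖f x‖ ^ 2) ∂μ < ⊤) :
    ∫⁻ t in Set.Ioi (0:ℝ), ENNReal.ofReal
        (t ^ 2 * Real.sqrt (∫ x, (ω x) ^ 2 * ‖f x‖ ^ 2 / ((ω x) ^ 2 + t ^ 2) ^ 2 ∂μ) *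
          Real.sqrt (∫ x, ‖f x‖ ^ 2 / ((ω x) ^ 2 + t ^ 2) ^ 2 ∂μ)) < ⊤ := by
  set I1 : ℝ≥0∞ := ∫⁻ x, ENNReal.ofReal (‖f x‖ ^ 2) ∂μ with hI1
  set I2 : ℝ≥0∞ := ∫⁻ x, ENNReal.ofReal ((2 + Real.log (ω x)) ^ 4 * ‖f x‖ ^ 2) ∂μ with hI2
  set m1 : ℝ := I1.toReal with hm1
  set m2 : ℝ := I2.toReal with hm2
  have hm1nn : 0 ≤ m1 := ENNReal.toReal_nonneg
  have hm2nn : 0 ≤ m2 := ENNReal.toReal_nonneg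
  have hFmeas : Measurable (fun x => ‖f x‖ ^ 2) := (hf.norm).pow_const 2
  have haMeas : ∀ t : ℝ, Measurable
      (fun x => (ω x) ^ 2 * ‖f x‖ ^ 2 / ((ω x) ^ 2 + t ^ 2) ^ 2) := fun t =>
    ((hω.pow_const 2).mul hFmeas).div (((hω.pow_const 2).add_const (t ^ 2)).pow_const 2)
  have hbMeas : ∀ t : ℝ, Measurable
      (fun x => ‖f x‖ ^ 2 / ((ω x) ^ 2 + t ^ 2) ^ 2) := fun t =>
    hFmeas.div (((hω.pow_const 2).add_const (t ^ 2)).pow_const 2)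
  have haNN : ∀ t : ℝ, ∀ᵐ x ∂μ, 0 ≤ (ω x) ^ 2 * ‖f x‖ ^ 2 / ((ω x) ^ 2 + t ^ 2) ^ 2 :=
    fun t => Filter.Eventually.of_forall fun x => by positivity
  have hbNN : ∀ t : ℝ, ∀ᵐ x ∂μ, 0 ≤ ‖f x‖ ^ 2 / ((ω x) ^ 2 + t ^ 2) ^ 2 :=
    fun t => Filter.Eventually.of_forall fun x => by positivity
  -- split the outer integral
  rw [← Set.Ioc_union_Ioi_eq_Ioi (zero_le_one (α := ℝ)),
    lintegral_union measurableSet_Ioi Set.Ioc_disjoint_Ioi_same]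
  have piece1 : ∫⁻ t in Set.Ioc (0:ℝ) 1, ENNReal.ofReal
      (t ^ 2 * Real.sqrt (∫ x, (ω x) ^ 2 * ‖f x‖ ^ 2 / ((ω x) ^ 2 + t ^ 2) ^ 2 ∂μ) *
        Real.sqrt (∫ x, ‖f x‖ ^ 2 / ((ω x) ^ 2 + t ^ 2) ^ 2 ∂μ)) < ⊤ := by
    have hb : ∀ t ∈ Set.Ioc (0:ℝ) 1, ENNReal.ofReal
        (t ^ 2 * Real.sqrt (∫ x, (ω x) ^ 2 * ‖f x‖ ^ 2 / ((ω x) ^ 2 + t ^ 2) ^ 2 ∂μ) *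
          Real.sqrt (∫ x, ‖f x‖ ^ 2 / ((ω x) ^ 2 + t ^ 2) ^ 2 ∂μ)) ≤ ENNReal.ofReal m1 := by
      intro t ht
      apply ENNReal.ofReal_le_ofReal
      have hIa : ∫ x, (ω x) ^ 2 * ‖f x‖ ^ 2 / ((ω x) ^ 2 + t ^ 2) ^ 2 ∂μ ≤ m1 := by
        apply my_integral_le_toReal μ (haMeas t) (haNN t) _ h1.ne
        filter_upwards [hω1] with x hx
        exact my_ptwise_small_a hx (sq_nonneg _)
      have hIb : ∫ x, ‖f x‖ ^ 2 / ((ω x) ^ 2 + t ^ 2) ^ 2 ∂μ ≤ m1 := by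
        apply my_integral_le_toReal μ (hbMeas t) (hbNN t) _ h1.ne
        filter_upwards [hω1] with x hx
        exact my_ptwise_small_b hx (sq_nonneg _)
      have s1 : Real.sqrt (∫ x, (ω x) ^ 2 * ‖f x‖ ^ 2 / ((ω x) ^ 2 + t ^ 2) ^ 2 ∂μ)
          ≤ Real.sqrt m1 := Real.sqrt_le_sqrt hIa
      have s2 : Real.sqrt (∫ x, ‖f x‖ ^ 2 / ((ω x) ^ 2 + t ^ 2) ^ 2 ∂μ)
          ≤ Real.sqrt m1 := Real.sqrt_le_sqrt hIb
      have ht2 : t ^ 2 ≤ 1 := by nlinarith [ht.1, ht.2]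
      have step := mul_le_mul (mul_le_mul ht2 s1 (Real.sqrt_nonneg _) zero_le_one)
        s2 (Real.sqrt_nonneg _) (by positivity)
      refine step.trans (le_of_eq ?_)
      rw [one_mul, Real.mul_self_sqrt hm1nn]
    refine lt_of_le_of_lt (lintegral_mono_ae ((ae_restrict_iff' measurableSet_Ioc).2
      (Filter.Eventually.of_forall hb))) ?_
    rw [setLIntegral_const]
    exact ENNReal.mul_lt_top ENNReal.ofReal_lt_top (by simp)
  have piece2 : ∫⁻ t in Set.Ioi (1:ℝ), ENNReal.ofReal
      (t ^ 2 * Real.sqrt (∫ x, (ω x) ^ 2 * ‖f x‖ ^ 2 / ((ω x) ^ 2 + t ^ 2) ^ 2 ∂μ) *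
        Real.sqrt (∫ x, ‖f x‖ ^ 2 / ((ω x) ^ 2 + t ^ 2) ^ 2 ∂μ)) < ⊤ := by
    -- pointwise bound on (1, ∞)
    have hb : ∀ t ∈ Set.Ioi (1:ℝ), ENNReal.ofReal
        (t ^ 2 * Real.sqrt (∫ x, (ω x) ^ 2 * ‖f x‖ ^ 2 / ((ω x) ^ 2 + t ^ 2) ^ 2 ∂μ) *
          Real.sqrt (∫ x, ‖f x‖ ^ 2 / ((ω x) ^ 2 + t ^ 2) ^ 2 ∂μ))
        ≤ ENNReal.ofReal ((Real.sqrt m1 * Real.sqrt m1) * Real.sqrt (1 / t ^ 3))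
          + ENNReal.ofReal ((Real.sqrt m1 * Real.sqrt m2) *
              (t * (2 + Real.log t / 2) ^ 2)⁻¹) := by
      intro t ht
      have ht1 : (1:ℝ) < t := ht
      have ht0 : (0:ℝ) < t := lt_trans one_pos ht1
      have hLpos : (0:ℝ) < 2 + Real.log t / 2 := by
        have := Real.log_nonneg ht1.le
        linarith
      -- the lintegral of the majorant for ∫ a
      have hafin : ∫⁻ x, ENNReal.ofReal ((1 / t ^ 3) * ‖f x‖ ^ 2
          + (1 / (t ^ 2 * (2 + Real.log t / 2) ^ 4)) *
              ((2 + Real.log (ω x)) ^ 4 * ‖f x‖ ^ 2)) ∂μ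
          = ENNReal.ofReal (1 / t ^ 3) * I1
            + ENNReal.ofReal (1 / (t ^ 2 * (2 + Real.log t / 2) ^ 4)) * I2 := by
        rw [hI1, hI2]
        have e1 : ∀ x : X, ENNReal.ofReal ((1 / t ^ 3) * ‖f x‖ ^ 2
            + (1 / (t ^ 2 * (2 + Real.log t / 2) ^ 4)) *
                ((2 + Real.log (ω x)) ^ 4 * ‖f x‖ ^ 2))
            = ENNReal.ofReal (1 / t ^ 3) * ENNReal.ofReal (‖f x‖ ^ 2)
              + ENNReal.ofReal (1 / (t ^ 2 * (2 + Real.log t / 2) ^ 4)) *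
                  ENNReal.ofReal ((2 + Real.log (ω x)) ^ 4 * ‖f x‖ ^ 2) := by
          intro x
          rw [ENNReal.ofReal_add (mul_nonneg (by positivity) (sq_nonneg _))
              (mul_nonneg (by positivity) (mul_nonneg (by positivity) (sq_nonneg _))),
            ENNReal.ofReal_mul (by positivity), ENNReal.ofReal_mul (by positivity)]
        simp_rw [e1]
        rw [lintegral_add_left (hFmeas.ennreal_ofReal.const_mul _),
          lintegral_const_mul' _ _ ENNReal.ofReal_ne_top,
          lintegral_const_mul' _ _ ENNReal.ofReal_ne_top]
      have hIa : ∫ x, (ω x) ^ 2 * ‖f x‖ ^ 2 / ((ω x) ^ 2 + t ^ 2) ^ 2 ∂μ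
          ≤ m1 / t ^ 3 + m2 / (t ^ 2 * (2 + Real.log t / 2) ^ 4) := by
        have key := my_integral_le_toReal μ (haMeas t) (haNN t)
          (h := fun x => (1 / t ^ 3) * ‖f x‖ ^ 2
            + (1 / (t ^ 2 * (2 + Real.log t / 2) ^ 4)) *
                ((2 + Real.log (ω x)) ^ 4 * ‖f x‖ ^ 2)) ?_ ?_
        · refine key.trans (le_of_eq ?_)
          rw [hafin, ENNReal.toReal_add (ENNReal.mul_ne_top ENNReal.ofReal_ne_top h1.ne)
            (ENNReal.mul_ne_top ENNReal.ofReal_ne_top h2.ne),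
            ENNReal.toReal_mul, ENNReal.toReal_mul, ENNReal.toReal_ofReal (by positivity),
            ENNReal.toReal_ofReal (by positivity), ← hm1, ← hm2]
          ring
        · filter_upwards [hω1] with x hx
          exact my_ptwise_a hx ht1 (sq_nonneg _)
        · rw [hafin]
          exact (ENNReal.add_lt_top.2 ⟨ENNReal.mul_lt_top ENNReal.ofReal_lt_top h1,
            ENNReal.mul_lt_top ENNReal.ofReal_lt_top h2⟩).ne
      have hIb : ∫ x, ‖f x‖ ^ 2 / ((ω x) ^ 2 + t ^ 2) ^ 2 ∂μ ≤ m1 / t ^ 4 := by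
        have hbfin : ∫⁻ x, ENNReal.ofReal ((1 / t ^ 4) * ‖f x‖ ^ 2) ∂μ
            = ENNReal.ofReal (1 / t ^ 4) * I1 := by
          rw [hI1]
          simp_rw [ENNReal.ofReal_mul (show (0:ℝ) ≤ 1 / t ^ 4 by positivity)]
          rw [lintegral_const_mul' _ _ ENNReal.ofReal_ne_top]
        have key := my_integral_le_toReal μ (hbMeas t) (hbNN t)
          (h := fun x => (1 / t ^ 4) * ‖f x‖ ^ 2) ?_ ?_
        · refine key.trans (le_of_eq ?_)
          rw [hbfin, ENNReal.toReal_mul, ENNReal.toReal_ofReal (by positivity), ← hm1]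
          ring
        · filter_upwards [hω1] with x hx
          exact my_ptwise_b ht0 (sq_nonneg _)
        · rw [hbfin]
          exact (ENNReal.mul_lt_top ENNReal.ofReal_lt_top h1).ne
      -- assemble
      have s1 : Real.sqrt (∫ x, (ω x) ^ 2 * ‖f x‖ ^ 2 / ((ω x) ^ 2 + t ^ 2) ^ 2 ∂μ)
          ≤ Real.sqrt m1 * Real.sqrt (1 / t ^ 3)
            + Real.sqrt m2 * (t * (2 + Real.log t / 2) ^ 2)⁻¹ := by
        refine (Real.sqrt_le_sqrt hIa).trans ?_
        refine (my_sqrt_add_le (by positivity) (by positivity)).trans (le_of_eq ?_)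
        congr 1
        · rw [div_eq_mul_one_div m1 (t ^ 3), Real.sqrt_mul hm1nn]
        · rw [show t ^ 2 * (2 + Real.log t / 2) ^ 4
              = (t * (2 + Real.log t / 2) ^ 2) ^ 2 by ring, Real.sqrt_div hm2nn,
            Real.sqrt_sq (mul_nonneg ht0.le (sq_nonneg _)), div_eq_mul_inv]
      have s2 : Real.sqrt (∫ x, ‖f x‖ ^ 2 / ((ω x) ^ 2 + t ^ 2) ^ 2 ∂μ)
          ≤ Real.sqrt m1 / t ^ 2 := by
        refine (Real.sqrt_le_sqrt hIb).trans (le_of_eq ?_)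
        rw [Real.sqrt_div hm1nn, show (t:ℝ) ^ 4 = (t ^ 2) ^ 2 by ring,
          Real.sqrt_sq (sq_nonneg t)]
      have main : t ^ 2 * Real.sqrt (∫ x, (ω x) ^ 2 * ‖f x‖ ^ 2 / ((ω x) ^ 2 + t ^ 2) ^ 2 ∂μ)
            * Real.sqrt (∫ x, ‖f x‖ ^ 2 / ((ω x) ^ 2 + t ^ 2) ^ 2 ∂μ)
          ≤ (Real.sqrt m1 * Real.sqrt m1) * Real.sqrt (1 / t ^ 3)
            + (Real.sqrt m1 * Real.sqrt m2) * (t * (2 + Real.log t / 2) ^ 2)⁻¹ := by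
        have step := mul_le_mul (mul_le_mul (le_refl (t ^ 2)) s1 (Real.sqrt_nonneg _)
          (by positivity)) s2 (Real.sqrt_nonneg _) (by positivity)
        refine step.trans (le_of_eq ?_)
        field_simp
      have hnn1 : (0:ℝ) ≤ (Real.sqrt m1 * Real.sqrt m1) * Real.sqrt (1 / t ^ 3) := by positivity
      have hnn2 : (0:ℝ) ≤ (Real.sqrt m1 * Real.sqrt m2) *
          (t * (2 + Real.log t / 2) ^ 2)⁻¹ :=
        mul_nonneg (mul_nonneg (Real.sqrt_nonneg _) (Real.sqrt_nonneg _))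
          (inv_nonneg.2 (mul_nonneg ht0.le (sq_nonneg _)))
      exact (ENNReal.ofReal_le_ofReal main).trans (ENNReal.ofReal_add hnn1 hnn2).le
    -- finiteness of the majorant
    have meas1 : Measurable fun t : ℝ => ENNReal.ofReal ((Real.sqrt m1 * Real.sqrt m1) * Real.sqrt (1 / t ^ 3)) := by
      apply Measurable.ennreal_ofReal
      exact (Real.continuous_sqrt.measurable.comp
        (measurable_const.div (measurable_id.pow_const 3))).const_mul (Real.sqrt m1 * Real.sqrt m1)
    have fin1 : ∫⁻ t in Set.Ioi (1:ℝ), ENNReal.ofReal ((Real.sqrt m1 * Real.sqrt m1) * Real.sqrt (1 / t ^ 3)) < ⊤ := by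
      have hcongr : ∀ t ∈ Set.Ioi (1:ℝ),
          ENNReal.ofReal ((Real.sqrt m1 * Real.sqrt m1) * Real.sqrt (1 / t ^ 3))
            = ENNReal.ofReal ((Real.sqrt m1 * Real.sqrt m1) * t ^ (-(3/2) : ℝ)) := by
        intro t ht
        have ht0' : (0:ℝ) < t := lt_trans one_pos ht
        have : Real.sqrt (1 / t ^ 3) = t ^ (-(3/2) : ℝ) := by
          rw [Real.sqrt_eq_rpow, one_div, ← Real.rpow_natCast t 3, ← Real.rpow_neg ht0'.le,
            ← Real.rpow_mul ht0'.le]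
          norm_num
        rw [this]
      rw [setLIntegral_congr_fun measurableSet_Ioi hcongr]
      exact my_lintegral_lt_top_of_integrableOn
        ((integrableOn_Ioi_rpow_of_lt (by norm_num) one_pos).const_mul (Real.sqrt m1 * Real.sqrt m1))
    have fin2 : ∫⁻ t in Set.Ioi (1:ℝ), ENNReal.ofReal
        ((Real.sqrt m1 * Real.sqrt m2) * (t * (2 + Real.log t / 2) ^ 2)⁻¹) < ⊤ :=
      my_lintegral_lt_top_of_integrableOn
        (my_intOn_log.const_mul (Real.sqrt m1 * Real.sqrt m2))
    calc ∫⁻ t in Set.Ioi (1:ℝ), ENNReal.ofReal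
          (t ^ 2 * Real.sqrt (∫ x, (ω x) ^ 2 * ‖f x‖ ^ 2 / ((ω x) ^ 2 + t ^ 2) ^ 2 ∂μ) *
            Real.sqrt (∫ x, ‖f x‖ ^ 2 / ((ω x) ^ 2 + t ^ 2) ^ 2 ∂μ))
        ≤ ∫⁻ t in Set.Ioi (1:ℝ), (ENNReal.ofReal ((Real.sqrt m1 * Real.sqrt m1) * Real.sqrt (1 / t ^ 3))
            + ENNReal.ofReal ((Real.sqrt m1 * Real.sqrt m2) *
                (t * (2 + Real.log t / 2) ^ 2)⁻¹)) := by
          apply lintegral_mono_ae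
          exact (ae_restrict_iff' measurableSet_Ioi).2 (Filter.Eventually.of_forall hb)
      _ = (∫⁻ t in Set.Ioi (1:ℝ), ENNReal.ofReal ((Real.sqrt m1 * Real.sqrt m1) * Real.sqrt (1 / t ^ 3)))
            + ∫⁻ t in Set.Ioi (1:ℝ), ENNReal.ofReal ((Real.sqrt m1 * Real.sqrt m2) *
                (t * (2 + Real.log t / 2) ^ 2)⁻¹) := lintegral_add_left meas1 _
      _ < ⊤ := ENNReal.add_lt_top.2 ⟨fin1, fin2⟩
  exact ENNReal.add_lt_top.2 ⟨piece1, piece2⟩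
end

section
/- Let α ∈ (0, 1/2) and set C₀ = ∫₀^∞ p^{2α−1}/(1 + p²) dp (a finite positive real number). Then for every t ≥ 1, the function k ↦ k^{2α−1}/(k² + t²) is Lebesgue integrable on (1, ∞) and | ∫₁^∞ k^{2α−1}/(k² + t²) dk − C₀ t^{2α−2} | ≤ t^{−2}/(2α). -/
open MeasureTheory Set Real
open scoped ENNReal

private lemma rda_meas (α c : ℝ) :
    Measurable (fun k : ℝ => k ^ (2 * α - 1) / (k ^ 2 + c ^ 2)) := by
  fun_prop

private lemma rda_int_Ioi (α : ℝ) (hα0 : 0 < α) (hα2 : α < 1/2) (c : ℝ) :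
    IntegrableOn (fun k : ℝ => k ^ (2 * α - 1) / (k ^ 2 + c ^ 2)) (Set.Ioi 1) := by
  have h : IntegrableOn (fun k : ℝ => k ^ (2 * α - 3)) (Set.Ioi (1:ℝ)) :=
    integrableOn_Ioi_rpow_of_lt (by linarith) one_pos
  refine h.mono' ((rda_meas α c).aestronglyMeasurable) ?_
  filter_upwards [ae_restrict_mem measurableSet_Ioi] with x hx
  have hx1 : (1:ℝ) < x := hx
  have hx0 : (0:ℝ) < x := by linarith
  have hnn : 0 ≤ x ^ (2 * α - 1) / (x ^ 2 + c ^ 2) := by positivity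
  rw [Real.norm_eq_abs, abs_of_nonneg hnn]
  have h2 : x ^ ((2:ℝ)) = x ^ (2:ℕ) := by
    rw [← Real.rpow_natCast x 2]; norm_num
  have key : x ^ (2 * α - 3) = x ^ (2 * α - 1) / x ^ (2:ℕ) := by
    rw [← h2, ← Real.rpow_sub hx0]; ring_nf
  rw [key]
  apply div_le_div_of_nonneg_left (Real.rpow_nonneg hx0.le _) (by positivity)
  nlinarith [sq_nonneg c]

/-- Asymptotic estimate (equation (124)): for `α ∈ (0, 1/2)` and
`C₀ = ∫₀^∞ p^{2α−1}/(1+p²) dp`, the function `k ↦ k^{2α−1}/(k²+t²)` is integrable on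
`(1,∞)` for each `t ≥ 1`, `C₀` is finite and positive, and
`|∫₁^∞ k^{2α−1}/(k²+t²) dk − C₀ t^{2α−2}| ≤ t^{−2}/(2α)`. -/
theorem resolvent_denominator_asymptotics
    (α : ℝ) (hα : α ∈ Set.Ioo (0:ℝ) (1/2))
    (C₀ : ℝ) (hC₀ : C₀ = ∫ p in Set.Ioi (0:ℝ), p ^ (2 * α - 1) / (1 + p ^ 2)) :
    IntegrableOn (fun p : ℝ => p ^ (2 * α - 1) / (1 + p ^ 2)) (Set.Ioi 0) ∧
    0 < C₀ ∧
    ∀ t : ℝ, 1 ≤ t →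
      IntegrableOn (fun k : ℝ => k ^ (2 * α - 1) / (k ^ 2 + t ^ 2)) (Set.Ioi 1) ∧
      |(∫ k in Set.Ioi (1:ℝ), k ^ (2 * α - 1) / (k ^ 2 + t ^ 2)) - C₀ * t ^ (2 * α - 2)| ≤
        t ^ (-(2:ℝ)) / (2 * α) := by
  obtain ⟨hα0, hα2⟩ := hα
  have h2α : (0:ℝ) < 2 * α := by linarith
  have hr1 : (-1:ℝ) < 2 * α - 1 := by linarith
  set f : ℝ → ℝ := fun p => p ^ (2 * α - 1) / (1 + p ^ 2) with hf
  have hfm : Measurable f := by fun_prop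
  -- integrability of the rpow on Ioc 0 1
  have h01 : IntegrableOn (fun p : ℝ => p ^ (2 * α - 1)) (Set.Ioc (0:ℝ) 1) := by
    have := intervalIntegral.intervalIntegrable_rpow' (a := (0:ℝ)) (b := 1) hr1
    rwa [intervalIntegrable_iff_integrableOn_Ioc_of_le (by norm_num)] at this
  -- integrability of f on Ioc 0 1
  have hf01 : IntegrableOn f (Set.Ioc (0:ℝ) 1) := by
    refine h01.mono' hfm.aestronglyMeasurable ?_
    filter_upwards [ae_restrict_mem measurableSet_Ioc] with x hx
    have hx0 : 0 < x := hx.1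
    have hnn : 0 ≤ f x := by positivity
    rw [Real.norm_eq_abs, abs_of_nonneg hnn]
    exact div_le_self (Real.rpow_nonneg hx0.le _) (by nlinarith [sq_nonneg x])
  -- integrability of f on Ioi 1
  have hfIoi1 : IntegrableOn f (Set.Ioi (1:ℝ)) := by
    refine (rda_int_Ioi α hα0 hα2 1).congr_fun (fun x _ => ?_) measurableSet_Ioi
    simp [hf, add_comm]
  have hfIoi0 : IntegrableOn f (Set.Ioi (0:ℝ)) := by
    rw [← Set.Ioc_union_Ioi_eq_Ioi (zero_le_one)]
    exact hf01.union hfIoi1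
  refine ⟨hfIoi0, ?_, ?_⟩
  · -- positivity
    rw [hC₀]
    have hnn : 0 ≤ᶠ[ae (volume.restrict (Set.Ioi (0:ℝ)))] f := by
      filter_upwards [ae_restrict_mem measurableSet_Ioi] with x hx
      have hx0 : (0:ℝ) < x := hx
      positivity
    rw [setIntegral_pos_iff_support_of_nonneg_ae hnn hfIoi0]
    have hsub : Set.Ioi (0:ℝ) ⊆ Function.support f ∩ Set.Ioi 0 := by
      intro x hx
      have hx0 : (0:ℝ) < x := hx
      refine ⟨?_, hx⟩
      have : 0 < f x := by positivity
      exact ne_of_gt this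
    calc (0:ℝ≥0∞) < volume (Set.Ioi (0:ℝ)) := by simp [Real.volume_Ioi]
      _ ≤ _ := measure_mono hsub
  · intro t ht
    have ht0 : (0:ℝ) < t := by linarith
    have hint : IntegrableOn (fun k : ℝ => k ^ (2 * α - 1) / (k ^ 2 + t ^ 2)) (Set.Ioi 1) :=
      rda_int_Ioi α hα0 hα2 t
    refine ⟨hint, ?_⟩
    have h1t : 0 < 1 / t := by positivity
    have h1t1 : 1 / t ≤ 1 := by
      rw [div_le_one ht0]; exact ht
    -- change of variables
    have hsub : (∫ k in Set.Ioi (1:ℝ), k ^ (2 * α - 1) / (k ^ 2 + t ^ 2))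
        = t ^ (2 * α - 2) * ∫ p in Set.Ioi (1/t), f p := by
      have hcv := MeasureTheory.integral_comp_mul_left_Ioi
        (fun k => k ^ (2 * α - 1) / (k ^ 2 + t ^ 2)) (1/t) ht0
      rw [mul_one_div_cancel ht0.ne'] at hcv
      have hcong : (∫ x in Set.Ioi (1/t), (t * x) ^ (2 * α - 1) / ((t * x) ^ 2 + t ^ 2))
          = ∫ x in Set.Ioi (1/t), t ^ (2 * α - 3) * f x := by
        refine setIntegral_congr_fun measurableSet_Ioi (fun x hx => ?_)
        have hx0 : (0:ℝ) < x := lt_trans h1t hx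
        have e1 : (t * x) ^ (2 * α - 1) = t ^ (2 * α - 1) * x ^ (2 * α - 1) :=
          Real.mul_rpow ht0.le hx0.le
        have e2 : (t * x) ^ 2 + t ^ 2 = t ^ 2 * (1 + x ^ 2) := by ring
        have e3 : t ^ ((2:ℝ)) = t ^ (2:ℕ) := by
          rw [← Real.rpow_natCast t 2]; norm_num
        have e4 : t ^ (2 * α - 3) = t ^ (2 * α - 1) / t ^ (2:ℕ) := by
          rw [← e3, ← Real.rpow_sub ht0]; ring_nf
        rw [e1, e2, hf]
        field_simp [e4]
        rw [e4, mul_div_assoc', mul_div_cancel_left₀ _ (by positivity : (t:ℝ) ^ 2 ≠ 0)]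
      rw [hcong, integral_const_mul] at hcv
      beta_reduce at hcv
      have e5 : t ^ (2 * α - 2) = t * t ^ (2 * α - 3) := by
        rw [show (2 * α - 2) = 1 + (2 * α - 3) by ring, Real.rpow_add ht0, Real.rpow_one]
      rw [e5, mul_assoc, hcv, smul_eq_mul, ← mul_assoc, mul_inv_cancel₀ ht0.ne', one_mul]
    -- split C₀
    have hfInt_small : IntegrableOn f (Set.Ioc (0:ℝ) (1/t)) :=
      hfIoi0.mono_set Set.Ioc_subset_Ioi_self
    have hfInt_big : IntegrableOn f (Set.Ioi (1/t)) :=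
      hfIoi0.mono_set (Set.Ioi_subset_Ioi h1t.le)
    have hsplit : C₀ = (∫ p in Set.Ioc (0:ℝ) (1/t), f p) + ∫ p in Set.Ioi (1/t), f p := by
      rw [hC₀, ← setIntegral_union (Set.Ioc_disjoint_Ioi le_rfl) measurableSet_Ioi
        hfInt_small hfInt_big, Set.Ioc_union_Ioi_eq_Ioi h1t.le]
    set I : ℝ := ∫ p in Set.Ioc (0:ℝ) (1/t), f p with hI
    have hI_nonneg : 0 ≤ I := by
      refine setIntegral_nonneg measurableSet_Ioc (fun x hx => ?_)
      have hx0 : 0 < x := hx.1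
      positivity
    have h01' : IntegrableOn (fun x : ℝ => x ^ (2 * α - 1)) (Set.Ioc (0:ℝ) (1/t)) :=
      h01.mono_set (Set.Ioc_subset_Ioc le_rfl h1t1)
    have hI_le : I ≤ t ^ (-(2 * α)) / (2 * α) := by
      have hle : I ≤ ∫ x in Set.Ioc (0:ℝ) (1/t), x ^ (2 * α - 1) := by
        refine setIntegral_mono_on hfInt_small h01' measurableSet_Ioc (fun x hx => ?_)
        exact div_le_self (Real.rpow_nonneg hx.1.le _) (by nlinarith [sq_nonneg x])
      have heq : (∫ x in Set.Ioc (0:ℝ) (1/t), x ^ (2 * α - 1)) = t ^ (-(2 * α)) / (2 * α) := by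
        rw [← intervalIntegral.integral_of_le h1t.le,
          integral_rpow (Or.inl hr1),
          Real.zero_rpow (by linarith : 2 * α - 1 + 1 ≠ 0),
          show 2 * α - 1 + 1 = 2 * α by ring]
        rw [one_div, Real.inv_rpow ht0.le, ← Real.rpow_neg ht0.le]
        ring
      linarith
    -- conclude
    have hdiff : (∫ k in Set.Ioi (1:ℝ), k ^ (2 * α - 1) / (k ^ 2 + t ^ 2))
        - C₀ * t ^ (2 * α - 2) = -(t ^ (2 * α - 2) * I) := by
      rw [hsub, hsplit]; ring
    rw [hdiff, abs_neg, abs_of_nonneg (mul_nonneg (Real.rpow_nonneg ht0.le _) hI_nonneg)]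
    have hmul : t ^ (2 * α - 2) * (t ^ (-(2 * α)) / (2 * α)) = t ^ (-(2:ℝ)) / (2 * α) := by
      rw [mul_div_assoc', ← Real.rpow_add ht0, show 2 * α - 2 + -(2 * α) = -(2:ℝ) by ring]
    calc t ^ (2 * α - 2) * I ≤ t ^ (2 * α - 2) * (t ^ (-(2 * α)) / (2 * α)) :=
          mul_le_mul_of_nonneg_left hI_le (Real.rpow_nonneg ht0.le _)
      _ = t ^ (-(2:ℝ)) / (2 * α) := hmul
end

section
/- Let α ∈ (0, 1/2) and c > 0. For t > 0 define g(t) = ∫₁^∞ k^{2α−1}/(k² + t²) dk and u(t) = (1 + c·t²·g(t))⁻¹ · ∫₁^∞ k^{2α}(k² − t²)/(k² + t²)² dk (both inner integrals being finite Lebesgue integrals since 2α − 2 < −1). Then u is Lebesgue integrable on (0, T) for every T > 0, and ∫₀^τ u(t) dt → +∞ as τ → +∞. -/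
open MeasureTheory Set Filter Topology

namespace TraceVVAux

-- `k ^ p / k ^ 2 = k ^ (p - 2)` for `k > 0`.
lemma rpow_div_sq {k : ℝ} (hk : 0 < k) (p : ℝ) : k ^ p / k ^ 2 = k ^ (p - 2) := by
  rw [Real.rpow_sub hk, Real.rpow_two]

lemma sq_add_sq_pos {k t : ℝ} (hk : 0 < k) : 0 < k ^ 2 + t ^ 2 := by positivity

-- generic integrability on (1,∞) by domination by a power
lemma int_aux {p : ℝ} (hp : p < -1) {f : ℝ → ℝ}
    (hf : ContinuousOn f (Set.Ioi 1))
    (hbd : ∀ k ∈ Set.Ioi (1:ℝ), |f k| ≤ k ^ p) :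
    IntegrableOn f (Set.Ioi (1:ℝ)) := by
  refine (integrableOn_Ioi_rpow_of_lt hp one_pos).mono'
    (hf.aestronglyMeasurable measurableSet_Ioi) ?_
  filter_upwards [ae_restrict_mem measurableSet_Ioi] with k hk
  simpa [Real.norm_eq_abs] using hbd k hk

section Main

variable {α : ℝ} (hα1 : 0 < α) (hα2 : α < 1/2) (t : ℝ)

lemma cont_g_integrand : ContinuousOn (fun k : ℝ => k ^ (2*α - 1) / (k ^ 2 + t ^ 2)) (Set.Ioi 1) := by
  apply ContinuousOn.div
  · exact fun k hk => (Real.continuousAt_rpow_const k _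
      (Or.inl (ne_of_gt (lt_trans one_pos hk)))).continuousWithinAt
  · fun_prop
  · intro k hk
    exact ne_of_gt (sq_add_sq_pos (lt_trans one_pos hk))

lemma cont_H_integrand : ContinuousOn (fun k : ℝ => k ^ (2*α) / (k ^ 2 + t ^ 2)) (Set.Ioi 1) := by
  apply ContinuousOn.div
  · exact fun k hk => (Real.continuousAt_rpow_const k _
      (Or.inl (ne_of_gt (lt_trans one_pos hk)))).continuousWithinAt
  · fun_prop
  · intro k hk
    exact ne_of_gt (sq_add_sq_pos (lt_trans one_pos hk))

lemma cont_F_integrand :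
    ContinuousOn (fun k : ℝ => k ^ (2*α) * (k ^ 2 - t ^ 2) / (k ^ 2 + t ^ 2) ^ 2) (Set.Ioi 1) := by
  apply ContinuousOn.div
  · apply ContinuousOn.mul
    · exact fun k hk => (Real.continuousAt_rpow_const k _
      (Or.inl (ne_of_gt (lt_trans one_pos hk)))).continuousWithinAt
    · fun_prop
  · fun_prop
  · intro k hk
    exact ne_of_gt (pow_pos (sq_add_sq_pos (lt_trans one_pos hk)) 2)

include hα1 hα2

lemma exp_lt1 : 2*α - 3 < -1 := by linarith
lemma exp_lt2 : 2*α - 2 < -1 := by linarith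

lemma g_integrand_bound {k : ℝ} (hk : k ∈ Set.Ioi (1:ℝ)) :
    |k ^ (2*α - 1) / (k ^ 2 + t ^ 2)| ≤ k ^ (2*α - 3) := by
  have hk0 : (0:ℝ) < k := lt_trans one_pos hk
  have h1 : 0 < k ^ 2 + t ^ 2 := sq_add_sq_pos hk0
  rw [abs_of_nonneg (by positivity)]
  calc k ^ (2*α - 1) / (k ^ 2 + t ^ 2) ≤ k ^ (2*α - 1) / k ^ 2 := by
        gcongr
        nlinarith
    _ = k ^ (2*α - 3) := by rw [rpow_div_sq hk0]; ring_nf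

lemma H_integrand_bound {k : ℝ} (hk : k ∈ Set.Ioi (1:ℝ)) :
    |k ^ (2*α) / (k ^ 2 + t ^ 2)| ≤ k ^ (2*α - 2) := by
  have hk0 : (0:ℝ) < k := lt_trans one_pos hk
  have h1 : 0 < k ^ 2 + t ^ 2 := sq_add_sq_pos hk0
  rw [abs_of_nonneg (by positivity)]
  calc k ^ (2*α) / (k ^ 2 + t ^ 2) ≤ k ^ (2*α) / k ^ 2 := by
        gcongr
        nlinarith
    _ = k ^ (2*α - 2) := rpow_div_sq hk0 _

lemma F_integrand_bound {k : ℝ} (hk : k ∈ Set.Ioi (1:ℝ)) :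
    |k ^ (2*α) * (k ^ 2 - t ^ 2) / (k ^ 2 + t ^ 2) ^ 2| ≤ k ^ (2*α - 2) := by
  have hk0 : (0:ℝ) < k := lt_trans one_pos hk
  have h1 : 0 < k ^ 2 + t ^ 2 := sq_add_sq_pos hk0
  have h2 : |k ^ 2 - t ^ 2| ≤ k ^ 2 + t ^ 2 := by
    rw [abs_le]; constructor <;> nlinarith [sq_nonneg t, sq_nonneg k]
  calc |k ^ (2*α) * (k ^ 2 - t ^ 2) / (k ^ 2 + t ^ 2) ^ 2|
      = k ^ (2*α) * |k ^ 2 - t ^ 2| / (k ^ 2 + t ^ 2) ^ 2 := by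
        rw [abs_div, abs_mul, abs_of_nonneg (Real.rpow_nonneg hk0.le _),
          abs_of_nonneg (by positivity : (0:ℝ) ≤ (k ^ 2 + t ^ 2) ^ 2)]
    _ ≤ k ^ (2*α) * (k ^ 2 + t ^ 2) / (k ^ 2 + t ^ 2) ^ 2 := by
        gcongr
    _ = k ^ (2*α) / (k ^ 2 + t ^ 2) := by field_simp
    _ ≤ k ^ (2*α) / k ^ 2 := by
        gcongr
        nlinarith
    _ = k ^ (2*α - 2) := rpow_div_sq hk0 _


lemma g_int : IntegrableOn (fun k : ℝ => k ^ (2*α - 1) / (k ^ 2 + t ^ 2)) (Set.Ioi (1:ℝ)) :=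
  int_aux (exp_lt1 hα1 hα2) (cont_g_integrand t) (fun k hk => g_integrand_bound hα1 hα2 t hk)

lemma H_int : IntegrableOn (fun k : ℝ => k ^ (2*α) / (k ^ 2 + t ^ 2)) (Set.Ioi (1:ℝ)) :=
  int_aux (exp_lt2 hα1 hα2) (cont_H_integrand t) (fun k hk => H_integrand_bound hα1 hα2 t hk)

lemma F_int : IntegrableOn (fun k : ℝ => k ^ (2*α) * (k ^ 2 - t ^ 2) / (k ^ 2 + t ^ 2) ^ 2)
    (Set.Ioi (1:ℝ)) :=
  int_aux (exp_lt2 hα1 hα2) (cont_F_integrand t) (fun k hk => F_integrand_bound hα1 hα2 t hk)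


lemma H_nonneg : 0 ≤ ∫ k in Set.Ioi (1:ℝ), k ^ (2*α) / (k ^ 2 + t ^ 2) := by
  apply setIntegral_nonneg measurableSet_Ioi
  intro k hk
  have hk0 : (0:ℝ) < k := lt_trans one_pos hk
  exact div_nonneg (Real.rpow_nonneg hk0.le _) (sq_add_sq_pos hk0).le

lemma g_nonneg : 0 ≤ ∫ k in Set.Ioi (1:ℝ), k ^ (2*α - 1) / (k ^ 2 + t ^ 2) := by
  apply setIntegral_nonneg measurableSet_Ioi
  intro k hk
  have hk0 : (0:ℝ) < k := lt_trans one_pos hk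
  exact div_nonneg (Real.rpow_nonneg hk0.le _) (sq_add_sq_pos hk0).le

lemma F_identity :
    (∫ k in Set.Ioi (1:ℝ), k ^ (2*α) * (k ^ 2 - t ^ 2) / (k ^ 2 + t ^ 2) ^ 2)
      = 2*α * (∫ k in Set.Ioi (1:ℝ), k ^ (2*α) / (k ^ 2 + t ^ 2)) + 1/(1+t^2) := by
  set φ : ℝ → ℝ := fun k => k ^ (2*α+1) / (k ^ 2 + t ^ 2) with hφdef
  set φ' : ℝ → ℝ := fun k =>
    ((2*α+1) * k ^ (2*α) * (k ^ 2 + t ^ 2) - k ^ (2*α+1) * (2*k)) / (k ^ 2 + t ^ 2) ^ 2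
    with hφ'def
  have hderiv : ∀ k ∈ Set.Ici (1:ℝ), HasDerivAt φ (φ' k) k := by
    intro k hk
    have hk0 : (0:ℝ) < k := lt_of_lt_of_le one_pos hk
    have h1 : HasDerivAt (fun x : ℝ => x ^ (2*α+1)) ((2*α+1) * k ^ (2*α)) k := by
      have := Real.hasDerivAt_rpow_const (x := k) (p := 2*α+1) (Or.inl hk0.ne')
      simpa [add_sub_cancel_right] using this
    have h2 : HasDerivAt (fun x : ℝ => x ^ 2 + t ^ 2) (2*k) k := by
      simpa using (hasDerivAt_pow 2 k).add_const (t ^ 2)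
    exact h1.div h2 (ne_of_gt (sq_add_sq_pos hk0))
  have hpt : ∀ k ∈ Set.Ioi (1:ℝ), φ' k
      = 2*α * (k ^ (2*α) / (k ^ 2 + t ^ 2)) - k ^ (2*α) * (k ^ 2 - t ^ 2) / (k ^ 2 + t ^ 2) ^ 2 := by
    intro k hk
    have hk0 : (0:ℝ) < k := lt_trans one_pos hk
    have hkk : k ^ (2*α+1) = k ^ (2*α) * k := Real.rpow_add_one hk0.ne' _
    have hD : k ^ 2 + t ^ 2 ≠ 0 := ne_of_gt (sq_add_sq_pos hk0)
    simp only [hφ'def, hkk]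
    field_simp
    ring
  have hsub : IntegrableOn (fun k : ℝ => 2*α * (k ^ (2*α) / (k ^ 2 + t ^ 2))
      - k ^ (2*α) * (k ^ 2 - t ^ 2) / (k ^ 2 + t ^ 2) ^ 2) (Set.Ioi 1) :=
    ((H_int hα1 hα2 t).const_mul (2*α)).sub (F_int hα1 hα2 t)
  have hφ'int : IntegrableOn φ' (Set.Ioi (1:ℝ)) :=
    IntegrableOn.congr_fun hsub (fun k hk => (hpt k hk).symm) measurableSet_Ioi
  have hφ0 : Tendsto φ atTop (𝓝 0) := by
    have hb : Tendsto (fun k : ℝ => k ^ (2*α - 1)) atTop (𝓝 0) := by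
      have := tendsto_rpow_neg_atTop (y := 1 - 2*α) (by linarith)
      simpa [show -(1 - 2*α) = 2*α - 1 by ring] using this
    apply squeeze_zero' ?_ ?_ hb
    · filter_upwards [eventually_ge_atTop (1:ℝ)] with k hk
      have hk0 : (0:ℝ) < k := lt_of_lt_of_le one_pos hk
      exact div_nonneg (Real.rpow_nonneg hk0.le _) (sq_add_sq_pos hk0).le
    · filter_upwards [eventually_ge_atTop (1:ℝ)] with k hk
      have hk0 : (0:ℝ) < k := lt_of_lt_of_le one_pos hk
      calc φ k ≤ k ^ (2*α+1) / k ^ 2 := by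
            simp only [hφdef]
            gcongr
            all_goals nlinarith [Real.rpow_nonneg hk0.le (2*α + 1)]
        _ = k ^ (2*α - 1) := by rw [rpow_div_sq hk0]; ring_nf
  have hFTC : ∫ k in Set.Ioi (1:ℝ), φ' k = 0 - φ 1 :=
    integral_Ioi_of_hasDerivAt_of_tendsto' hderiv hφ'int hφ0
  have hφ1 : φ 1 = 1/(1+t^2) := by simp [hφdef]
  calc (∫ k in Set.Ioi (1:ℝ), k ^ (2*α) * (k ^ 2 - t ^ 2) / (k ^ 2 + t ^ 2) ^ 2)
      = ∫ k in Set.Ioi (1:ℝ), (2*α * (k ^ (2*α) / (k ^ 2 + t ^ 2)) - φ' k) := by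
        apply setIntegral_congr_fun measurableSet_Ioi
        intro k hk
        dsimp only
        rw [hpt k hk]; ring
    _ = (∫ k in Set.Ioi (1:ℝ), 2*α * (k ^ (2*α) / (k ^ 2 + t ^ 2)))
          - ∫ k in Set.Ioi (1:ℝ), φ' k :=
        integral_sub ((H_int hα1 hα2 t).const_mul _) hφ'int
    _ = 2*α * (∫ k in Set.Ioi (1:ℝ), k ^ (2*α) / (k ^ 2 + t ^ 2)) + 1/(1+t^2) := by
        rw [integral_const_mul, hFTC, hφ1]; ring

lemma H_lower {t : ℝ} (ht : 1 ≤ t) :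
    t ^ (2*α - 1) / (2*(1 - 2*α)) ≤ ∫ k in Set.Ioi (1:ℝ), k ^ (2*α) / (k ^ 2 + t ^ 2) := by
  have ht0 : (0:ℝ) < t := lt_of_lt_of_le one_pos ht
  have hint : IntegrableOn (fun k : ℝ => k ^ (2*α) / (k ^ 2 + t ^ 2)) (Set.Ioi t) :=
    (H_int hα1 hα2 t).mono_set (Set.Ioi_subset_Ioi ht)
  have h2 : ∫ k in Set.Ioi t, (1/2:ℝ) * k ^ (2*α - 2) = t ^ (2*α - 1) / (2*(1 - 2*α)) := by
    rw [integral_const_mul, integral_Ioi_rpow_of_lt (exp_lt2 hα1 hα2) ht0,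
      show 2*α - 2 + 1 = 2*α - 1 by ring]
    have hne1 : (2*α - 1 : ℝ) ≠ 0 := by intro h; nlinarith
    have hne2 : (2*(1 - 2*α) : ℝ) ≠ 0 := by intro h; nlinarith
    field_simp
    ring_nf
    have h3 : (1 - α * 2 : ℝ) ≠ 0 := by intro h; apply hne2; linarith
    rw [show α * (1 - α * 2)⁻¹ * 2 - (1 - α * 2)⁻¹ = -((1 - α * 2) * (1 - α * 2)⁻¹) by ring,
      mul_inv_cancel₀ h3]
  have h1 : ∫ k in Set.Ioi t, (1/2:ℝ) * k ^ (2*α - 2)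
      ≤ ∫ k in Set.Ioi t, k ^ (2*α) / (k ^ 2 + t ^ 2) := by
    apply setIntegral_mono_on ((integrableOn_Ioi_rpow_of_lt (exp_lt2 hα1 hα2) ht0).const_mul _)
      hint measurableSet_Ioi
    intro k hk
    have hkt : t < k := hk
    have hk0 : (0:ℝ) < k := lt_trans ht0 hkt
    calc (1/2:ℝ) * k ^ (2*α - 2) = k ^ (2*α) / (2 * k ^ 2) := by
          rw [← rpow_div_sq hk0]; ring
      _ ≤ k ^ (2*α) / (k ^ 2 + t ^ 2) := by
          gcongr
          all_goals nlinarith [Real.rpow_nonneg hk0.le (2*α)]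
  have h3 : ∫ k in Set.Ioi t, k ^ (2*α) / (k ^ 2 + t ^ 2)
      ≤ ∫ k in Set.Ioi (1:ℝ), k ^ (2*α) / (k ^ 2 + t ^ 2) := by
    apply setIntegral_mono_set (H_int hα1 hα2 t) ?_ ((Set.Ioi_subset_Ioi ht).eventuallyLE)
    filter_upwards [ae_restrict_mem measurableSet_Ioi] with k hk
    have hk0 : (0:ℝ) < k := lt_trans one_pos hk
    exact div_nonneg (Real.rpow_nonneg hk0.le _) (sq_add_sq_pos hk0).le
  calc t ^ (2*α - 1) / (2*(1 - 2*α)) = ∫ k in Set.Ioi t, (1/2:ℝ) * k ^ (2*α - 2) := h2.symm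
    _ ≤ ∫ k in Set.Ioi t, k ^ (2*α) / (k ^ 2 + t ^ 2) := h1
    _ ≤ _ := h3

lemma g_upper {t : ℝ} (ht : 1 ≤ t) :
    (∫ k in Set.Ioi (1:ℝ), k ^ (2*α - 1) / (k ^ 2 + t ^ 2))
      ≤ (1/(2*α) + 1/(2 - 2*α)) * t ^ (2*α - 2) := by
  have ht0 : (0:ℝ) < t := lt_of_lt_of_le one_pos ht
  have h1int : IntegrableOn (fun k : ℝ => k ^ (2*α - 1) / (k ^ 2 + t ^ 2)) (Set.Ioc 1 t) :=
    (g_int hα1 hα2 t).mono_set Set.Ioc_subset_Ioi_self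
  have h2int : IntegrableOn (fun k : ℝ => k ^ (2*α - 1) / (k ^ 2 + t ^ 2)) (Set.Ioi t) :=
    (g_int hα1 hα2 t).mono_set (Set.Ioi_subset_Ioi ht)
  have hrint : IntegrableOn (fun k : ℝ => k ^ (2*α - 1) / t ^ 2) (Set.Ioc 0 t) := by
    have := (intervalIntegral.intervalIntegrable_rpow' (a := 0) (b := t) (r := 2*α - 1)
      (by linarith))
    exact ((intervalIntegrable_iff_integrableOn_Ioc_of_le ht0.le).mp this).div_const _
  have hsplit : Set.Ioc (1:ℝ) t ∪ Set.Ioi t = Set.Ioi (1:ℝ) := Set.Ioc_union_Ioi_eq_Ioi ht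
  rw [← hsplit, setIntegral_union (Set.Ioc_disjoint_Ioi le_rfl) measurableSet_Ioi h1int h2int]
  have part1 : (∫ k in Set.Ioc (1:ℝ) t, k ^ (2*α - 1) / (k ^ 2 + t ^ 2))
      ≤ t ^ (2*α - 2) / (2*α) := by
    have s1 : (∫ k in Set.Ioc (1:ℝ) t, k ^ (2*α - 1) / (k ^ 2 + t ^ 2))
        ≤ ∫ k in Set.Ioc (1:ℝ) t, k ^ (2*α - 1) / t ^ 2 := by
      apply setIntegral_mono_on h1int (hrint.mono_set (Set.Ioc_subset_Ioc_left one_pos.le))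
        measurableSet_Ioc
      intro k hk
      have hk0 : (0:ℝ) < k := lt_trans one_pos hk.1
      gcongr
      all_goals nlinarith [Real.rpow_nonneg hk0.le (2*α - 1)]
    have s2 : (∫ k in Set.Ioc (1:ℝ) t, k ^ (2*α - 1) / t ^ 2)
        ≤ ∫ k in Set.Ioc (0:ℝ) t, k ^ (2*α - 1) / t ^ 2 := by
      apply setIntegral_mono_set hrint ?_ ((Set.Ioc_subset_Ioc_left one_pos.le).eventuallyLE)
      filter_upwards [ae_restrict_mem measurableSet_Ioc] with k hk
      exact div_nonneg (Real.rpow_nonneg hk.1.le _) (by positivity)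
    have s3 : (∫ k in Set.Ioc (0:ℝ) t, k ^ (2*α - 1) / t ^ 2) = t ^ (2*α - 2) / (2*α) := by
      rw [show (fun k : ℝ => k ^ (2*α - 1) / t ^ 2) = fun k : ℝ => (t ^ 2)⁻¹ * k ^ (2*α - 1) by
          funext k; rw [div_eq_inv_mul]]
      rw [integral_const_mul, ← intervalIntegral.integral_of_le ht0.le,
        integral_rpow (Or.inl (by linarith)), show 2*α - 1 + 1 = 2*α by ring,
        Real.zero_rpow (by positivity : 2*α ≠ 0), ← rpow_div_sq ht0]
      field_simp
      exact sub_zero _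
    calc (∫ k in Set.Ioc (1:ℝ) t, k ^ (2*α - 1) / (k ^ 2 + t ^ 2))
        ≤ ∫ k in Set.Ioc (0:ℝ) t, k ^ (2*α - 1) / t ^ 2 := le_trans s1 s2
      _ = t ^ (2*α - 2) / (2*α) := s3
  have part2 : (∫ k in Set.Ioi t, k ^ (2*α - 1) / (k ^ 2 + t ^ 2))
      ≤ t ^ (2*α - 2) / (2 - 2*α) := by
    have s1 : (∫ k in Set.Ioi t, k ^ (2*α - 1) / (k ^ 2 + t ^ 2))
        ≤ ∫ k in Set.Ioi t, k ^ (2*α - 3) := by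
      apply setIntegral_mono_on h2int (integrableOn_Ioi_rpow_of_lt (exp_lt1 hα1 hα2) ht0)
        measurableSet_Ioi
      intro k hk
      have hk0 : (0:ℝ) < k := lt_trans ht0 hk
      calc k ^ (2*α - 1) / (k ^ 2 + t ^ 2) ≤ k ^ (2*α - 1) / k ^ 2 := by
            gcongr
            all_goals nlinarith [Real.rpow_nonneg hk0.le (2*α - 1)]
        _ = k ^ (2*α - 3) := by rw [rpow_div_sq hk0]; ring_nf
    have s2 : (∫ k in Set.Ioi t, k ^ (2*α - 3)) = t ^ (2*α - 2) / (2 - 2*α) := by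
      rw [integral_Ioi_rpow_of_lt (exp_lt1 hα1 hα2) ht0, show 2*α - 3 + 1 = 2*α - 2 by ring]
      have hne1 : (2*α - 2 : ℝ) ≠ 0 := by intro h; nlinarith
      have hne2 : (2 - 2*α : ℝ) ≠ 0 := by intro h; nlinarith
      field_simp
      ring_nf
      rw [show (1 - α) = -(-1 + α) by ring, inv_neg]
    linarith
  have hsum : t ^ (2*α - 2) / (2*α) + t ^ (2*α - 2) / (2 - 2*α)
      = (1/(2*α) + 1/(2 - 2*α)) * t ^ (2*α - 2) := by ring
  linarith

lemma g_cont : Continuous (fun t : ℝ => ∫ k in Set.Ioi (1:ℝ), k ^ (2*α - 1) / (k ^ 2 + t ^ 2)) := by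
  apply continuous_of_dominated (bound := fun k : ℝ => k ^ (2*α - 3))
  · exact fun t => (cont_g_integrand t).aestronglyMeasurable measurableSet_Ioi
  · intro t
    filter_upwards [ae_restrict_mem measurableSet_Ioi] with k hk
    rw [Real.norm_eq_abs]
    exact g_integrand_bound hα1 hα2 t hk
  · exact integrableOn_Ioi_rpow_of_lt (exp_lt1 hα1 hα2) one_pos
  · filter_upwards [ae_restrict_mem measurableSet_Ioi] with k hk
    have hk0 : (0:ℝ) < k := lt_trans one_pos hk
    exact continuous_const.div (by fun_prop) (fun x => ne_of_gt (sq_add_sq_pos hk0))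

lemma F_cont : Continuous (fun t : ℝ =>
    ∫ k in Set.Ioi (1:ℝ), k ^ (2*α) * (k ^ 2 - t ^ 2) / (k ^ 2 + t ^ 2) ^ 2) := by
  apply continuous_of_dominated (bound := fun k : ℝ => k ^ (2*α - 2))
  · exact fun t => (cont_F_integrand t).aestronglyMeasurable measurableSet_Ioi
  · intro t
    filter_upwards [ae_restrict_mem measurableSet_Ioi] with k hk
    rw [Real.norm_eq_abs]
    exact F_integrand_bound hα1 hα2 t hk
  · exact integrableOn_Ioi_rpow_of_lt (exp_lt2 hα1 hα2) one_pos
  · filter_upwards [ae_restrict_mem measurableSet_Ioi] with k hk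
    have hk0 : (0:ℝ) < k := lt_trans one_pos hk
    exact (continuous_const.mul (by fun_prop)).div (by fun_prop)
      (fun x => ne_of_gt (pow_pos (sq_add_sq_pos hk0) 2))

end Main

end TraceVVAux

/-- Quantitative core of Proposition 6.5: for `α ∈ (0,1/2)`, `c > 0`,
`g(t) = ∫₁^∞ k^{2α−1}/(k²+t²) dk` and
`u(t) = (1 + c t² g(t))⁻¹ ∫₁^∞ k^{2α}(k²−t²)/(k²+t²)² dk`, the function `u` is
integrable on `(0,T)` for every `T > 0` and `∫₀^τ u(t) dt → +∞` as `τ → +∞`. -/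
theorem trace_VV_star_diverges
    (α : ℝ) (hα : α ∈ Set.Ioo (0:ℝ) (1/2)) (c : ℝ) (hc : 0 < c)
    (g u : ℝ → ℝ)
    (hg : ∀ t, g t = ∫ k in Set.Ioi (1:ℝ), k ^ (2 * α - 1) / (k ^ 2 + t ^ 2))
    (hu : ∀ t, u t = (1 + c * t ^ 2 * g t)⁻¹ *
        ∫ k in Set.Ioi (1:ℝ), k ^ (2 * α) * (k ^ 2 - t ^ 2) / (k ^ 2 + t ^ 2) ^ 2) :
    (∀ T : ℝ, 0 < T → IntegrableOn u (Set.Ioo 0 T)) ∧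
    Filter.Tendsto (fun τ : ℝ => ∫ t in (0:ℝ)..τ, u t) Filter.atTop Filter.atTop := by
  obtain ⟨hα1, hα2⟩ := hα
  have hu' : u = fun t : ℝ => (1 + c * t ^ 2 * g t)⁻¹ *
      ∫ k in Set.Ioi (1:ℝ), k ^ (2 * α) * (k ^ 2 - t ^ 2) / (k ^ 2 + t ^ 2) ^ 2 :=
    funext hu
  have hgpos : ∀ t : ℝ, 0 ≤ g t := fun t => (hg t).symm ▸ TraceVVAux.g_nonneg hα1 hα2 t
  have hden : ∀ t : ℝ, (0:ℝ) < 1 + c * t ^ 2 * g t := by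
    intro t
    nlinarith [mul_nonneg (mul_nonneg hc.le (sq_nonneg t)) (hgpos t)]
  have hgc : Continuous g := by
    have := TraceVVAux.g_cont (α := α) hα1 hα2
    simpa [← funext hg] using this
  have hucont : Continuous u := by
    rw [hu']
    exact ((continuous_const.add ((continuous_const.mul (continuous_pow 2)).mul hgc)).inv₀
      (fun t => (hden t).ne')).mul (TraceVVAux.F_cont hα1 hα2)
  have hupos : ∀ t : ℝ, 0 < u t := by
    intro t
    rw [hu t, TraceVVAux.F_identity hα1 hα2 t]
    have hH := TraceVVAux.H_nonneg hα1 hα2 t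
    have h1 : (0:ℝ) < 1/(1 + t ^ 2) := by positivity
    have h2 : (0:ℝ) < (1 + c * t ^ 2 * g t)⁻¹ := inv_pos.mpr (hden t)
    have h3 : (0:ℝ) < (2 * α * ∫ k in Set.Ioi (1:ℝ), k ^ (2 * α) / (k ^ 2 + t ^ 2))
        + 1/(1 + t ^ 2) := by nlinarith
    exact mul_pos h2 h3
  constructor
  · intro T _
    exact (hucont.integrableOn_Icc (a := 0) (b := T)).mono_set Set.Ioo_subset_Icc_self
  · set C0 : ℝ := 1/(2*α) + 1/(2 - 2*α) with hC0
    have hC0pos : 0 < C0 := by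
      have h1 : (0:ℝ) < 1/(2*α) := by positivity
      have h2 : (0:ℝ) < 1/(2 - 2*α) := by
        apply div_pos one_pos; linarith
      rw [hC0]
      linarith
    set K : ℝ := α / ((1 - 2*α) * (1 + c*C0)) with hK
    have hKpos : 0 < K := by
      apply div_pos hα1
      apply mul_pos (by linarith)
      nlinarith
    have hKu : ∀ t : ℝ, 1 ≤ t → K / t ≤ u t := by
      intro t ht
      have ht0 : (0:ℝ) < t := lt_of_lt_of_le one_pos ht
      have htα : (0:ℝ) < t ^ (2*α) := Real.rpow_pos_of_pos ht0 _
      have hFlow : α/(1 - 2*α) * t ^ (2*α - 1)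
          ≤ ∫ k in Set.Ioi (1:ℝ), k ^ (2 * α) * (k ^ 2 - t ^ 2) / (k ^ 2 + t ^ 2) ^ 2 := by
        rw [TraceVVAux.F_identity hα1 hα2 t]
        have hH := TraceVVAux.H_lower hα1 hα2 ht
        have h1 : (0:ℝ) < 1/(1 + t ^ 2) := by positivity
        have h2 : α/(1 - 2*α) * t ^ (2*α - 1) = 2*α * (t ^ (2*α - 1) / (2*(1 - 2*α))) := by
          rw [div_eq_mul_inv, div_eq_mul_inv, mul_inv]
          ring
        nlinarith
      have hFpos : (0:ℝ) < α/(1 - 2*α) * t ^ (2*α - 1) := by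
        have : (0:ℝ) < t ^ (2*α - 1) := Real.rpow_pos_of_pos ht0 _
        have : (0:ℝ) < α/(1 - 2*α) := div_pos hα1 (by linarith)
        positivity
      have hDup : 1 + c * t ^ 2 * g t ≤ (1 + c*C0) * t ^ (2*α) := by
        have hgu := (hg t).symm ▸ TraceVVAux.g_upper hα1 hα2 ht
        have ht2 : t ^ 2 * t ^ (2*α - 2) = t ^ (2*α) := by
          rw [← TraceVVAux.rpow_div_sq ht0]
          field_simp
        have h1le : (1:ℝ) ≤ t ^ (2*α) := by
          calc (1:ℝ) = 1 ^ (2*α) := (Real.one_rpow _).symm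
            _ ≤ t ^ (2*α) := Real.rpow_le_rpow zero_le_one ht (by positivity)
        have hmul : c * t ^ 2 * g t ≤ c * C0 * t ^ (2*α) := by
          have : t ^ 2 * g t ≤ t ^ 2 * (C0 * t ^ (2*α - 2)) :=
            mul_le_mul_of_nonneg_left hgu (by positivity)
          calc c * t ^ 2 * g t = c * (t ^ 2 * g t) := by ring
            _ ≤ c * (t ^ 2 * (C0 * t ^ (2*α - 2))) := mul_le_mul_of_nonneg_left this hc.le
            _ = c * C0 * (t ^ 2 * t ^ (2*α - 2)) := by ring
            _ = c * C0 * t ^ (2*α) := by rw [ht2]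
        nlinarith
      have hKt : K / t = (α/(1 - 2*α) * t ^ (2*α - 1)) / ((1 + c*C0) * t ^ (2*α)) := by
        rw [Real.rpow_sub_one ht0.ne']
        have h1 : (1 - 2*α : ℝ) ≠ 0 := by intro h; nlinarith
        have h2 : (1 + c*C0 : ℝ) ≠ 0 := by nlinarith
        rw [hK]
        field_simp
      rw [hu t, hKt, ← div_eq_inv_mul]
      exact div_le_div₀ (le_of_lt (lt_of_lt_of_le hFpos hFlow)) hFlow (hden t) hDup
    have hlog : Filter.Tendsto (fun τ : ℝ => K * Real.log τ) Filter.atTop Filter.atTop :=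
      Real.tendsto_log_atTop.const_mul_atTop hKpos
    apply Filter.tendsto_atTop_mono' Filter.atTop ?_ hlog
    filter_upwards [Filter.eventually_ge_atTop (1:ℝ)] with τ hτ
    have huInt : ∀ a b : ℝ, IntervalIntegrable u MeasureTheory.volume a b :=
      fun a b => hucont.intervalIntegrable a b
    have hsplit : ∫ t in (0:ℝ)..τ, u t
        = (∫ t in (0:ℝ)..1, u t) + ∫ t in (1:ℝ)..τ, u t :=
      (intervalIntegral.integral_add_adjacent_intervals (huInt 0 1) (huInt 1 τ)).symm
    have h01 : 0 ≤ ∫ t in (0:ℝ)..1, u t :=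
      intervalIntegral.integral_nonneg (by norm_num) (fun x _ => (hupos x).le)
    have hKint : IntervalIntegrable (fun t : ℝ => K * (1/t)) MeasureTheory.volume 1 τ := by
      apply ContinuousOn.intervalIntegrable
      apply continuousOn_const.mul
      apply continuousOn_const.div continuousOn_id
      intro x hx
      rw [Set.uIcc_of_le hτ] at hx
      exact ne_of_gt (lt_of_lt_of_le one_pos hx.1)
    have hmono : ∫ t in (1:ℝ)..τ, K * (1/t) ≤ ∫ t in (1:ℝ)..τ, u t := by
      apply intervalIntegral.integral_mono_on hτ hKint (huInt 1 τ)
      intro x hx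
      have := hKu x hx.1
      calc K * (1/x) = K / x := by ring
        _ ≤ u x := this
    have hval : ∫ t in (1:ℝ)..τ, K * (1/t) = K * Real.log τ := by
      rw [intervalIntegral.integral_const_mul, integral_one_div ?_]
      · rw [div_one]
      · rw [Set.uIcc_of_le hτ]
        rintro ⟨h0, -⟩
        linarith
    calc K * Real.log τ = ∫ t in (1:ℝ)..τ, K * (1/t) := hval.symm
      _ ≤ ∫ t in (1:ℝ)..τ, u t := hmono
      _ ≤ ∫ t in (0:ℝ)..τ, u t := by rw [hsplit]; linarith
end
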